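/- arXiv:2112.10147 — 8 statements merged into one kernel-verified Lean document; each statement's English description precedes it below -/
import Mathlib

section
/- Let X : Ω → ℝ^d and Y : Ω → ℝ be random variables on a probability space (Ω, 𝓕, P) such that the distribution function G of Y is continuous, and let ψ_C(s,t) := E[ E[1_{G(Y) ≤ s} | σ(X)] · E[1_{G(Y) ≤ t} | σ(X)] ] for (s,t) ∈ [0,1]². Then ψ_C(s,t) = min(s,t) for all (s,t) ∈ [0,1]² if and only if Y is completely dependent on X, i.e., there exists a measurable function f : ℝ^d → ℝ with P(Y = f(X)) = 1. -/
open MeasureTheory ProbabilityTheory Set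
open Filter Topology

section Aux

lemma aux_iInf_rat (y : ℝ) :
    (⨅ q : ℚ, if y ≤ (q:ℝ) then ((q:ℝ):EReal) else ⊤) = (y:EReal) := by
  apply le_antisymm
  · by_contra h
    push_neg at h
    obtain ⟨q, hyq, hqi⟩ := EReal.exists_rat_btwn_of_lt h
    have : (⨅ q : ℚ, if y ≤ (q:ℝ) then ((q:ℝ):EReal) else ⊤) ≤ ((q:ℝ):EReal) := by
      refine iInf_le_of_le q ?_
      rw [if_pos (by exact_mod_cast le_of_lt (EReal.coe_lt_coe_iff.1 hyq))]
    exact absurd (lt_of_le_of_lt this hqi) (lt_irrefl _)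
  · refine le_iInf fun q => ?_
    by_cases h : y ≤ (q:ℝ)
    · rw [if_pos h]; exact_mod_cast h
    · rw [if_neg h]; exact le_top

variable {Ω : Type*} [MeasurableSpace Ω]

lemma aux_G_mono (P : Measure Ω) [IsProbabilityMeasure P] (Y : Ω → ℝ) (G : ℝ → ℝ)
    (hG : ∀ y, G y = (P {ω | Y ω ≤ y}).toReal) : Monotone G := by
  intro a b hab
  rw [hG a, hG b]
  exact ENNReal.toReal_mono (measure_ne_top _ _)
    (measure_mono (fun ω (h : Y ω ≤ a) => le_trans h hab))

lemma aux_G_nonneg (P : Measure Ω) (Y : Ω → ℝ) (G : ℝ → ℝ)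
    (hG : ∀ y, G y = (P {ω | Y ω ≤ y}).toReal) (y : ℝ) : 0 ≤ G y := by
  rw [hG y]; exact ENNReal.toReal_nonneg

lemma aux_G_le_one (P : Measure Ω) [IsProbabilityMeasure P] (Y : Ω → ℝ) (G : ℝ → ℝ)
    (hG : ∀ y, G y = (P {ω | Y ω ≤ y}).toReal) (y : ℝ) : G y ≤ 1 := by
  rw [hG y]
  exact ENNReal.toReal_le_of_le_ofReal zero_le_one (by simpa using prob_le_one)

lemma aux_P_eq_ofReal (P : Measure Ω) [IsProbabilityMeasure P] (Y : Ω → ℝ) (G : ℝ → ℝ)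
    (hG : ∀ y, G y = (P {ω | Y ω ≤ y}).toReal) (y : ℝ) :
    P {ω | Y ω ≤ y} = ENNReal.ofReal (G y) := by
  rw [hG y, ENNReal.ofReal_toReal (measure_ne_top _ _)]

lemma aux_G_top (P : Measure Ω) [IsProbabilityMeasure P] (Y : Ω → ℝ) (G : ℝ → ℝ)
    (hG : ∀ y, G y = (P {ω | Y ω ≤ y}).toReal) :
    ∀ ε : ℝ, 0 < ε → ∃ b : ℝ, 1 - ε < G b := by
  intro ε hε
  have hmono : Monotone (fun n : ℕ => {ω | Y ω ≤ (n : ℝ)}) := by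
    intro n m hnm ω (h : Y ω ≤ n)
    exact le_trans h (by exact_mod_cast hnm)
  have hun : (⋃ n : ℕ, {ω | Y ω ≤ (n : ℝ)}) = univ := by
    ext ω; simp only [mem_iUnion, mem_univ, iff_true, mem_setOf_eq]
    obtain ⟨n, hn⟩ := exists_nat_ge (Y ω)
    exact ⟨n, hn⟩
  have h1 : Tendsto (fun n : ℕ => P {ω | Y ω ≤ (n : ℝ)}) atTop (𝓝 (P univ)) := by
    have := tendsto_measure_iUnion_atTop (μ := P) hmono
    rwa [hun] at this
  rw [measure_univ] at h1
  have h2 : Tendsto (fun n : ℕ => G (n : ℝ)) atTop (𝓝 1) := by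
    have := (ENNReal.tendsto_toReal (by simp : (1:ENNReal) ≠ ⊤)).comp h1
    simpa [Function.comp_def, hG] using this
  obtain ⟨n, hn⟩ := (h2.eventually (eventually_gt_nhds (show 1 - ε < 1 by linarith))).exists
  exact ⟨n, hn⟩

lemma aux_G_bot (P : Measure Ω) [IsProbabilityMeasure P] (Y : Ω → ℝ) (G : ℝ → ℝ)
    (hY : Measurable Y) (hG : ∀ y, G y = (P {ω | Y ω ≤ y}).toReal) :
    ∀ ε : ℝ, 0 < ε → ∃ a : ℝ, G a < ε := by
  intro ε hε
  have hanti : Antitone (fun n : ℕ => {ω | Y ω ≤ -(n : ℝ)}) := by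
    intro n m hnm ω (h : Y ω ≤ -(m:ℝ))
    exact le_trans h (by exact_mod_cast neg_le_neg (by exact_mod_cast hnm))
  have hun : (⋂ n : ℕ, {ω | Y ω ≤ -(n : ℝ)}) = ∅ := by
    ext ω; simp only [mem_iInter, mem_empty_iff_false, iff_false, not_forall, mem_setOf_eq]
    obtain ⟨n, hn⟩ := exists_nat_gt (-(Y ω))
    exact ⟨n, by push_neg; linarith⟩
  have h1 : Tendsto (fun n : ℕ => P {ω | Y ω ≤ -(n : ℝ)}) atTop (𝓝 (P (∅ : Set Ω))) := by
    have h := tendsto_measure_iInter_atTop (μ := P)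
      (fun n => ((hY measurableSet_Iic).nullMeasurableSet)) hanti ⟨0, measure_ne_top _ _⟩
    rw [show (⋂ n : ℕ, Y ⁻¹' Iic (-(n:ℝ))) = (∅ : Set Ω) from hun] at h
    exact h
  rw [measure_empty] at h1
  have h2 : Tendsto (fun n : ℕ => G (-(n : ℝ))) atTop (𝓝 0) := by
    have := (ENNReal.tendsto_toReal (by simp : (0:ENNReal) ≠ ⊤)).comp h1
    simpa [Function.comp_def, hG] using this
  obtain ⟨n, hn⟩ := (h2.eventually (eventually_lt_nhds hε)).exists
  exact ⟨-(n:ℝ), hn⟩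

lemma aux_null_flat (P : Measure Ω) [IsProbabilityMeasure P] (Y : Ω → ℝ) (G : ℝ → ℝ)
    (hY : Measurable Y) (hG : ∀ y, G y = (P {ω | Y ω ≤ y}).toReal) (hGc : Continuous G)
    (y : ℝ) : P {ω | ¬ Y ω ≤ y ∧ G (Y ω) ≤ G y} = 0 := by
  have hmono : Monotone G := aux_G_mono P Y G hG
  by_cases hcase : ∃ z, G y < G z
  · obtain ⟨z₀, hz₀⟩ := hcase
    set S := {z | G y < G z} with hS
    have hSne : S.Nonempty := ⟨z₀, hz₀⟩
    have hlb : ∀ z ∈ S, y ≤ z := by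
      intro z hz
      by_contra h
      push_neg at h
      exact absurd (hmono h.le) (not_le.2 hz)
    have hbdd : BddBelow S := ⟨y, hlb⟩
    set b := sInf S with hb
    have hyb : y ≤ b := le_csInf hSne hlb
    have hGb : G b ≤ G y := by
      have htend : Tendsto (fun n : ℕ => G (b - 1 / (n + 1))) atTop (𝓝 (G b)) := by
        apply (hGc.tendsto b).comp
        have h0 : Tendsto (fun n : ℕ => 1 / ((n : ℝ) + 1)) atTop (𝓝 0) :=
          tendsto_one_div_add_atTop_nhds_zero_nat
        have := (tendsto_const_nhds (x := b) (f := atTop (α := ℕ))).sub h0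
        simpa using this
      refine le_of_tendsto htend (Eventually.of_forall fun n => ?_)
      have hlt : b - 1 / ((n:ℝ) + 1) < b := by
        have : 0 < 1 / ((n:ℝ)+1) := by positivity
        linarith
      by_contra h
      push_neg at h
      exact absurd (csInf_le hbdd h) (not_le.2 hlt)
    have hsubset : {ω | Y ω ≤ y} ⊆ {ω | Y ω ≤ b} := fun ω (h : Y ω ≤ y) => le_trans h hyb
    have hsub : {ω | ¬ Y ω ≤ y ∧ G (Y ω) ≤ G y} ⊆ {ω | Y ω ≤ b} \ {ω | Y ω ≤ y} := by
      rintro ω ⟨h1, h2⟩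
      refine ⟨?_, h1⟩
      by_contra h
      simp only [mem_setOf_eq, not_le] at h
      obtain ⟨w, hwS, hwlt⟩ := exists_lt_of_csInf_lt hSne h
      exact absurd h2 (not_le.2 (lt_of_lt_of_le hwS (hmono hwlt.le)))
    refine measure_mono_null hsub ?_
    rw [measure_diff hsubset ((hY measurableSet_Iic).nullMeasurableSet) (measure_ne_top _ _),
      aux_P_eq_ofReal P Y G hG, aux_P_eq_ofReal P Y G hG]
    exact tsub_eq_zero_of_le (ENNReal.ofReal_le_ofReal hGb)
  · push_neg at hcase
    have hGy1 : (1:ℝ) ≤ G y := by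
      by_contra h
      push_neg at h
      obtain ⟨b', hb'⟩ := aux_G_top P Y G hG (1 - G y) (by linarith)
      exact absurd (hcase b') (not_le.2 (by linarith))
    have h1 : P {ω | Y ω ≤ y} = 1 := by
      refine le_antisymm prob_le_one ?_
      rw [aux_P_eq_ofReal P Y G hG]
      calc (1:ENNReal) = ENNReal.ofReal 1 := by simp
        _ ≤ ENNReal.ofReal (G y) := ENNReal.ofReal_le_ofReal hGy1
    have hcompl : P {ω | ¬ Y ω ≤ y} = 0 := by
      have h2 : P ({ω | Y ω ≤ y}ᶜ) = P univ - P {ω | Y ω ≤ y} :=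
        measure_compl (hY measurableSet_Iic) (measure_ne_top _ _)
      rw [measure_univ, h1] at h2
      rw [show {ω | ¬ Y ω ≤ y} = {ω | Y ω ≤ y}ᶜ from rfl, h2]
      simp
    exact measure_mono_null (fun ω h => h.1) hcompl

lemma aux_measGY (P : Measure Ω) [IsProbabilityMeasure P] (Y : Ω → ℝ) (G : ℝ → ℝ)
    (hY : Measurable Y) (hG : ∀ y, G y = (P {ω | Y ω ≤ y}).toReal) (hGc : Continuous G)
    (y : ℝ) : P {ω | G (Y ω) ≤ G y} = ENNReal.ofReal (G y) := by
  have hmono : Monotone G := aux_G_mono P Y G hG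
  refine le_antisymm ?_ ?_
  · calc P {ω | G (Y ω) ≤ G y}
        ≤ P ({ω | Y ω ≤ y} ∪ {ω | ¬ Y ω ≤ y ∧ G (Y ω) ≤ G y}) := by
          refine measure_mono fun ω h => ?_
          by_cases hy : Y ω ≤ y
          · exact Or.inl hy
          · exact Or.inr ⟨hy, h⟩
      _ ≤ P {ω | Y ω ≤ y} + P {ω | ¬ Y ω ≤ y ∧ G (Y ω) ≤ G y} := measure_union_le _ _
      _ = ENNReal.ofReal (G y) := by
          rw [aux_null_flat P Y G hY hG hGc, aux_P_eq_ofReal P Y G hG, add_zero]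
  · rw [← aux_P_eq_ofReal P Y G hG]
    exact measure_mono fun ω (h : Y ω ≤ y) => hmono h

lemma aux_unif (P : Measure Ω) [IsProbabilityMeasure P] (Y : Ω → ℝ) (G : ℝ → ℝ)
    (hY : Measurable Y) (hG : ∀ y, G y = (P {ω | Y ω ≤ y}).toReal) (hGc : Continuous G)
    (u : ℝ) (hu0 : 0 ≤ u) (hu1 : u ≤ 1) :
    P {ω | G (Y ω) ≤ u} = ENNReal.ofReal u := by
  have hmono : Monotone G := aux_G_mono P Y G hG
  rcases eq_or_lt_of_le hu1 with h1 | h1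
  · rw [h1]
    have huniv : {ω | G (Y ω) ≤ (1:ℝ)} = univ :=
      eq_univ_of_forall fun ω => aux_G_le_one P Y G hG (Y ω)
    rw [huniv, measure_univ]
    simp
  by_cases hex : ∃ y, G y = u
  · obtain ⟨y, hy⟩ := hex
    rw [← hy]
    exact aux_measGY P Y G hY hG hGc y
  · have hu0' : u = 0 := by
      by_contra h0
      have hu0'' : 0 < u := lt_of_le_of_ne hu0 (Ne.symm h0)
      obtain ⟨a, ha⟩ := aux_G_bot P Y G hY hG u hu0''
      obtain ⟨b, hb⟩ := aux_G_top P Y G hG (1 - u) (by linarith)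
      have hab : a ≤ b := by
        by_contra hab
        push_neg at hab
        exact absurd (hmono hab.le) (not_le.2 (by linarith))
      obtain ⟨y, _, hy⟩ := intermediate_value_Icc hab hGc.continuousOn ⟨ha.le, by linarith⟩
      exact hex ⟨y, hy⟩
    rw [hu0', ENNReal.ofReal_zero]
    have key : ∀ ε : ℝ, 0 < ε → P {ω | G (Y ω) ≤ 0} ≤ ENNReal.ofReal ε := by
      intro ε hε
      obtain ⟨a, ha⟩ := aux_G_bot P Y G hY hG ε hε
      calc P {ω | G (Y ω) ≤ 0}
          ≤ P {ω | G (Y ω) ≤ G a} :=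
            measure_mono fun ω h => le_trans h (aux_G_nonneg P Y G hG a)
        _ = ENNReal.ofReal (G a) := aux_measGY P Y G hY hG hGc a
        _ ≤ ENNReal.ofReal ε := ENNReal.ofReal_le_ofReal ha.le
    by_contra hne
    set r := (P {ω | G (Y ω) ≤ 0}).toReal with hr
    have hrne : P {ω | G (Y ω) ≤ 0} ≠ ⊤ := measure_ne_top _ _
    have hrpos : 0 < r := ENNReal.toReal_pos hne hrne
    have hlt : ENNReal.ofReal (r/2) < P {ω | G (Y ω) ≤ 0} := by
      rw [← ENNReal.ofReal_toReal hrne]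
      exact (ENNReal.ofReal_lt_ofReal_iff hrpos).2 (by linarith)
    exact absurd (key (r/2) (by linarith)) (not_le.2 hlt)

end Aux

/-- The copula `ψ_C` derived from `(X, Y)` equals the comonotonicity copula
`min` on `[0,1]²` if and only if `Y` is completely dependent on `X`. -/
theorem psi_eq_min_iff_complete_dependence
    {Ω : Type*} [MeasurableSpace Ω] (P : Measure Ω) [IsProbabilityMeasure P]
    {d : ℕ} (X : Ω → (Fin d → ℝ)) (Y : Ω → ℝ) (hX : Measurable X) (hY : Measurable Y)
    (G : ℝ → ℝ) (hG : ∀ y, G y = (P {ω | Y ω ≤ y}).toReal) (hGc : Continuous G)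
    (mX : MeasurableSpace Ω) (hmX : mX = MeasurableSpace.comap X inferInstance)
    (ψ : ℝ → ℝ → ℝ)
    (hψ : ∀ s t : ℝ, ψ s t =
      ∫ ω, (P[fun ω' => if G (Y ω') ≤ s then (1:ℝ) else 0 | mX]) ω *
           (P[fun ω' => if G (Y ω') ≤ t then (1:ℝ) else 0 | mX]) ω ∂P) :
    (∀ s ∈ Icc (0:ℝ) 1, ∀ t ∈ Icc (0:ℝ) 1, ψ s t = min s t) ↔
      ∃ f : (Fin d → ℝ) → ℝ, Measurable f ∧ ∀ᵐ ω ∂P, Y ω = f (X ω) := by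
  classical
  subst hmX
  have hm : MeasurableSpace.comap X inferInstance ≤ ‹MeasurableSpace Ω› := hX.comap_le
  haveI : SigmaFinite (P.trim hm) := inferInstance
  -- basic objects
  set χ : ℝ → Ω → ℝ := fun s ω => if G (Y ω) ≤ s then (1:ℝ) else 0 with hχ_def
  have hA : ∀ s : ℝ, MeasurableSet {ω | G (Y ω) ≤ s} := fun s =>
    (hGc.measurable.comp hY) measurableSet_Iic
  have hχ_eq : ∀ s : ℝ, χ s = ({ω | G (Y ω) ≤ s}).indicator (fun _ => (1:ℝ)) := by
    intro s; funext ω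
    by_cases h : G (Y ω) ≤ s
    · simp [hχ_def, h, Set.indicator_of_mem, h]
    · simp [hχ_def, h]
  have hχ_int : ∀ s : ℝ, Integrable (χ s) P := by
    intro s
    rw [hχ_eq s]
    exact (integrable_const 1).indicator (hA s)
  have hχ_integral : ∀ s : ℝ, ∫ ω, χ s ω ∂P = (P {ω | G (Y ω) ≤ s}).toReal := by
    intro s
    rw [hχ_eq s, integral_indicator (hA s), setIntegral_const, smul_eq_mul, mul_one, measureReal_def]
  constructor
  · -- forward: ψ = min → complete dependence
    intro hmin
    have key : ∀ q : ℚ, ∃ B : Set Ω, MeasurableSet[MeasurableSpace.comap X inferInstance] B ∧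
        ∀ᵐ ω ∂P, (Y ω ≤ (q:ℝ) ↔ ω ∈ B) := by
      intro q
      set s := G (q:ℝ) with hs_def
      have hs0 : 0 ≤ s := aux_G_nonneg P Y G hG _
      have hs1 : s ≤ 1 := aux_G_le_one P Y G hG _
      set A := {ω | G (Y ω) ≤ s} with hA_def
      set g := P[χ s | MeasurableSpace.comap X inferInstance] with hg_def
      have hg_sm : StronglyMeasurable[MeasurableSpace.comap X inferInstance] g := stronglyMeasurable_condExp
      have hPA : (P A).toReal = s := by
        rw [hA_def, hs_def, aux_measGY P Y G hY hG hGc (q:ℝ),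
          ENNReal.toReal_ofReal (aux_G_nonneg P Y G hG _)]
      have hEg : ∫ ω, g ω ∂P = s := by
        rw [hg_def, integral_condExp hm, hχ_integral s, hPA]
      have hEg2 : ∫ ω, g ω * g ω ∂P = s := by
        have h1 := hψ s s
        have h2 := hmin s ⟨hs0, hs1⟩ s ⟨hs0, hs1⟩
        rw [h2, min_self] at h1
        exact h1.symm
      have h0 : 0 ≤ᵐ[P] g := condExp_nonneg (Eventually.of_forall fun ω => by
        by_cases h : G (Y ω) ≤ s <;> simp [hχ_def, h])
      have h1 : g ≤ᵐ[P] fun _ => (1:ℝ) := by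
        have := condExp_mono (m := MeasurableSpace.comap X inferInstance) (μ := P) (hχ_int s) (integrable_const (1:ℝ))
          (Eventually.of_forall fun ω => by
            by_cases h : G (Y ω) ≤ s <;> simp [hχ_def, h])
        rwa [condExp_const hm (1:ℝ)] at this
      have hg_int : Integrable g P := integrable_condExp
      have hg_aesm : AEStronglyMeasurable g P :=
        (hg_sm.mono hm).aestronglyMeasurable
      have hg2_int : Integrable (fun ω => g ω * g ω) P := by
        refine Integrable.mono' (integrable_const (1:ℝ)) (hg_aesm.mul hg_aesm) ?_
        filter_upwards [h0, h1] with ω ha hb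
        simp only [Pi.zero_apply] at ha
        rw [Real.norm_eq_abs, abs_of_nonneg (mul_nonneg ha ha)]
        nlinarith
      have hdiff : ∫ ω, (g ω - g ω * g ω) ∂P = 0 := by
        rw [integral_sub hg_int hg2_int, hEg, hEg2, sub_self]
      have hnn : 0 ≤ᵐ[P] fun ω => g ω - g ω * g ω := by
        filter_upwards [h0, h1] with ω ha hb
        simp only [Pi.zero_apply] at ha
        simp only [Pi.zero_apply]
        nlinarith
      have hae0 : (fun ω => g ω - g ω * g ω) =ᵐ[P] 0 :=
        (integral_eq_zero_iff_of_nonneg_ae hnn (hg_int.sub hg2_int)).1 hdiff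
      have h01 : ∀ᵐ ω ∂P, g ω = 0 ∨ g ω = 1 := by
        filter_upwards [hae0] with ω h
        have h' : g ω * (1 - g ω) = 0 := by
          have : g ω - g ω * g ω = 0 := h
          ring_nf
          ring_nf at this
          linarith
        rcases mul_eq_zero.1 h' with h'' | h''
        · exact Or.inl h''
        · exact Or.inr (by linarith)
      set B := g ⁻¹' {1} with hB_def
      have hB : MeasurableSet[MeasurableSpace.comap X inferInstance] B := hg_sm.measurable (measurableSet_singleton 1)
      have hBamb : MeasurableSet B := hm _ hB
      refine ⟨B, hB, ?_⟩
      have e1 : ∫ ω in B, χ s ω ∂P = ∫ ω in B, g ω ∂P :=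
        (setIntegral_condExp hm (hχ_int s) hB).symm
      have e2 : ∫ ω in B, g ω ∂P = (P B).toReal := by
        rw [setIntegral_congr_fun hBamb (fun ω hω => hω : EqOn g (fun _ => (1:ℝ)) B),
          setIntegral_const, smul_eq_mul, mul_one, measureReal_def]
      have e3 : ∫ ω in B, χ s ω ∂P = (P (A ∩ B)).toReal := by
        rw [hχ_eq s, integral_indicator (hA s), Measure.restrict_restrict (hA s),
          setIntegral_const, smul_eq_mul, mul_one, measureReal_def]
      have e5 : ∫ ω in Bᶜ, g ω ∂P = 0 := by
        have hae : ∀ᵐ ω ∂(P.restrict Bᶜ), g ω = 0 := by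
          filter_upwards [ae_restrict_of_ae h01, ae_restrict_mem hBamb.compl] with ω h hmem
          rcases h with h | h
          · exact h
          · exact absurd h hmem
        exact integral_eq_zero_of_ae hae
      have e4 : (P B).toReal = s := by
        have := (integral_add_compl hBamb hg_int).symm
        rw [hEg, e2, e5, add_zero] at this
        exact this.symm
      have e6 : (P (A ∩ B)).toReal = (P B).toReal := by rw [← e3, e1, e2]
      -- convert to measure equalities
      have hfin : ∀ S : Set Ω, P S ≠ ⊤ := fun S => measure_ne_top _ _
      have hPAB : P (A ∩ B) = P B :=
        (ENNReal.toReal_eq_toReal_iff' (hfin _) (hfin _)).1 e6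
      have hPA_B : P A = P B := by
        have : (P A).toReal = (P B).toReal := by rw [hPA, e4]
        exact (ENNReal.toReal_eq_toReal_iff' (hfin _) (hfin _)).1 this
      have hBA : P (B \ A) = 0 := by
        have h := measure_diff (inter_subset_right : A ∩ B ⊆ B)
          ((hA s).inter hBamb).nullMeasurableSet (hfin _)
        rw [hPAB, tsub_self] at h
        rwa [Set.diff_inter_self_eq_diff] at h
      have hAB : P (A \ B) = 0 := by
        have h := measure_diff (inter_subset_left : A ∩ B ⊆ A)
          ((hA s).inter hBamb).nullMeasurableSet (hfin _)
        rw [hPAB, hPA_B, tsub_self] at h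
        rwa [Set.diff_self_inter] at h
      have hflat : P {ω | ¬ Y ω ≤ (q:ℝ) ∧ G (Y ω) ≤ G (q:ℝ)} = 0 :=
        aux_null_flat P Y G hY hG hGc (q:ℝ)
      have hunion : P ((A \ B) ∪ ((B \ A) ∪ {ω | ¬ Y ω ≤ (q:ℝ) ∧ G (Y ω) ≤ G (q:ℝ)})) = 0 :=
        measure_union_null hAB (measure_union_null hBA hflat)
      have hae_nmem := (measure_eq_zero_iff_ae_notMem ..).1 hunion
      filter_upwards [hae_nmem] with ω hω
      simp only [mem_union, not_or] at hω
      obtain ⟨h1, h2, h3⟩ := hω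
      have hmono := aux_G_mono P Y G hG
      constructor
      · intro hYq
        have hωA : ω ∈ A := by
          show G (Y ω) ≤ s
          rw [hs_def]
          exact hmono hYq
        by_contra hωB
        exact h1 ⟨hωA, hωB⟩
      · intro hωB
        have hωA : ω ∈ A := by
          by_contra hωA
          exact h2 ⟨hωB, hωA⟩
        by_contra hYq
        exact h3 ⟨hYq, hωA⟩
    choose B hBmeas hBae using key
    have hE : ∀ q : ℚ, ∃ E : Set (Fin d → ℝ), MeasurableSet E ∧ X ⁻¹' E = B q := by
      intro q
      have := hBmeas q
      exact this
    choose E hEmeas hXE using hE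
    refine ⟨fun x => (⨅ q : ℚ, if x ∈ E q then ((q:ℝ):EReal) else ⊤).toReal, ?_, ?_⟩
    · apply Measurable.ereal_toReal
      apply Measurable.iInf
      intro q
      exact Measurable.ite (hEmeas q) measurable_const measurable_const
    · have hae_all : ∀ᵐ ω ∂P, ∀ q : ℚ, (Y ω ≤ (q:ℝ) ↔ ω ∈ B q) := ae_all_iff.2 hBae
      filter_upwards [hae_all] with ω hω
      have hcongr : ∀ q : ℚ, (X ω ∈ E q) = (Y ω ≤ (q:ℝ)) := by
        intro q
        have : X ω ∈ E q ↔ ω ∈ B q := by rw [← hXE q]; exact Iff.rfl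
        rw [eq_iff_iff, this]
        exact (hω q).symm
      have : (⨅ q : ℚ, if X ω ∈ E q then ((q:ℝ):EReal) else ⊤)
          = (⨅ q : ℚ, if Y ω ≤ (q:ℝ) then ((q:ℝ):EReal) else ⊤) := by
        refine iInf_congr fun q => ?_
        rw [hcongr q]
      rw [this, aux_iInf_rat (Y ω), EReal.toReal_coe]
  · -- converse: complete dependence → ψ = min
    rintro ⟨f, hf, hYf⟩ s hs t ht
    rw [hψ]
    have hXc : Measurable[MeasurableSpace.comap X inferInstance] X := comap_measurable X
    have hGfX : Measurable[MeasurableSpace.comap X inferInstance] (fun ω => G (f (X ω))) :=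
      ((hGc.measurable.comp hf).comp hXc)
    have hsets : ∀ u : ℝ, MeasurableSet[MeasurableSpace.comap X inferInstance] {ω | G (f (X ω)) ≤ u} := fun u =>
      hGfX measurableSet_Iic
    set hfun : ℝ → Ω → ℝ := fun u ω => if G (f (X ω)) ≤ u then (1:ℝ) else 0 with hfun_def
    have hfun_eq : ∀ u : ℝ, hfun u = ({ω | G (f (X ω)) ≤ u}).indicator (fun _ => (1:ℝ)) := by
      intro u; funext ω
      by_cases h : G (f (X ω)) ≤ u
      · simp [hfun_def, h]
      · simp [hfun_def, h]
    have hfun_sm : ∀ u : ℝ, StronglyMeasurable[MeasurableSpace.comap X inferInstance] (hfun u) := by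
      intro u
      rw [hfun_eq u]
      exact stronglyMeasurable_const.indicator (hsets u)
    have hfun_int : ∀ u : ℝ, Integrable (hfun u) P := by
      intro u
      rw [hfun_eq u]
      exact (integrable_const 1).indicator (hm _ (hsets u))
    have hcongr : ∀ u : ℝ, χ u =ᵐ[P] hfun u := by
      intro u
      filter_upwards [hYf] with ω h
      simp only [hχ_def, hfun_def, h]
    have hce : ∀ u : ℝ, P[χ u | MeasurableSpace.comap X inferInstance] =ᵐ[P] χ u := by
      intro u
      refine (condExp_congr_ae (hcongr u)).trans ?_
      rw [condExp_of_stronglyMeasurable hm (hfun_sm u) (hfun_int u)]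
      exact (hcongr u).symm
    have hprod : (fun ω => (P[χ s | MeasurableSpace.comap X inferInstance]) ω * (P[χ t | MeasurableSpace.comap X inferInstance]) ω) =ᵐ[P]
        (fun ω => χ (min s t) ω) := by
      filter_upwards [hce s, hce t] with ω h1 h2
      rw [h1, h2]
      by_cases hA1 : G (Y ω) ≤ s <;> by_cases hA2 : G (Y ω) ≤ t <;>
        simp [hχ_def, hA1, hA2, le_min_iff]
    rw [show (∫ ω, (P[fun ω' => if G (Y ω') ≤ s then (1:ℝ) else 0 | MeasurableSpace.comap X inferInstance]) ω *
           (P[fun ω' => if G (Y ω') ≤ t then (1:ℝ) else 0 | MeasurableSpace.comap X inferInstance]) ω ∂P)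
        = ∫ ω, (P[χ s | MeasurableSpace.comap X inferInstance]) ω * (P[χ t | MeasurableSpace.comap X inferInstance]) ω ∂P from rfl,
      integral_congr_ae hprod, hχ_integral (min s t),
      aux_unif P Y G hY hG hGc (min s t) (le_min hs.1 ht.1) (min_le_of_left_le hs.2),
      ENNReal.toReal_ofReal (le_min hs.1 ht.1)]
end

section
/- Let X : Ω → ℝ^d and Y : Ω → ℝ be random variables on a probability space (Ω, 𝓕, P) such that the distribution function G of Y is continuous, and let ψ_C(s,t) := E[ E[1_{G(Y) ≤ s} | σ(X)] · E[1_{G(Y) ≤ t} | σ(X)] ]. Then the following are equivalent: (a) Y and X are independent; (b) ψ_C(s,t) = s·t for all (s,t) ∈ [0,1]²; (c) ψ_C(t,t) = t² for all t ∈ [0,1]. -/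
open MeasureTheory ProbabilityTheory Set Filter
open scoped Topology ENNReal

section Aux
variable {Ω : Type*} [MeasurableSpace Ω] {P : Measure Ω} [IsProbabilityMeasure P]
  {Y : Ω → ℝ} {G : ℝ → ℝ}

private lemma G_mono (hG : ∀ y, G y = (P {ω | Y ω ≤ y}).toReal) : Monotone G := fun a b hab => by
  rw [hG a, hG b]
  exact ENNReal.toReal_mono (measure_ne_top _ _) (measure_mono fun ω h => le_trans h hab)

private lemma G_eq_cdf (hY : Measurable Y) (hG : ∀ y, G y = (P {ω | Y ω ≤ y}).toReal) :
    G = cdf (P.map Y) := by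
  haveI : IsProbabilityMeasure (P.map Y) := Measure.isProbabilityMeasure_map hY.aemeasurable
  funext y
  rw [hG y, cdf_eq_real, measureReal_def, Measure.map_apply hY measurableSet_Iic]
  rfl

private lemma G_le_one (hG : ∀ y, G y = (P {ω | Y ω ≤ y}).toReal) (y : ℝ) : G y ≤ 1 := by
  rw [hG y]
  calc (P {ω | Y ω ≤ y}).toReal ≤ (1 : ℝ≥0∞).toReal :=
        ENNReal.toReal_mono ENNReal.one_ne_top prob_le_one
    _ = 1 := by simp

private lemma G_nonneg (hG : ∀ y, G y = (P {ω | Y ω ≤ y}).toReal) (y : ℝ) : 0 ≤ G y := by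
  rw [hG y]; exact ENNReal.toReal_nonneg

/-- Uniformity of the probability integral transform. -/
private lemma uniform (hY : Measurable Y) (hG : ∀ y, G y = (P {ω | Y ω ≤ y}).toReal)
    (hGc : Continuous G) {t : ℝ} (ht : t ∈ Icc (0:ℝ) 1) :
    P {ω | G (Y ω) ≤ t} = ENNReal.ofReal t := by
  haveI : IsProbabilityMeasure (P.map Y) := Measure.isProbabilityMeasure_map hY.aemeasurable
  have hmono := G_mono hG
  have hTop : Tendsto G atTop (𝓝 1) := (G_eq_cdf hY hG) ▸ tendsto_cdf_atTop (P.map Y)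
  have hBot : Tendsto G atBot (𝓝 0) := (G_eq_cdf hY hG) ▸ tendsto_cdf_atBot (P.map Y)
  rcases eq_or_lt_of_le ht.2 with h1 | h1
  · have : {ω | G (Y ω) ≤ t} = univ := by
      ext ω; simp only [mem_setOf_eq, mem_univ, iff_true]
      exact h1 ▸ G_le_one hG (Y ω)
    rw [this, measure_univ, h1, ENNReal.ofReal_one]
  · by_cases hS : {y | G y ≤ t}.Nonempty
    · obtain ⟨M, hM⟩ : ∃ M, t < G M := (hTop.eventually (eventually_gt_nhds h1)).exists
      have hbdd : BddAbove {y | G y ≤ t} :=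
        ⟨M, fun y hy => le_of_not_gt fun h => (hM.trans_le (hmono h.le)).not_ge hy⟩
      have hcl : IsClosed {y | G y ≤ t} := isClosed_le hGc continuous_const
      set z := sSup {y | G y ≤ t} with hz
      have hzS : z ∈ {y | G y ≤ t} := hcl.csSup_mem hS hbdd
      have hzt : G z = t := by
        have hseq : Tendsto (fun n : ℕ => G (z + 1 / (n + 1))) atTop (𝓝 (G z)) :=
          (hGc.tendsto z).comp
            (by simpa using (tendsto_const_nhds (x := z)).add tendsto_one_div_add_atTop_nhds_zero_nat)
        refine le_antisymm hzS (ge_of_tendsto hseq (Eventually.of_forall fun n : ℕ => ?_))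
        show t ≤ G (z + 1 / (n + 1))
        refine le_of_lt (lt_of_not_ge fun h => ?_)
        have h2 : z + 1 / (n + 1 : ℝ) ≤ z := le_csSup hbdd h
        have hp : 0 < 1 / (n + 1 : ℝ) := by positivity
        linarith
      have hset : {ω | G (Y ω) ≤ t} = {ω | Y ω ≤ z} := by
        ext ω
        exact ⟨fun h => le_csSup hbdd h, fun h => (hmono h).trans_eq hzt⟩
      rw [hset, ← hzt, hG z, ENNReal.ofReal_toReal (measure_ne_top _ _)]
    · have ht0 : t = 0 := by
        refine le_antisymm ?_ ht.1
        by_contra h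
        push_neg at h
        obtain ⟨y, hy⟩ := (hBot.eventually (eventually_lt_nhds h)).exists
        exact hS ⟨y, hy.le⟩
      have : {ω | G (Y ω) ≤ t} = ∅ :=
        eq_empty_iff_forall_notMem.2 fun ω h => hS ⟨Y ω, h⟩
      rw [this, measure_empty, ht0, ENNReal.ofReal_zero]

end Aux

/-- `Y` and `X` are independent iff `ψ_C` is the independence copula,
iff the diagonal of `ψ_C` is `t ↦ t²`. -/
theorem indep_iff_psi_eq_pi_iff_diagonal
    {Ω : Type*} [MeasurableSpace Ω] (P : Measure Ω) [IsProbabilityMeasure P]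
    {d : ℕ} (X : Ω → (Fin d → ℝ)) (Y : Ω → ℝ) (hX : Measurable X) (hY : Measurable Y)
    (G : ℝ → ℝ) (hG : ∀ y, G y = (P {ω | Y ω ≤ y}).toReal) (hGc : Continuous G)
    (mX : MeasurableSpace Ω) (hmX : mX = MeasurableSpace.comap X inferInstance)
    (ψ : ℝ → ℝ → ℝ)
    (hψ : ∀ s t : ℝ, ψ s t =
      ∫ ω, (P[fun ω' => if G (Y ω') ≤ s then (1:ℝ) else 0 | mX]) ω *
           (P[fun ω' => if G (Y ω') ≤ t then (1:ℝ) else 0 | mX]) ω ∂P) :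
    (IndepFun Y X P ↔ ∀ s ∈ Icc (0:ℝ) 1, ∀ t ∈ Icc (0:ℝ) 1, ψ s t = s * t) ∧
    (IndepFun Y X P ↔ ∀ t ∈ Icc (0:ℝ) 1, ψ t t = t ^ 2) := by
  rename_i mΩ instP
  letI m0 : MeasurableSpace Ω := mΩ
  have hmono := G_mono hG
  have hmXle : mX ≤ mΩ := by rw [hmX]; exact hX.comap_le
  haveI : SigmaFinite (P.trim hmXle) := inferInstance
  set f : ℝ → Ω → ℝ := fun t ω => if G (Y ω) ≤ t then 1 else 0 with hfdef
  have hψ' : ∀ s t : ℝ, ψ s t = ∫ ω, (P[f s | mX]) ω * (P[f t | mX]) ω ∂P := hψ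
  have hSmeas : ∀ t : ℝ, MeasurableSet[mΩ] {ω | G (Y ω) ≤ t} := fun t =>
    measurableSet_le (hGc.measurable.comp hY) measurable_const
  have hfind : ∀ t : ℝ, f t = Set.indicator {ω | G (Y ω) ≤ t} (1 : Ω → ℝ) := by
    intro t; funext ω; simp [hfdef, Set.indicator_apply]
  have hfint : ∀ t : ℝ, Integrable (f t) P := fun t =>
    (hfind t) ▸ (integrable_const (1:ℝ)).indicator (hSmeas t)
  have hfEt : ∀ t ∈ Icc (0:ℝ) 1, ∫ ω, f t ω ∂P = t := by
    intro t ht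
    rw [hfind t, integral_indicator_one (hSmeas t), measureReal_def, uniform hY hG hGc ht,
      ENNReal.toReal_ofReal ht.1]
  -- (1) independence implies conditional expectations are constants
  have key1 : IndepFun Y X P → ∀ t ∈ Icc (0:ℝ) 1, (P[f t | mX]) =ᵐ[P] fun _ => t := by
    intro hi t ht
    have hgm : Measurable (fun x : ℝ => if G x ≤ t then (1:ℝ) else 0) :=
      Measurable.ite (measurableSet_le hGc.measurable measurable_const)
        measurable_const measurable_const
    have hYm : Measurable[MeasurableSpace.comap Y inferInstance] Y :=
      Measurable.of_comap_le le_rfl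
    have hsm : StronglyMeasurable[MeasurableSpace.comap Y inferInstance] (f t) :=
      (hgm.comp hYm).stronglyMeasurable
    have hindep : Indep (MeasurableSpace.comap Y inferInstance) mX P := by
      rw [hmX]
      exact (IndepFun_iff_Indep _ _ _).mp hi
    have := condExp_indep_eq hY.comap_le hmXle hsm hindep
    refine this.trans ?_
    rw [hfEt t ht]
  -- (2) diagonal identity implies independence
  have key2 : (∀ t ∈ Icc (0:ℝ) 1, ψ t t = t ^ 2) → IndepFun Y X P := by
    intro hd
    have hcond : ∀ t ∈ Icc (0:ℝ) 1, (P[f t | mX]) =ᵐ[P] fun _ => t := by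
      intro t ht
      set h := P[f t | mX] with hh
      have hint : Integrable h P := integrable_condExp
      have h0 : 0 ≤ᵐ[P] h := condExp_nonneg (Eventually.of_forall fun ω => by
        simp only [hfdef]; positivity)
      have h1 : h ≤ᵐ[P] fun _ => (1:ℝ) := by
        have := condExp_mono (μ := P) (m := mX) (hfint t) (integrable_const (1:ℝ))
          (Eventually.of_forall fun ω => by simp only [hfdef]; split <;> norm_num)
        rwa [condExp_const hmXle (1:ℝ)] at this
      have hsq_int : Integrable (fun ω => h ω ^ 2) P := by
        refine (integrable_const (1:ℝ)).mono' ?_ ?_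
        · exact (hint.aestronglyMeasurable.mul hint.aestronglyMeasurable).congr
            (Eventually.of_forall fun ω => by simp [pow_two])
        · filter_upwards [h0, h1] with ω ha hb
          have ha' : (0:ℝ) ≤ h ω := ha
          simp only [Real.norm_eq_abs, abs_pow]
          calc |h ω| ^ 2 ≤ 1 ^ 2 := by
                have : |h ω| ≤ 1 := abs_le.2 ⟨by linarith, hb⟩
                exact pow_le_pow_left₀ (abs_nonneg _) this 2
            _ = 1 := one_pow 2
      have hEh : ∫ ω, h ω ∂P = t := by
        rw [hh, integral_condExp hmXle]; exact hfEt t ht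
      have hEh2 : ∫ ω, h ω ^ 2 ∂P = t ^ 2 := by
        have h1 := (hψ' t t).symm.trans (hd t ht)
        simpa [pow_two] using h1
      have hint2 : Integrable (fun ω => h ω ^ 2 - 2 * t * h ω) P :=
        hsq_int.sub (hint.const_mul (2 * t))
      have hint3 : Integrable (fun ω => (h ω ^ 2 - 2 * t * h ω) + t ^ 2) P :=
        hint2.add (integrable_const _)
      have hvar : ∫ ω, (h ω - t) ^ 2 ∂P = 0 := by
        have hexp : (fun ω => (h ω - t) ^ 2)
            = fun ω => (h ω ^ 2 - 2 * t * h ω) + t ^ 2 := by funext ω; ring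
        rw [hexp, integral_add hint2 (integrable_const _),
          integral_sub hsq_int (hint.const_mul (2 * t)), integral_const_mul, hEh2, hEh,
          integral_const]
        simp; ring
      have hzero : (fun ω => (h ω - t) ^ 2) =ᵐ[P] 0 := by
        refine (integral_eq_zero_iff_of_nonneg_ae
          (Eventually.of_forall fun ω => sq_nonneg _) ?_).mp hvar
        have hexp : (fun ω => (h ω - t) ^ 2)
            = fun ω => (h ω ^ 2 - 2 * t * h ω) + t ^ 2 := by funext ω; ring
        rw [hexp]; exact hint3
      filter_upwards [hzero] with ω hω
      have h2 : (h ω - t) ^ 2 = 0 := hω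
      have := pow_eq_zero_iff (n := 2) (by norm_num) |>.mp h2
      simpa [sub_eq_zero] using this
    -- set-measure identity
    have hAS : ∀ t ∈ Icc (0:ℝ) 1, ∀ A : Set Ω, MeasurableSet[mX] A →
        P ({ω | G (Y ω) ≤ t} ∩ A) = ENNReal.ofReal t * P A := by
      intro t ht A hA
      have h1 : ∫ ω in A, f t ω ∂P = ∫ ω in A, (P[f t | mX]) ω ∂P :=
        (setIntegral_condExp hmXle (hfint t) hA).symm
      have h2 : ∫ ω in A, (P[f t | mX]) ω ∂P = t * (P A).toReal := by
        rw [integral_congr_ae (ae_restrict_of_ae (hcond t ht)), setIntegral_const,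
          smul_eq_mul, mul_comm, measureReal_def]
      have h3 : ∫ ω in A, f t ω ∂P = (P (A ∩ {ω | G (Y ω) ≤ t})).toReal := by
        rw [hfind t, setIntegral_indicator (hSmeas t),
          show (1 : Ω → ℝ) = fun _ : Ω => (1:ℝ) from rfl, setIntegral_const, smul_eq_mul, mul_one, measureReal_def]
      have h4 : (P (A ∩ {ω | G (Y ω) ≤ t})).toReal = t * (P A).toReal := by
        rw [← h3, h1, h2]
      have h5 : P (A ∩ {ω | G (Y ω) ≤ t}) = ENNReal.ofReal (t * (P A).toReal) := by
        rw [← h4, ENNReal.ofReal_toReal (measure_ne_top _ _)]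
      rw [Set.inter_comm, h5, ENNReal.ofReal_mul ht.1,
        ENNReal.ofReal_toReal (measure_ne_top _ _)]
    -- conclude independence
    rw [IndepFun_iff_Indep, ← hmX]
    refine IndepSets.indep (p1 := Set.range fun y : ℝ => Y ⁻¹' Iic y)
      (p2 := {s | MeasurableSet[mX] s}) hY.comap_le hmXle ?_ ?_ ?_ ?_ ?_
    · rintro _ ⟨a, rfl⟩ _ ⟨b, rfl⟩ _
      refine ⟨min a b, ?_⟩
      show Y ⁻¹' Iic (min a b) = Y ⁻¹' Iic a ∩ Y ⁻¹' Iic b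
      rw [← Set.preimage_inter, Iic_inter_Iic]
    · exact fun s hs u hu _ => MeasurableSet.inter hs hu
    · have hb : (inferInstance : MeasurableSpace ℝ)
          = MeasurableSpace.generateFrom (Set.range Iic) := by
        rw [BorelSpace.measurable_eq (α := ℝ)]
        exact borel_eq_generateFrom_Iic ℝ
      refine (congrArg (MeasurableSpace.comap Y) hb).trans ?_
      rw [MeasurableSpace.comap_generateFrom]
      congr 1
      rw [← Set.range_comp]
      rfl
    · exact (@MeasurableSpace.generateFrom_measurableSet Ω mX).symm
    · rw [IndepSets_iff]
      rintro _ A ⟨y, rfl⟩ hA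
      show P (Y ⁻¹' Iic y ∩ A) = P (Y ⁻¹' Iic y) * P A
      have ht : G y ∈ Icc (0:ℝ) 1 := ⟨G_nonneg hG y, G_le_one hG y⟩
      have hPB : P (Y ⁻¹' Iic y) = ENNReal.ofReal (G y) := by
        rw [hG y, ENNReal.ofReal_toReal (measure_ne_top _ _)]
        rfl
      have hPSt : P {ω | G (Y ω) ≤ G y} = ENNReal.ofReal (G y) := uniform hY hG hGc ht
      have hsub : Y ⁻¹' Iic y ⊆ {ω | G (Y ω) ≤ G y} := fun ω hω => hmono hω
      have hnull : P ({ω | G (Y ω) ≤ G y} \ Y ⁻¹' Iic y) = 0 := by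
        rw [measure_diff hsub (hY measurableSet_Iic).nullMeasurableSet (measure_ne_top _ _),
          hPSt, hPB, tsub_self]
      have hBA : P (Y ⁻¹' Iic y ∩ A) = P ({ω | G (Y ω) ≤ G y} ∩ A) := by
        refine le_antisymm (measure_mono (Set.inter_subset_inter_left A hsub)) ?_
        calc P ({ω | G (Y ω) ≤ G y} ∩ A)
            ≤ P ((Y ⁻¹' Iic y ∩ A) ∪ ({ω | G (Y ω) ≤ G y} \ Y ⁻¹' Iic y)) := by
              refine measure_mono fun ω hω => ?_
              by_cases hB : ω ∈ Y ⁻¹' Iic y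
              · exact Or.inl ⟨hB, hω.2⟩
              · exact Or.inr ⟨hω.1, hB⟩
          _ ≤ P (Y ⁻¹' Iic y ∩ A) + P ({ω | G (Y ω) ≤ G y} \ Y ⁻¹' Iic y) :=
              measure_union_le _ _
          _ = P (Y ⁻¹' Iic y ∩ A) := by rw [hnull, add_zero]
      rw [hBA, hAS (G y) ht A hA, hPB]
  -- (3) independence implies the product formula
  have key3 : IndepFun Y X P → ∀ s ∈ Icc (0:ℝ) 1, ∀ t ∈ Icc (0:ℝ) 1, ψ s t = s * t := by
    intro hi s hs t ht
    rw [hψ' s t]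
    have : (fun ω => (P[f s | mX]) ω * (P[f t | mX]) ω) =ᵐ[P] fun _ => s * t := by
      filter_upwards [key1 hi s hs, key1 hi t ht] with ω h1 h2
      rw [h1, h2]
    rw [integral_congr_ae this, integral_const]
    simp
  exact ⟨⟨fun hi => key3 hi, fun hb => key2 fun t ht => by rw [hb t ht t ht, sq]⟩,
    ⟨fun hi t ht => by rw [key3 hi t ht t ht, sq], key2⟩⟩
end

section
/- Let X : Ω → ℝ^d and Y : Ω → ℝ be random variables with G, the distribution function of Y, continuous, and let ψ_C(s,t) := E[ E[1_{G(Y) ≤ s} | σ(X)] · E[1_{G(Y) ≤ t} | σ(X)] ]. Define B : [0,1]² → [0,1] by B(s,t) = min(s,t)² if s + t ≤ 1 and B(s,t) = min(s,t) − max(s,t) + max(s,t)² if s + t > 1. Then B(s,t) ≤ ψ_C(s,t) ≤ min(s,t) for all (s,t) ∈ [0,1]²; in particular t² ≤ ψ_C(t,t) for all t ∈ [0,1]. -/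
open MeasureTheory ProbabilityTheory Set Filter Topology

lemma uniform_cdf {Ω : Type*} [MeasurableSpace Ω] (P : Measure Ω) [IsProbabilityMeasure P]
    (Y : Ω → ℝ) (hY : Measurable Y)
    (G : ℝ → ℝ) (hG : ∀ y, G y = (P {ω | Y ω ≤ y}).toReal) (hGc : Continuous G)
    {s : ℝ} (hs0 : 0 ≤ s) (hs1 : s ≤ 1) :
    P {ω | G (Y ω) ≤ s} = ENNReal.ofReal s := by
  have hmap : IsProbabilityMeasure (P.map Y) := Measure.isProbabilityMeasure_map hY.aemeasurable
  have hGeq : ∀ y, G y = cdf (P.map Y) y := by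
    intro y
    rw [hG, cdf_eq_real, measureReal_def, Measure.map_apply hY measurableSet_Iic]
    rfl
  have hGmono : Monotone G := by
    intro a b hab
    rw [hG, hG]
    exact ENNReal.toReal_mono (measure_ne_top _ _)
      (measure_mono (fun ω h => le_trans h hab))
  rcases eq_or_lt_of_le hs1 with rfl | hs1'
  · have : {ω | G (Y ω) ≤ 1} = univ := by
      ext ω
      simp only [mem_setOf_eq, mem_univ, iff_true]
      rw [hG]
      exact ENNReal.toReal_le_of_le_ofReal one_pos.le (by simpa using prob_le_one)
    rw [this, measure_univ, ENNReal.ofReal_one]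
  · -- s < 1
    have htop : Tendsto G atTop (𝓝 1) := by
      simp only [funext hGeq]
      exact tendsto_cdf_atTop _
    have hbot : Tendsto G atBot (𝓝 0) := by
      simp only [funext hGeq]
      exact tendsto_cdf_atBot _
    set A : Set ℝ := {y | G y ≤ s} with hA
    have hA_closed : IsClosed A := isClosed_le hGc continuous_const
    obtain ⟨y₁, hy₁⟩ : ∃ y₁, s < G y₁ := ((htop.eventually (eventually_gt_nhds hs1')).exists)
    have hA_bdd : BddAbove A := by
      refine ⟨y₁, fun y hy => ?_⟩
      by_contra h
      push_neg at h
      have h1 : G y₁ ≤ G y := hGmono h.le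
      have h2 : G y ≤ s := hy
      linarith
    rcases eq_empty_or_nonempty A with hAe | hAne
    · -- A empty forces s ≤ 0, so s = 0
      have hslt : ∀ y, s < G y := by
        intro y
        by_contra h
        push_neg at h
        rw [eq_empty_iff_forall_notMem] at hAe
        exact hAe y h
      have hs_le : s ≤ 0 := ge_of_tendsto hbot (Eventually.of_forall fun y => (hslt y).le)
      have hs_eq : s = 0 := le_antisymm hs_le hs0
      subst hs_eq
      have : {ω | G (Y ω) ≤ 0} = ∅ := by
        ext ω
        simp only [mem_setOf_eq, mem_empty_iff_false, iff_false, not_le]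
        exact hslt (Y ω)
      simp [this]
    · set a := sSup A with ha
      have haA : a ∈ A := hA_closed.csSup_mem hAne hA_bdd
      have hGa_le : G a ≤ s := haA
      have hGa_ge : s ≤ G a := by
        by_contra h
        push_neg at h
        have hev : ∀ᶠ b in 𝓝[>] a, G b < s :=
          nhdsWithin_le_nhds (hGc.continuousAt.eventually_lt continuousAt_const h)
        obtain ⟨b, hbA, hba⟩ := (hev.and self_mem_nhdsWithin).exists
        exact absurd (le_csSup hA_bdd (le_of_lt hbA : G b ≤ s)) (not_le.mpr hba)
      have hGa : G a = s := le_antisymm hGa_le hGa_ge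
      have hset : {ω | G (Y ω) ≤ s} = {ω | Y ω ≤ a} := by
        ext ω
        simp only [mem_setOf_eq]
        constructor
        · intro h
          exact le_csSup hA_bdd h
        · intro h
          exact le_trans (hGmono h) hGa_le
      rw [hset, ← hGa, hG a, ENNReal.ofReal_toReal (measure_ne_top _ _)]

lemma product_bounds {Ω : Type*} [MeasurableSpace Ω] (P : Measure Ω) [IsProbabilityMeasure P]
    {U V : Ω → ℝ} {s t : ℝ}
    (hU_int : Integrable U P) (hV_int : Integrable V P)
    (hU0 : 0 ≤ᵐ[P] U) (hV0 : 0 ≤ᵐ[P] V)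
    (hU1 : U ≤ᵐ[P] fun _ => (1:ℝ)) (hV1 : V ≤ᵐ[P] fun _ => (1:ℝ))
    (hUV : U ≤ᵐ[P] V)
    (hintU : (∫ ω, U ω ∂P) = s) (hintV : (∫ ω, V ω ∂P) = t) :
    s ^ 2 ≤ (∫ ω, U ω * V ω ∂P) ∧ s - t + t ^ 2 ≤ (∫ ω, U ω * V ω ∂P) ∧
      (∫ ω, U ω * V ω ∂P) ≤ s := by
  have hU_meas := hU_int.aestronglyMeasurable
  have hV_meas := hV_int.aestronglyMeasurable
  have hUV_int : Integrable (fun ω => U ω * V ω) P := by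
    refine Integrable.mono' (integrable_const (1:ℝ)) (hU_meas.mul hV_meas) ?_
    filter_upwards [hU0, hU1, hV0, hV1] with ω h1 h2 h3 h4
    simp only [Pi.zero_apply] at h1 h3
    rw [Real.norm_eq_abs, abs_of_nonneg (mul_nonneg h1 h3)]
    nlinarith
  have hU2_meas : AEStronglyMeasurable (fun ω => U ω ^ 2) P := by
    simp_rw [pow_two]; exact hU_meas.mul hU_meas
  have hV2_meas : AEStronglyMeasurable (fun ω => V ω ^ 2) P := by
    simp_rw [pow_two]; exact hV_meas.mul hV_meas
  have hU2_int : Integrable (fun ω => U ω ^ 2) P := by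
    refine Integrable.mono' (integrable_const (1:ℝ)) hU2_meas ?_
    filter_upwards [hU0, hU1] with ω h1 h2
    simp only [Pi.zero_apply] at h1
    have h2' : U ω ≤ 1 := h2
    rw [Real.norm_eq_abs, abs_of_nonneg (pow_nonneg h1 2)]
    nlinarith
  have hV2_int : Integrable (fun ω => V ω ^ 2) P := by
    refine Integrable.mono' (integrable_const (1:ℝ)) hV2_meas ?_
    filter_upwards [hV0, hV1] with ω h1 h2
    simp only [Pi.zero_apply] at h1
    have h2' : V ω ≤ 1 := h2
    rw [Real.norm_eq_abs, abs_of_nonneg (pow_nonneg h1 2)]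
    nlinarith
  have hU2_ge : s ^ 2 ≤ ∫ ω, U ω ^ 2 ∂P := by
    have h0 : 0 ≤ ∫ ω, (U ω - s) ^ 2 ∂P := integral_nonneg fun ω => sq_nonneg _
    have hexp : (∫ ω, (U ω - s) ^ 2 ∂P)
        = (∫ ω, U ω ^ 2 ∂P) - 2 * s * (∫ ω, U ω ∂P) + s ^ 2 := by
      have he : (fun ω => (U ω - s) ^ 2)
          = fun ω => (U ω ^ 2 - (2 * s) * U ω) + s ^ 2 := by
        funext ω; ring
      have i1 : Integrable (fun ω => U ω ^ 2 - 2 * s * U ω) P :=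
        hU2_int.sub (hU_int.const_mul _)
      have i2 : Integrable (fun ω => 2 * s * U ω) P := hU_int.const_mul _
      rw [he, integral_add i1 (integrable_const _), integral_sub hU2_int i2,
        integral_const_mul, integral_const]
      simp [measure_univ]
    rw [hexp, hintU] at h0
    nlinarith
  have hV2_ge : t ^ 2 ≤ ∫ ω, V ω ^ 2 ∂P := by
    have h0 : 0 ≤ ∫ ω, (V ω - t) ^ 2 ∂P := integral_nonneg fun ω => sq_nonneg _
    have hexp : (∫ ω, (V ω - t) ^ 2 ∂P)
        = (∫ ω, V ω ^ 2 ∂P) - 2 * t * (∫ ω, V ω ∂P) + t ^ 2 := by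
      have he : (fun ω => (V ω - t) ^ 2)
          = fun ω => (V ω ^ 2 - (2 * t) * V ω) + t ^ 2 := by
        funext ω; ring
      have i1 : Integrable (fun ω => V ω ^ 2 - 2 * t * V ω) P :=
        hV2_int.sub (hV_int.const_mul _)
      have i2 : Integrable (fun ω => 2 * t * V ω) P := hV_int.const_mul _
      rw [he, integral_add i1 (integrable_const _), integral_sub hV2_int i2,
        integral_const_mul, integral_const]
      simp [measure_univ]
    rw [hexp, hintV] at h0
    nlinarith
  refine ⟨?_, ?_, ?_⟩
  · -- s ^ 2 ≤ ∫ U * V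
    have h1 : (∫ ω, U ω ^ 2 ∂P) ≤ ∫ ω, U ω * V ω ∂P := by
      refine integral_mono_ae hU2_int hUV_int ?_
      filter_upwards [hU0, hUV] with ω h1 h2
      simp only [Pi.zero_apply] at h1
      nlinarith
    linarith
  · -- s - t + t ^ 2 ≤ ∫ U * V
    have h1 : (∫ ω, (U ω + V ω ^ 2 - V ω) ∂P) ≤ ∫ ω, U ω * V ω ∂P := by
      refine integral_mono_ae ((hU_int.add hV2_int).sub hV_int) hUV_int ?_
      filter_upwards [hV1, hUV] with ω h1 h2
      have h1' : V ω ≤ 1 := h1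
      nlinarith
    have h2 : (∫ ω, (U ω + V ω ^ 2 - V ω) ∂P)
        = s + (∫ ω, V ω ^ 2 ∂P) - t := by
      have i3 : Integrable (fun ω => U ω + V ω ^ 2) P := hU_int.add hV2_int
      rw [integral_sub i3 hV_int, integral_add hU_int hV2_int, hintU, hintV]
    linarith
  · -- ∫ U * V ≤ s
    rw [← hintU]
    refine integral_mono_ae hUV_int hU_int ?_
    filter_upwards [hU0, hV1] with ω h1 h2
    simp only [Pi.zero_apply] at h1
    have h2' : V ω ≤ 1 := h2
    nlinarith

lemma key_bound {Ω : Type*} (mX : MeasurableSpace Ω) {m0 : MeasurableSpace Ω}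
    (P : Measure Ω) [IsProbabilityMeasure P]
    (Y : Ω → ℝ) (hY : Measurable Y)
    (G : ℝ → ℝ) (hG : ∀ y, G y = (P {ω | Y ω ≤ y}).toReal) (hGc : Continuous G)
    (hm : mX ≤ m0)
    {s t : ℝ} (hs : s ∈ Icc (0:ℝ) 1) (ht : t ∈ Icc (0:ℝ) 1) (hst : s ≤ t) :
    s ^ 2 ≤ (∫ ω, (P[fun ω' => if G (Y ω') ≤ s then (1:ℝ) else 0 | mX]) ω *
              (P[fun ω' => if G (Y ω') ≤ t then (1:ℝ) else 0 | mX]) ω ∂P) ∧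
    s - t + t ^ 2 ≤ (∫ ω, (P[fun ω' => if G (Y ω') ≤ s then (1:ℝ) else 0 | mX]) ω *
              (P[fun ω' => if G (Y ω') ≤ t then (1:ℝ) else 0 | mX]) ω ∂P) ∧
    (∫ ω, (P[fun ω' => if G (Y ω') ≤ s then (1:ℝ) else 0 | mX]) ω *
              (P[fun ω' => if G (Y ω') ≤ t then (1:ℝ) else 0 | mX]) ω ∂P) ≤ s := by
  have ind_eq : ∀ r : ℝ, (fun ω' => if G (Y ω') ≤ r then (1:ℝ) else 0)
      = Set.indicator {ω | G (Y ω) ≤ r} (fun _ => (1:ℝ)) := by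
    intro r; funext ω; simp [Set.indicator_apply, mem_setOf_eq]
  have hS : ∀ r : ℝ, MeasurableSet[m0] {ω | G (Y ω) ≤ r} :=
    fun r => (hGc.measurable.comp hY) measurableSet_Iic
  have hind_int : ∀ r : ℝ, Integrable (fun ω' => if G (Y ω') ≤ r then (1:ℝ) else 0) P := by
    intro r; rw [ind_eq r]; exact (integrable_const 1).indicator (hS r)
  have hIr : ∀ r ∈ Icc (0:ℝ) 1, (∫ ω, (if G (Y ω) ≤ r then (1:ℝ) else 0) ∂P) = r := by
    intro r hr
    have h1 : (∫ ω, (if G (Y ω) ≤ r then (1:ℝ) else 0) ∂P)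
        = (P {ω | G (Y ω) ≤ r}).toReal • (1:ℝ) := by
      rw [ind_eq r]; exact integral_indicator_const (1:ℝ) (hS r)
    rw [h1, uniform_cdf P Y hY G hG hGc hr.1 hr.2]
    simp [ENNReal.toReal_ofReal hr.1]
  have hind01 : ∀ r : ℝ, ∀ ω : Ω, (0:ℝ) ≤ (if G (Y ω) ≤ r then (1:ℝ) else 0)
      ∧ (if G (Y ω) ≤ r then (1:ℝ) else 0) ≤ 1 := by
    intro r ω; constructor <;> (split <;> norm_num)
  refine product_bounds P integrable_condExp integrable_condExp
    (condExp_nonneg (Eventually.of_forall fun ω => (hind01 s ω).1))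
    (condExp_nonneg (Eventually.of_forall fun ω => (hind01 t ω).1))
    ?_ ?_ ?_ ?_ ?_
  · have h := condExp_mono (m := mX) (μ := P) (hind_int s) (integrable_const (1:ℝ))
      (Eventually.of_forall fun ω => (hind01 s ω).2)
    rwa [condExp_const hm] at h
  · have h := condExp_mono (m := mX) (μ := P) (hind_int t) (integrable_const (1:ℝ))
      (Eventually.of_forall fun ω => (hind01 t ω).2)
    rwa [condExp_const hm] at h
  · refine condExp_mono (hind_int s) (hind_int t) (Eventually.of_forall fun ω => ?_)
    dsimp only
    split_ifs with h1 h2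
    · norm_num
    · exact (h2 (h1.trans hst)).elim
    · norm_num
    · norm_num
  · rw [integral_condExp hm]; exact hIr s hs
  · rw [integral_condExp hm]; exact hIr t ht

/-- The copula `ψ_C` lies between the Bertino copula with diagonal `t ↦ t²`
and the comonotonicity copula `min`; in particular `t² ≤ ψ_C(t,t)`. -/
theorem bertino_le_psi_le_min
    {Ω : Type*} [MeasurableSpace Ω] (P : Measure Ω) [IsProbabilityMeasure P]
    {d : ℕ} (X : Ω → (Fin d → ℝ)) (Y : Ω → ℝ) (hX : Measurable X) (hY : Measurable Y)
    (G : ℝ → ℝ) (hG : ∀ y, G y = (P {ω | Y ω ≤ y}).toReal) (hGc : Continuous G)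
    (mX : MeasurableSpace Ω) (hmX : mX = MeasurableSpace.comap X inferInstance)
    (ψ : ℝ → ℝ → ℝ)
    (hψ : ∀ s t : ℝ, ψ s t =
      ∫ ω, (P[fun ω' => if G (Y ω') ≤ s then (1:ℝ) else 0 | mX]) ω *
           (P[fun ω' => if G (Y ω') ≤ t then (1:ℝ) else 0 | mX]) ω ∂P)
    (B : ℝ → ℝ → ℝ)
    (hB : ∀ s t : ℝ, B s t =
      if s + t ≤ 1 then (min s t) ^ 2 else min s t - max s t + (max s t) ^ 2) :
    (∀ s ∈ Icc (0:ℝ) 1, ∀ t ∈ Icc (0:ℝ) 1, B s t ≤ ψ s t ∧ ψ s t ≤ min s t) ∧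
    (∀ t ∈ Icc (0:ℝ) 1, t ^ 2 ≤ ψ t t) := by
  have key : ∀ s ∈ Icc (0:ℝ) 1, ∀ t ∈ Icc (0:ℝ) 1, B s t ≤ ψ s t ∧ ψ s t ≤ min s t := by
    intro s hs t ht
    rcases le_total s t with h | h
    · obtain ⟨l1, l2, u⟩ := key_bound mX P Y hY G hG hGc
        (by rw [hmX]; exact measurable_iff_comap_le.mp hX) hs ht h
      rw [hB s t, hψ s t, min_eq_left h, max_eq_right h]
      refine ⟨?_, u⟩
      split_ifs with hc
      · exact l1
      · exact l2
    · obtain ⟨l1, l2, u⟩ := key_bound mX P Y hY G hG hGc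
        (by rw [hmX]; exact measurable_iff_comap_le.mp hX) ht hs h
      have hsym : ψ s t = ψ t s := by
        rw [hψ s t, hψ t s]; congr 1; funext ω; exact mul_comm _ _
      rw [hB s t, hsym, hψ t s, min_eq_right h, max_eq_left h]
      refine ⟨?_, u⟩
      have hadd : s + t = t + s := add_comm s t
      rw [hadd]
      split_ifs with hc
      · exact l1
      · exact l2
  refine ⟨key, fun t ht => ?_⟩
  have h := (key t ht t ht).1
  rw [hB t t, min_self, max_self] at h
  split_ifs at h with hc
  · exact h
  · linarith
end

section
/- Let X₁, ..., X_d : Ω → ℝ and Y : Ω → ℝ be random variables with G, the distribution function of Y, continuous, and fix k ∈ {1,...,d−1}. Let 𝓖 := σ(X₁,...,X_k) and 𝓗 := σ(X₁,...,X_d), and for a σ-algebra 𝓐 set ψ_𝓐(s,t) := E[ E[1_{G(Y) ≤ s} | 𝓐] · E[1_{G(Y) ≤ t} | 𝓐] ]. Then the following are equivalent: (a) for every t ∈ [0,1], E[1_{Y ≤ t'} | 𝓗] = E[1_{Y ≤ t'} | 𝓖] almost surely for all t' ∈ ℝ (i.e., Y and (X_{k+1},...,X_d) are conditionally independent given (X₁,...,X_k));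 (b) ψ_𝓗(t,t) = ψ_𝓖(t,t) for all t ∈ [0,1]. Moreover, (a) implies ψ_𝓗(s,t) = ψ_𝓖(s,t) for all (s,t) ∈ [0,1]². -/
open MeasureTheory ProbabilityTheory Set


/-- Pythagoras: if the second moments of the conditional expectations w.r.t. nested
σ-algebras agree, the conditional expectations agree a.e. -/
lemma condexp_ae_eq_of_integral_sq_eq
    {Ω : Type*} {m0 : MeasurableSpace Ω} {P : Measure Ω} [IsProbabilityMeasure P]
    {mG mH : MeasurableSpace Ω} (hGH : mG ≤ mH) (hH : mH ≤ m0)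
    {f : Ω → ℝ} (hfi : Integrable f P) (hb : ∀ᵐ ω ∂P, |f ω| ≤ ((1 : NNReal) : ℝ))
    (h : ∫ ω, (P[f|mH]) ω * (P[f|mH]) ω ∂P = ∫ ω, (P[f|mG]) ω * (P[f|mG]) ω ∂P) :
    P[f|mH] =ᵐ[P] P[f|mG] := by
  have hG : mG ≤ m0 := hGH.trans hH
  haveI : SigmaFinite (P.trim hH) := inferInstance
  haveI : SigmaFinite (P.trim hG) := inferInstance
  set fH := P[f|mH] with hfH
  set fG := P[f|mG] with hfG
  have hbH : ∀ᵐ ω ∂P, ‖fH ω‖ ≤ (1:ℝ) := by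
    filter_upwards [ae_bdd_condExp_of_ae_bdd (m := mH) hb] with ω hω
    simpa [Real.norm_eq_abs] using hω
  have hbG : ∀ᵐ ω ∂P, ‖fG ω‖ ≤ (1:ℝ) := by
    filter_upwards [ae_bdd_condExp_of_ae_bdd (m := mG) hb] with ω hω
    simpa [Real.norm_eq_abs] using hω
  have hiH : Integrable fH P := integrable_condExp
  have hiG : Integrable fG P := integrable_condExp
  have hfGm : StronglyMeasurable[mH] fG := stronglyMeasurable_condExp.mono hGH
  -- cross term
  have hintGf : Integrable (fun ω => fG ω * f ω) P := hfi.bdd_mul hiG.1 hbG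
  have hintGH : Integrable (fun ω => fG ω * fH ω) P := hiH.bdd_mul hiG.1 hbG
  have hintGG : Integrable (fun ω => fG ω * fG ω) P := hiG.bdd_mul hiG.1 hbG
  have hintHH : Integrable (fun ω => fH ω * fH ω) P := hiH.bdd_mul hiH.1 hbH
  have hintHG : Integrable (fun ω => fH ω * fG ω) P := hiG.bdd_mul hiH.1 hbH
  have h1 : ∫ ω, fG ω * fH ω ∂P = ∫ ω, fG ω * f ω ∂P := by
    have hmul : P[fG * f|mH] =ᵐ[P] fG * P[f|mH] :=
      condExp_mul_of_stronglyMeasurable_left hfGm hintGf hfi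
    calc ∫ ω, fG ω * fH ω ∂P = ∫ ω, (P[fG * f|mH]) ω ∂P :=
          (integral_congr_ae hmul).symm
      _ = ∫ ω, (fG * f) ω ∂P := integral_condExp hH
      _ = ∫ ω, fG ω * f ω ∂P := rfl
  have h2 : ∫ ω, fG ω * fG ω ∂P = ∫ ω, fG ω * f ω ∂P := by
    have hmul : P[fG * f|mG] =ᵐ[P] fG * P[f|mG] :=
      condExp_mul_of_stronglyMeasurable_left stronglyMeasurable_condExp hintGf hfi
    calc ∫ ω, fG ω * fG ω ∂P = ∫ ω, (P[fG * f|mG]) ω ∂P :=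
          (integral_congr_ae hmul).symm
      _ = ∫ ω, (fG * f) ω ∂P := integral_condExp hG
      _ = ∫ ω, fG ω * f ω ∂P := rfl
  have hcross : ∫ ω, fG ω * fH ω ∂P = ∫ ω, fG ω * fG ω ∂P := h1.trans h2.symm
  have hcomm : ∫ ω, fH ω * fG ω ∂P = ∫ ω, fG ω * fH ω ∂P := by
    simp_rw [mul_comm]
  have key : ∫ ω, (fH ω - fG ω) * (fH ω - fG ω) ∂P = 0 := by
    have expand : (fun ω => (fH ω - fG ω) * (fH ω - fG ω))
        = fun ω => fH ω * fH ω - fH ω * fG ω - (fG ω * fH ω - fG ω * fG ω) := by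
      funext ω; ring
    have hA : Integrable (fun ω => fH ω * fH ω - fH ω * fG ω) P := hintHH.sub hintHG
    have hB : Integrable (fun ω => fG ω * fH ω - fG ω * fG ω) P := hintGH.sub hintGG
    rw [expand, integral_sub hA hB,
      integral_sub hintHH hintHG, integral_sub hintGH hintGG, hcomm, hcross, h]
    ring
  have hnn : 0 ≤ᵐ[P] fun ω => (fH ω - fG ω) * (fH ω - fG ω) :=
    ae_of_all _ fun ω => mul_self_nonneg _
  have hintD : Integrable (fun ω => (fH ω - fG ω) * (fH ω - fG ω)) P := by
    have hbD : ∀ᵐ ω ∂P, ‖fH ω - fG ω‖ ≤ (2:ℝ) := by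
      filter_upwards [hbH, hbG] with ω h1 h2
      calc ‖fH ω - fG ω‖ ≤ ‖fH ω‖ + ‖fG ω‖ := norm_sub_le _ _
        _ ≤ 2 := by linarith
    exact (hiH.sub hiG).bdd_mul (hiH.sub hiG).1 hbD
  have hzero := (integral_eq_zero_iff_of_nonneg_ae hnn hintD).mp key
  filter_upwards [hzero] with ω hω
  have : (fH ω - fG ω) * (fH ω - fG ω) = 0 := hω
  have := mul_self_eq_zero.mp this
  linarith

/-- `Y` is conditionally independent of `(X_{k+1},…,X_d)` given `(X₁,…,X_k)`
(expressed via a.s. equality of conditional distribution functions) iff the diagonals of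
`ψ_𝓗` and `ψ_𝓖` coincide; moreover the conditional independence implies `ψ_𝓗 = ψ_𝓖`
on the whole unit square. -/
theorem psi_diag_eq_iff_condIndep
    {Ω : Type*} [MeasurableSpace Ω] (P : Measure Ω) [IsProbabilityMeasure P]
    {d : ℕ} (X : Fin d → Ω → ℝ) (Y : Ω → ℝ)
    (hX : ∀ i, Measurable (X i)) (hY : Measurable Y)
    (G : ℝ → ℝ) (hG : ∀ y, G y = (P {ω | Y ω ≤ y}).toReal) (hGc : Continuous G)
    (k : ℕ) (hk1 : 1 ≤ k) (hk2 : k ≤ d - 1)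
    (mG mH : MeasurableSpace Ω)
    (hmG : mG = ⨆ i ∈ Finset.univ.filter fun i : Fin d => (i : ℕ) < k,
      MeasurableSpace.comap (X i) inferInstance)
    (hmH : mH = ⨆ i : Fin d, MeasurableSpace.comap (X i) inferInstance)
    (ψG ψH : ℝ → ℝ → ℝ)
    (hψG : ∀ s t : ℝ, ψG s t =
      ∫ ω, (P[fun ω' => if G (Y ω') ≤ s then (1:ℝ) else 0 | mG]) ω *
           (P[fun ω' => if G (Y ω') ≤ t then (1:ℝ) else 0 | mG]) ω ∂P)
    (hψH : ∀ s t : ℝ, ψH s t =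
      ∫ ω, (P[fun ω' => if G (Y ω') ≤ s then (1:ℝ) else 0 | mH]) ω *
           (P[fun ω' => if G (Y ω') ≤ t then (1:ℝ) else 0 | mH]) ω ∂P) :
    ((∀ t' : ℝ,
        P[fun ω => if Y ω ≤ t' then (1:ℝ) else 0 | mH]
          =ᵐ[P] P[fun ω => if Y ω ≤ t' then (1:ℝ) else 0 | mG]) ↔
      ∀ t ∈ Icc (0:ℝ) 1, ψH t t = ψG t t) ∧
    ((∀ t' : ℝ,
        P[fun ω => if Y ω ≤ t' then (1:ℝ) else 0 | mH]
          =ᵐ[P] P[fun ω => if Y ω ≤ t' then (1:ℝ) else 0 | mG]) →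
      ∀ s ∈ Icc (0:ℝ) 1, ∀ t ∈ Icc (0:ℝ) 1, ψH s t = ψG s t) := by
  rename_i m0 hPP
  have hH_le : mH ≤ m0 := by
    rw [hmH]; exact iSup_le fun i => (hX i).comap_le
  have hGH : mG ≤ mH := by
    rw [hmG, hmH]
    exact iSup₂_le fun i _ => le_iSup (fun i => MeasurableSpace.comap (X i) inferInstance) i
  have hG_le : mG ≤ m0 := hGH.trans hH_le
  haveI : SigmaFinite (P.trim hH_le) := inferInstance
  haveI : SigmaFinite (P.trim hG_le) := inferInstance
  have hGm : Monotone G := fun a b hab => by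
    rw [hG a, hG b]
    exact ENNReal.toReal_mono (measure_ne_top _ _)
      (measure_mono fun ω h => le_trans h hab)
  -- trichotomy for sublevel sets of G
  have htri : ∀ s : ℝ, {y : ℝ | G y ≤ s} = ∅ ∨ {y : ℝ | G y ≤ s} = univ ∨
      ∃ c, {y : ℝ | G y ≤ s} = Iic c := by
    intro s
    by_cases hne : {y : ℝ | G y ≤ s}.Nonempty
    · by_cases hbd : BddAbove {y : ℝ | G y ≤ s}
      · right; right
        have hcl : IsClosed {y : ℝ | G y ≤ s} := isClosed_le hGc continuous_const
        have hc : sSup {y : ℝ | G y ≤ s} ∈ {y : ℝ | G y ≤ s} := hcl.csSup_mem hne hbd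
        exact ⟨sSup {y : ℝ | G y ≤ s}, Set.ext fun y =>
          ⟨fun hy => le_csSup hbd hy, fun hy => le_trans (hGm hy) hc⟩⟩
      · right; left
        refine Set.eq_univ_of_forall fun y => ?_
        obtain ⟨z, hz, hyz⟩ := not_bddAbove_iff.mp hbd y
        exact le_trans (hGm hyz.le) hz
    · left; exact not_nonempty_iff_eq_empty.mp hne
  -- indicator is measurable, integrable, bounded
  have hmeas : ∀ s : ℝ, Measurable[m0] fun ω => if G (Y ω) ≤ s then (1:ℝ) else 0 := fun s =>
    Measurable.ite (measurableSet_le (hGc.measurable.comp hY) measurable_const)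
      measurable_const measurable_const
  have hfi : ∀ s : ℝ, Integrable (fun ω => if G (Y ω) ≤ s then (1:ℝ) else 0) P := fun s =>
    (integrable_const (1:ℝ)).mono' (hmeas s).aestronglyMeasurable
      (ae_of_all _ fun ω => by by_cases h : G (Y ω) ≤ s <;> simp [h])
  have hfb : ∀ s : ℝ, ∀ᵐ ω ∂P,
      |(fun ω' => if G (Y ω') ≤ s then (1:ℝ) else 0) ω| ≤ ((1 : NNReal) : ℝ) :=
    fun s => ae_of_all _ fun ω => by by_cases h : G (Y ω) ≤ s <;> simp [h]
  -- (a) implies condexps of all G-sublevel indicators agree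
  have hKey : (∀ t' : ℝ,
        P[fun ω => if Y ω ≤ t' then (1:ℝ) else 0 | mH]
          =ᵐ[P] P[fun ω => if Y ω ≤ t' then (1:ℝ) else 0 | mG]) → ∀ s : ℝ,
      P[(fun ω' => if G (Y ω') ≤ s then (1:ℝ) else 0)|mH]
        =ᵐ[P] P[(fun ω' => if G (Y ω') ≤ s then (1:ℝ) else 0)|mG] := by
    intro ha s
    rcases htri s with h | h | ⟨c, h⟩
    · have he : (fun ω' => if G (Y ω') ≤ s then (1:ℝ) else 0) = fun _ => (0:ℝ) := by
        funext ω'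
        exact if_neg fun hle => (eq_empty_iff_forall_notMem.mp h (Y ω')) hle
      rw [he, condExp_const (μ := P) hH_le (0:ℝ), condExp_const (μ := P) hG_le (0:ℝ)]
    · have he : (fun ω' => if G (Y ω') ≤ s then (1:ℝ) else 0) = fun _ => (1:ℝ) := by
        funext ω'
        exact if_pos (Set.eq_univ_iff_forall.mp h (Y ω'))
      rw [he, condExp_const (μ := P) hH_le (1:ℝ), condExp_const (μ := P) hG_le (1:ℝ)]
    · have hiff : ∀ y, G y ≤ s ↔ y ≤ c := fun y => Set.ext_iff.mp h y
      have he : (fun ω' => if G (Y ω') ≤ s then (1:ℝ) else 0)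
          = fun ω' => if Y ω' ≤ c then (1:ℝ) else 0 := by
        funext ω'; simp only [hiff (Y ω')]
      rw [he]
      exact ha c
  -- difference of level sets has measure zero
  have hIoc : ∀ a b : ℝ, a ≤ b → G b = G a →
      P ({ω | Y ω ≤ b} \ {ω | Y ω ≤ a}) = 0 := by
    intro a b hab hGe
    have hsub : {ω | Y ω ≤ a} ⊆ {ω | Y ω ≤ b} := fun ω h => le_trans h hab
    rw [measure_diff hsub ((hY measurableSet_Iic).nullMeasurableSet) (measure_ne_top _ _)]
    have heq : P {ω | Y ω ≤ b} = P {ω | Y ω ≤ a} :=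
      (ENNReal.toReal_eq_toReal_iff' (measure_ne_top _ _) (measure_ne_top _ _)).mp
        (by rw [← hG, ← hG]; exact hGe)
    rw [heq, tsub_self]
  -- indicators of {Y ≤ t'} and {G∘Y ≤ G t'} agree a.e.
  have hind : ∀ t' : ℝ, (fun ω => if Y ω ≤ t' then (1:ℝ) else 0)
      =ᵐ[P] fun ω => if G (Y ω) ≤ G t' then (1:ℝ) else 0 := by
    intro t'
    have hSne : G t' ≤ G t' := le_refl _
    have hD : P {ω | G (Y ω) ≤ G t' ∧ ¬ Y ω ≤ t'} = 0 := by
      rcases htri (G t') with h | h | ⟨c, h⟩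
      · exact absurd (eq_empty_iff_forall_notMem.mp h t' hSne) (fun f => f)
      · have hconst : ∀ y, G y ≤ G t' := fun y => Set.eq_univ_iff_forall.mp h y
        have hsub : {ω | G (Y ω) ≤ G t' ∧ ¬ Y ω ≤ t'} ⊆
            ⋃ n : ℕ, ({ω | Y ω ≤ t' + (n+1)} \ {ω | Y ω ≤ t'}) := by
          intro ω hω
          obtain ⟨n, hn⟩ := exists_nat_ge (Y ω - t')
          exact mem_iUnion.mpr ⟨n, ⟨by simp only [mem_setOf_eq]; linarith, hω.2⟩⟩
        refine measure_mono_null hsub (measure_iUnion_null fun n =>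
          hIoc t' (t' + (n+1)) (by linarith [Nat.cast_nonneg (α := ℝ) n]) ?_)
        exact le_antisymm (hconst _) (hGm (by linarith [Nat.cast_nonneg (α := ℝ) n]))
      · have hiff : ∀ y, G y ≤ G t' ↔ y ≤ c := fun y => Set.ext_iff.mp h y
        have htc : t' ≤ c := (hiff t').mp hSne
        have hsub : {ω | G (Y ω) ≤ G t' ∧ ¬ Y ω ≤ t'} ⊆
            {ω | Y ω ≤ c} \ {ω | Y ω ≤ t'} := fun ω hω => ⟨(hiff (Y ω)).mp hω.1, hω.2⟩
        exact measure_mono_null hsub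
          (hIoc t' c htc (le_antisymm ((hiff c).mpr le_rfl) (hGm htc)))
    filter_upwards [measure_eq_zero_iff_ae_notMem.mp hD] with ω hω
    by_cases hy : Y ω ≤ t'
    · simp [hy, hGm hy]
    · have hng : ¬ G (Y ω) ≤ G t' := fun hle => hω ⟨hle, hy⟩
      simp [hy, hng]
  have hG01 : ∀ y : ℝ, G y ∈ Icc (0:ℝ) 1 := fun y =>
    ⟨by rw [hG]; positivity,
     by rw [hG]; simpa using ENNReal.toReal_mono ENNReal.one_ne_top prob_le_one⟩
  -- (a) implies ψ equal on the whole square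
  have hpsi : (∀ t' : ℝ,
        P[fun ω => if Y ω ≤ t' then (1:ℝ) else 0 | mH]
          =ᵐ[P] P[fun ω => if Y ω ≤ t' then (1:ℝ) else 0 | mG]) →
      ∀ s t : ℝ, ψH s t = ψG s t := by
    intro ha s t
    rw [hψH, hψG]
    exact integral_congr_ae ((hKey ha s).mul (hKey ha t))
  refine ⟨⟨fun ha t _ => hpsi ha t t, fun hb t' => ?_⟩, fun ha s _ t _ => hpsi ha s t⟩
  have h1 := hb (G t') (hG01 t')
  rw [hψH, hψG] at h1
  have h2 : P[(fun ω' => if G (Y ω') ≤ G t' then (1:ℝ) else 0)|mH]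
      =ᵐ[P] P[(fun ω' => if G (Y ω') ≤ G t' then (1:ℝ) else 0)|mG] :=
    condexp_ae_eq_of_integral_sq_eq hGH hH_le (hfi (G t')) (hfb (G t')) h1
  exact (condExp_congr_ae (hind t')).trans (h2.trans (condExp_congr_ae (hind t')).symm)
end

section
/- Let X : Ω → ℝ^d and Y : Ω → ℝ be random variables with G, the distribution function of Y, continuous, and let ψ_C(s,t) := E[ E[1_{G(Y) ≤ s} | σ(X)] · E[1_{G(Y) ≤ t} | σ(X)] ]. Define Azadkia–Chatterjee's coefficient T(Y,X) := ( ∫_ℝ Var( P(Y ≥ y | X) ) dP^Y(y) ) / ( ∫_ℝ Var( 1_{Y ≥ y} ) dP^Y(y) ), where P^Y is the law of Y. Then ∫_ℝ Var(1_{Y ≥ y}) dP^Y(y) = 1/6 and T(Y,X) = 6 ∫₀¹ ψ_C(t,t) dt − 2, i.e., T equals Spearman's footrule φ applied to ψ_C. -/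
open MeasureTheory ProbabilityTheory Set

open intervalIntegral in

/-- Azadkia–Chatterjee's `T` equals Spearman's footrule applied to `ψ_C`;
its denominator `∫ Var(1_{Y ≥ y}) dP^Y(y)` equals `1/6`. -/
theorem T_eq_spearman_footrule_of_psi
    {Ω : Type*} [MeasurableSpace Ω] (P : Measure Ω) [IsProbabilityMeasure P]
    {d : ℕ} (X : Ω → (Fin d → ℝ)) (Y : Ω → ℝ) (hX : Measurable X) (hY : Measurable Y)
    (G : ℝ → ℝ) (hG : ∀ y, G y = (P {ω | Y ω ≤ y}).toReal) (hGc : Continuous G)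
    (ψ : ℝ → ℝ → ℝ)
    (hψ : ∀ s t : ℝ, ψ s t =
      ∫ ω, (P[fun ω' => if G (Y ω') ≤ s then (1:ℝ) else 0 |
              MeasurableSpace.comap X inferInstance]) ω *
           (P[fun ω' => if G (Y ω') ≤ t then (1:ℝ) else 0 |
              MeasurableSpace.comap X inferInstance]) ω ∂P)
    (T : ℝ)
    (hT : T =
      (∫ y, variance
          (P[fun ω => if y ≤ Y ω then (1:ℝ) else 0 |
            MeasurableSpace.comap X inferInstance]) P ∂(P.map Y)) /
      (∫ y, variance (fun ω => if y ≤ Y ω then (1:ℝ) else 0) P ∂(P.map Y))) :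
    (∫ y, variance (fun ω => if y ≤ Y ω then (1:ℝ) else 0) P ∂(P.map Y)) = 1 / 6 ∧
    T = 6 * (∫ t in (0:ℝ)..1, ψ t t) - 2 := by
  classical
  have hm : MeasurableSpace.comap X inferInstance ≤ ‹MeasurableSpace Ω› := hX.comap_le
  haveI : SigmaFinite (P.trim hm) := by infer_instance
  haveI : IsProbabilityMeasure (P.map Y) := Measure.isProbabilityMeasure_map hY.aemeasurable
  have hGmeas : Measurable G := hGc.measurable
  have hGY : Measurable (fun ω => G (Y ω)) := hGmeas.comp hY
  have hsetle : ∀ y : ℝ, MeasurableSet {ω | Y ω ≤ y} := fun y => hY measurableSet_Iic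
  have hsetlt : ∀ y : ℝ, MeasurableSet {ω | Y ω < y} := fun y => hY measurableSet_Iio
  have hsetge : ∀ y : ℝ, MeasurableSet {ω | y ≤ Y ω} := fun y => hY measurableSet_Ici
  have hsetA : ∀ s : ℝ, MeasurableSet {ω | G (Y ω) ≤ s} := fun s => hGY measurableSet_Iic
  have hG0 : ∀ y, 0 ≤ G y := fun y => (hG y) ▸ ENNReal.toReal_nonneg
  have hG1 : ∀ y, G y ≤ 1 := by
    intro y
    rw [hG y]
    have := ENNReal.toReal_mono (by simp) (prob_le_one (μ := P) (s := {ω | Y ω ≤ y}))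
    simpa using this
  have hGmono : Monotone G := by
    intro a b hab
    rw [hG a, hG b]
    exact ENNReal.toReal_mono (measure_ne_top _ _)
      (measure_mono fun ω h => le_trans h hab)
  have hGofReal : ∀ y, P {ω | Y ω ≤ y} = ENNReal.ofReal (G y) := fun y => by
    rw [hG y, ENNReal.ofReal_toReal (measure_ne_top _ _)]
  -- connect to cdf for the limits
  have hGcdf : G = cdf (P.map Y) := by
    funext y
    rw [cdf_eq_real, measureReal_def, Measure.map_apply hY measurableSet_Iic, hG y]
    rfl
  have htop : Filter.Tendsto G Filter.atTop (nhds 1) := hGcdf ▸ tendsto_cdf_atTop (P.map Y)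
  have hbot : Filter.Tendsto G Filter.atBot (nhds 0) := hGcdf ▸ tendsto_cdf_atBot (P.map Y)
  -- no atoms
  have hatom : ∀ y, P {ω | Y ω = y} = 0 := by
    intro y
    have hsub : ∀ z, z < y → (P {ω | Y ω = y}).toReal ≤ G y - G z := by
      intro z hz
      have h1 : {ω | Y ω = y} ⊆ {ω | Y ω ≤ y} \ {ω | Y ω ≤ z} := by
        intro ω hω
        simp only [mem_setOf_eq] at hω
        exact ⟨le_of_eq hω, by simp only [mem_setOf_eq, hω]; exact not_le.mpr hz⟩
      have hss : {ω | Y ω ≤ z} ⊆ {ω | Y ω ≤ y} := fun ω h => le_trans h hz.le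
      have h2 : P ({ω | Y ω ≤ y} \ {ω | Y ω ≤ z}) = P {ω | Y ω ≤ y} - P {ω | Y ω ≤ z} :=
        measure_diff hss (hsetle z).nullMeasurableSet (measure_ne_top _ _)
      calc (P {ω | Y ω = y}).toReal
          ≤ (P ({ω | Y ω ≤ y} \ {ω | Y ω ≤ z})).toReal :=
            ENNReal.toReal_mono (measure_ne_top _ _) (measure_mono h1)
        _ = G y - G z := by
            rw [h2, ENNReal.toReal_sub_of_le (measure_mono hss) (measure_ne_top _ _),
              hG y, hG z]
    have hlim : Filter.Tendsto (fun n : ℕ => G y - G (y - 1/(n+1))) Filter.atTop (nhds 0) := by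
      have h1 : Filter.Tendsto (fun n : ℕ => y - 1/(n+1)) Filter.atTop (nhds y) := by
        have : Filter.Tendsto (fun n : ℕ => 1 / ((n : ℝ) + 1)) Filter.atTop (nhds 0) := tendsto_one_div_add_atTop_nhds_zero_nat
        have h2 := Filter.Tendsto.sub (tendsto_const_nhds (x := y)) this
        simpa using h2
      have h3 := (hGc.tendsto y).comp h1
      have h4 := Filter.Tendsto.sub (tendsto_const_nhds (x := G y)) h3
      simpa using h4
    have hle : (P {ω | Y ω = y}).toReal ≤ 0 := by
      refine ge_of_tendsto hlim (Filter.Eventually.of_forall fun n => ?_)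
      exact hsub _ (sub_lt_self y (by positivity))
    have h0 : (P {ω | Y ω = y}).toReal = 0 := le_antisymm hle ENNReal.toReal_nonneg
    exact ((ENNReal.toReal_eq_zero_iff _).mp h0).resolve_right (measure_ne_top _ _)
  have hlt : ∀ y, P {ω | Y ω < y} = ENNReal.ofReal (G y) := by
    intro y
    have hset : {ω | Y ω ≤ y} = {ω | Y ω < y} ∪ {ω | Y ω = y} := by
      ext ω; simp [le_iff_lt_or_eq]
    have h1 : P {ω | Y ω ≤ y} ≤ P {ω | Y ω < y} + P {ω | Y ω = y} :=
      hset ▸ measure_union_le _ _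
    rw [hatom y, add_zero] at h1
    have h2 : P {ω | Y ω < y} ≤ P {ω | Y ω ≤ y} := measure_mono fun ω (h : Y ω < y) => le_of_lt h
    rw [le_antisymm h2 h1, hGofReal y]
  have hge : ∀ y, (P {ω | y ≤ Y ω}).toReal = 1 - G y := by
    intro y
    have hset : {ω | y ≤ Y ω} = {ω | Y ω < y}ᶜ := by ext ω; simp [not_lt]
    rw [hset, prob_compl_eq_one_sub (hsetlt y), hlt y,
      ENNReal.toReal_sub_of_le (by simpa using ENNReal.ofReal_le_one.mpr (hG1 y)) (by simp)]
    simp [ENNReal.toReal_ofReal (hG0 y)]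
  -- intermediate value theorem for G
  have hIVT : ∀ c : ℝ, 0 < c → c < 1 → ∃ y, G y = c := by
    intro c hc0 hc1
    obtain ⟨y₀, hy₀⟩ := (hbot.eventually_lt_const hc0).exists
    obtain ⟨y₁, hy₁⟩ := (htop.eventually_const_lt hc1).exists
    have hle : y₀ ≤ y₁ := by
      by_contra h
      push_neg at h
      have := hGmono h.le
      linarith
    obtain ⟨y, _, hy⟩ := intermediate_value_Icc hle hGc.continuousOn ⟨hy₀.le, hy₁.le⟩
    exact ⟨y, hy⟩
  -- upper and lower bounds for the cdf of G ∘ Y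
  have hub : ∀ t c : ℝ, 0 < c → t < c → c < 1 → (P {ω | G (Y ω) ≤ t}).toReal ≤ c := by
    intro t c hc0 h1 h2
    · obtain ⟨y'', hy''⟩ := hIVT c hc0 h2
      have hsub : {ω | G (Y ω) ≤ t} ⊆ {ω | Y ω ≤ y''} := by
        intro ω hω
        simp only [mem_setOf_eq] at hω ⊢
        by_contra h
        push_neg at h
        have := hGmono h.le
        rw [hy''] at this
        linarith
      calc (P {ω | G (Y ω) ≤ t}).toReal
          ≤ (P {ω | Y ω ≤ y''}).toReal :=
            ENNReal.toReal_mono (measure_ne_top _ _) (measure_mono hsub)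
        _ = G y'' := (hG y'').symm
        _ = c := hy''
  have hlb : ∀ t : ℝ, 0 ≤ t → t < 1 → t ≤ (P {ω | G (Y ω) ≤ t}).toReal := by
    intro t ht0 ht1
    rcases eq_or_lt_of_le ht0 with h0 | h0
    · rw [← h0]; exact ENNReal.toReal_nonneg
    · by_contra hcon
      push_neg at hcon
      set r := (P {ω | G (Y ω) ≤ t}).toReal with hr
      have hr0 : 0 ≤ r := ENNReal.toReal_nonneg
      set c := max (t/2) ((r + t)/2) with hc
      have hc0 : 0 < c := lt_of_lt_of_le (by linarith) (le_max_left _ _)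
      have hct : c < t := max_lt (by linarith) (by linarith)
      obtain ⟨y, hy⟩ := hIVT c hc0 (lt_trans hct ht1)
      have hsub : {ω | Y ω ≤ y} ⊆ {ω | G (Y ω) ≤ t} := by
        intro ω hω
        simp only [mem_setOf_eq] at hω ⊢
        calc G (Y ω) ≤ G y := hGmono hω
          _ = c := hy
          _ ≤ t := hct.le
      have : G y ≤ r := by
        rw [hG y]
        exact ENNReal.toReal_mono (measure_ne_top _ _) (measure_mono hsub)
      rw [hy] at this
      have := le_max_right (t/2) ((r + t)/2)
      linarith
  -- the distribution of G ∘ Y restricted version of hub: exact value at points G y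
  have hFt : ∀ y, (P {ω | G (Y ω) ≤ G y}).toReal = G y := by
    intro y
    refine le_antisymm ?_ ?_
    · rcases le_or_gt 1 (G y) with h | h
      · have hto1 : (P {ω | G (Y ω) ≤ G y}).toReal ≤ 1 := by
          have := ENNReal.toReal_mono (by simp) (prob_le_one (μ := P) (s := {ω | G (Y ω) ≤ G y}))
          simpa using this
        exact le_trans hto1 h
      · by_contra hcon
        push_neg at hcon
        set r := (P {ω | G (Y ω) ≤ G y}).toReal with hr
        set c := min ((G y + r)/2) ((G y + 1)/2) with hc
        have h1 : G y < c := lt_min (by linarith) (by linarith)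
        have h2 : c < 1 := lt_of_le_of_lt (min_le_right _ _) (by linarith)
        have h3 := hub (G y) c (lt_of_le_of_lt (hG0 y) h1) h1 h2
        have h4 : c ≤ (G y + r)/2 := min_le_left _ _
        rw [← hr] at h3
        linarith
    · have hmono2 : (P {ω | Y ω ≤ y}).toReal ≤ (P {ω | G (Y ω) ≤ G y}).toReal :=
        ENNReal.toReal_mono (measure_ne_top _ _)
          (measure_mono fun ω (h : Y ω ≤ y) => hGmono h)
      linarith [hG y]
  have hFm : ∀ y, P {ω | G (Y ω) ≤ G y} = ENNReal.ofReal (G y) := fun y => by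
    conv_rhs => rw [← hFt y]
    rw [ENNReal.ofReal_toReal (measure_ne_top _ _)]
  -- the law of G ∘ Y is uniform on (0,1]
  have hν : P.map (fun ω => G (Y ω)) = volume.restrict (Ioc (0:ℝ) 1) := by
    refine MeasureTheory.Measure.ext_of_Iic _ _ (fun t => ?_)
    rw [Measure.map_apply hGY measurableSet_Iic, Measure.restrict_apply measurableSet_Iic]
    have hpre : (fun ω => G (Y ω)) ⁻¹' Iic t = {ω | G (Y ω) ≤ t} := rfl
    have hset : Iic t ∩ Ioc (0:ℝ) 1 = Ioc 0 (min t 1) := by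
      ext x
      simp only [mem_inter_iff, mem_Iic, mem_Ioc, le_min_iff]
      tauto
    rw [hpre, hset, Real.volume_Ioc]
    rcases lt_or_ge t 0 with ht | ht
    · have hempty : {ω | G (Y ω) ≤ t} = ∅ := by
        ext ω
        simp only [mem_setOf_eq, mem_empty_iff_false, iff_false, not_le]
        exact lt_of_lt_of_le ht (hG0 _)
      rw [hempty, measure_empty]
      symm
      rw [ENNReal.ofReal_eq_zero]
      have : min t 1 ≤ t := min_le_left _ _
      linarith
    rcases le_or_gt 1 t with ht1 | ht1
    · have huniv : {ω | G (Y ω) ≤ t} = univ := by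
        ext ω
        simp only [mem_setOf_eq, mem_univ, iff_true]
        exact le_trans (hG1 _) ht1
      rw [huniv, measure_univ, min_eq_right ht1]
      norm_num
    · have hmin : min t 1 = t := min_eq_left ht1.le
      rw [hmin, sub_zero]
      have hup : (P {ω | G (Y ω) ≤ t}).toReal ≤ t := by
        by_contra hcon
        push_neg at hcon
        set r := (P {ω | G (Y ω) ≤ t}).toReal with hr
        set c := min ((t + r)/2) ((t + 1)/2) with hc
        have h1 : t < c := lt_min (by linarith) (by linarith)
        have h2 : c < 1 := lt_of_le_of_lt (min_le_right _ _) (by linarith)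
        have h3 := hub t c (lt_of_le_of_lt ht h1) h1 h2
        have h4 : c ≤ (t + r)/2 := min_le_left _ _
        rw [← hr] at h3
        linarith
      have hdown := hlb t ht ht1
      have heq : (P {ω | G (Y ω) ≤ t}).toReal = t := le_antisymm hup hdown
      conv_rhs => rw [← heq]
      rw [ENNReal.ofReal_toReal (measure_ne_top _ _)]
  -- push forward integrals against P.map Y through G
  have hpush : ∀ q : ℝ → ℝ, Measurable q →
      (∫ y, q (G y) ∂(P.map Y)) = ∫ t in (0:ℝ)..1, q t := by
    intro q hq
    have e1 : (∫ y, q (G y) ∂(P.map Y)) = ∫ ω, q (G (Y ω)) ∂P :=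
      integral_map hY.aemeasurable ((hq.comp hGmeas).aestronglyMeasurable)
    have e2 : (∫ t, q t ∂(P.map (fun ω => G (Y ω)))) = ∫ ω, q (G (Y ω)) ∂P :=
      integral_map hGY.aemeasurable hq.aestronglyMeasurable
    rw [e1, ← e2, hν, intervalIntegral.integral_of_le zero_le_one]
  -- integral of indicators
  have hint : ∀ (p : Ω → Prop), MeasurableSet {ω | p ω} →
      ∫ ω, (if p ω then (1:ℝ) else 0) ∂P = (P {ω | p ω}).toReal := by
    intro p hp
    have hfun : (fun ω => if p ω then (1:ℝ) else 0) = {ω | p ω}.indicator (fun _ => 1) := by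
      funext ω
      by_cases h : p ω <;> simp [Set.indicator_apply, h]
    rw [hfun, integral_indicator_const (1:ℝ) hp]
    simp [measureReal_def]
  -- integrability of the indicator of {G ∘ Y ≤ s}
  have hFint : ∀ s : ℝ, Integrable (fun ω => if G (Y ω) ≤ s then (1:ℝ) else 0) P := by
    intro s
    refine Integrable.mono' (integrable_const (1:ℝ))
      ((Measurable.ite (hsetA s) measurable_const measurable_const).aestronglyMeasurable) ?_
    exact Filter.Eventually.of_forall fun ω => by by_cases h : G (Y ω) ≤ s <;> simp [h]
  -- conditional expectation facts
  have hcond_nonneg : ∀ s : ℝ, 0 ≤ᵐ[P]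
      P[fun ω' => if G (Y ω') ≤ s then (1:ℝ) else 0 | MeasurableSpace.comap X inferInstance] :=
    fun s => condExp_nonneg (Filter.Eventually.of_forall fun ω => by
      by_cases h : G (Y ω) ≤ s <;> simp [h])
  have hcond_le_one : ∀ s : ℝ,
      P[fun ω' => if G (Y ω') ≤ s then (1:ℝ) else 0 | MeasurableSpace.comap X inferInstance]
        ≤ᵐ[P] fun _ => (1:ℝ) := by
    intro s
    have h1 := condExp_mono (m := MeasurableSpace.comap X inferInstance) (hFint s)
      (integrable_const (1:ℝ)) (g := fun _ => (1:ℝ))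
      (Filter.Eventually.of_forall fun ω => by by_cases h : G (Y ω) ≤ s <;> simp [h])
    rwa [condExp_const hm (1:ℝ)] at h1
  have hmean : ∀ s : ℝ,
      ∫ ω, (P[fun ω' => if G (Y ω') ≤ s then (1:ℝ) else 0 |
        MeasurableSpace.comap X inferInstance]) ω ∂P = (P {ω | G (Y ω) ≤ s}).toReal := by
    intro s
    rw [integral_condExp hm, hint _ (hsetA s)]
  have hsm : ∀ s : ℝ, AEStronglyMeasurable
      (P[fun ω' => if G (Y ω') ≤ s then (1:ℝ) else 0 |
        MeasurableSpace.comap X inferInstance]) P :=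
    fun s => (stronglyMeasurable_condExp.mono hm).aestronglyMeasurable
  have hprod_int : ∀ s t : ℝ, Integrable (fun ω =>
      (P[fun ω' => if G (Y ω') ≤ s then (1:ℝ) else 0 |
        MeasurableSpace.comap X inferInstance]) ω *
      (P[fun ω' => if G (Y ω') ≤ t then (1:ℝ) else 0 |
        MeasurableSpace.comap X inferInstance]) ω) P := by
    intro s t
    refine Integrable.mono' (integrable_const (1:ℝ)) ((hsm s).mul (hsm t)) ?_
    filter_upwards [hcond_nonneg s, hcond_le_one s, hcond_nonneg t, hcond_le_one t]
      with ω h1 h2 h3 h4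
    simp only [Pi.zero_apply] at h1 h3
    rw [Real.norm_eq_abs, abs_mul, abs_of_nonneg h1, abs_of_nonneg h3]
    calc _ ≤ 1 * 1 := mul_le_mul h2 h4 h3 zero_le_one
      _ = 1 := one_mul 1
  have hψmono : Monotone fun t => ψ t t := by
    intro s t hst
    simp only
    rw [hψ s s, hψ t t]
    refine integral_mono_ae (hprod_int s s) (hprod_int t t) ?_
    have hmono2 := condExp_mono (m := MeasurableSpace.comap X inferInstance) (hFint s) (hFint t)
      (Filter.Eventually.of_forall fun ω => by
        by_cases h1 : G (Y ω) ≤ s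
        · simp [h1, le_trans h1 hst]
        · by_cases h2 : G (Y ω) ≤ t <;> simp [h1, h2])
    filter_upwards [hmono2, hcond_nonneg s] with ω h1 h2
    simp only [Pi.zero_apply] at h2
    exact mul_le_mul h1 h1 h2 (le_trans h2 h1)
  have hψmeas : Measurable fun t => ψ t t := hψmono.measurable
  have hψ_nonneg : ∀ t : ℝ, 0 ≤ ψ t t := by
    intro t
    rw [hψ t t]
    refine integral_nonneg_of_ae ?_
    filter_upwards [hcond_nonneg t] with ω h1
    simp only [Pi.zero_apply] at h1
    exact mul_nonneg h1 h1
  have hψ_le_one : ∀ t : ℝ, ψ t t ≤ 1 := by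
    intro t
    rw [hψ t t]
    have h2 := integral_mono_ae (hprod_int t t) (integrable_const (1:ℝ)) ?_
    · simpa using h2
    · filter_upwards [hcond_nonneg t, hcond_le_one t] with ω h1 h2
      simp only [Pi.zero_apply] at h1
      calc _ ≤ 1 * 1 := mul_le_mul h2 h2 h1 zero_le_one
        _ = 1 := one_mul 1
  -- the variance identity for each fixed y
  have hvar : ∀ y : ℝ,
      variance (P[fun ω => if y ≤ Y ω then (1:ℝ) else 0 |
        MeasurableSpace.comap X inferInstance]) P = ψ (G y) (G y) - (G y)^2 := by
    intro y
    have hnull : P ({ω | G (Y ω) ≤ G y} \ {ω | Y ω < y}) = 0 := by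
      have hsub2 : {ω | Y ω < y} ⊆ {ω | G (Y ω) ≤ G y} :=
        fun ω (hω : Y ω < y) => hGmono hω.le
      rw [measure_diff hsub2 (hsetlt y).nullMeasurableSet (measure_ne_top _ _),
        hFm y, hlt y, tsub_self]
    have hae : (fun ω => if y ≤ Y ω then (1:ℝ) else 0)
        =ᵐ[P] (fun _ => (1:ℝ)) - (fun ω => if G (Y ω) ≤ G y then (1:ℝ) else 0) := by
      have hnm := measure_eq_zero_iff_ae_notMem.mp hnull
      filter_upwards [hnm] with ω hω
      simp only [Pi.sub_apply]
      by_cases hge' : y ≤ Y ω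
      · have hA : ¬ G (Y ω) ≤ G y := fun hA => hω ⟨hA, not_lt.mpr hge'⟩
        simp [hge', hA]
      · have hA : G (Y ω) ≤ G y := hGmono (le_of_lt (not_le.mp hge'))
        simp [hge', hA]
    have hcg := condExp_congr_ae (m := MeasurableSpace.comap X inferInstance) hae
    have hcs := condExp_sub (m := MeasurableSpace.comap X inferInstance)
      (integrable_const (1:ℝ)) (hFint (G y))
    have hcg2 : P[fun ω => if y ≤ Y ω then (1:ℝ) else 0 | MeasurableSpace.comap X inferInstance]
        =ᵐ[P] fun ω => 1 - (P[fun ω' => if G (Y ω') ≤ G y then (1:ℝ) else 0 |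
          MeasurableSpace.comap X inferInstance]) ω := by
      refine hcg.trans (hcs.trans ?_)
      rw [condExp_const hm (1:ℝ)]
      exact Filter.Eventually.of_forall fun ω => rfl
    have hcg_mem : MemLp (P[fun ω => if y ≤ Y ω then (1:ℝ) else 0 |
        MeasurableSpace.comap X inferInstance]) 2 P := by
      refine MemLp.of_bound (stronglyMeasurable_condExp.mono hm).aestronglyMeasurable 1 ?_
      filter_upwards [hcg2, hcond_nonneg (G y), hcond_le_one (G y)] with ω h1 h2 h3
      simp only [Pi.zero_apply] at h2
      rw [h1, Real.norm_eq_abs, abs_le]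
      constructor <;> linarith
    rw [variance_eq_sub hcg_mem]
    have hX1 : ∫ ω, (P[fun ω => if y ≤ Y ω then (1:ℝ) else 0 |
        MeasurableSpace.comap X inferInstance]) ω ∂P = 1 - G y := by
      rw [integral_condExp hm, hint _ (hsetge y), hge y]
    have hX2 : ∫ ω, ((P[fun ω => if y ≤ Y ω then (1:ℝ) else 0 |
        MeasurableSpace.comap X inferInstance]) ^ 2) ω ∂P = 1 - 2 * G y + ψ (G y) (G y) := by
      have he : ((P[fun ω => if y ≤ Y ω then (1:ℝ) else 0 |
          MeasurableSpace.comap X inferInstance]) ^ 2)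
          =ᵐ[P] fun ω => (1 - 2 * (P[fun ω' => if G (Y ω') ≤ G y then (1:ℝ) else 0 |
            MeasurableSpace.comap X inferInstance]) ω) +
            (P[fun ω' => if G (Y ω') ≤ G y then (1:ℝ) else 0 |
              MeasurableSpace.comap X inferInstance]) ω *
            (P[fun ω' => if G (Y ω') ≤ G y then (1:ℝ) else 0 |
              MeasurableSpace.comap X inferInstance]) ω := by
        filter_upwards [hcg2] with ω h1
        simp only [Pi.pow_apply, h1]
        ring
      rw [integral_congr_ae he,
        integral_add (show Integrable (fun ω => 1 - 2 *
            (P[fun ω' => if G (Y ω') ≤ G y then (1:ℝ) else 0 |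
              MeasurableSpace.comap X inferInstance]) ω) P from
            (integrable_const (1:ℝ)).sub (integrable_condExp.const_mul 2))
          (hprod_int (G y) (G y)),
        integral_sub (integrable_const (1:ℝ))
          (show Integrable (fun ω => 2 *
            (P[fun ω' => if G (Y ω') ≤ G y then (1:ℝ) else 0 |
              MeasurableSpace.comap X inferInstance]) ω) P from
            integrable_condExp.const_mul 2),
        MeasureTheory.integral_const_mul, hmean (G y), hFt y, ← hψ (G y) (G y)]
      simp [measure_univ]
    rw [hX1, hX2]
    ring
  -- interval integrability of the diagonal of ψ
  have hψint : IntervalIntegrable (fun t => ψ t t) volume 0 1 := by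
    rw [intervalIntegrable_iff_integrableOn_Ioc_of_le zero_le_one]
    have hc : IntegrableOn (fun _ : ℝ => (1:ℝ)) (Ioc (0:ℝ) 1) volume :=
      integrableOn_const (by rw [Real.volume_Ioc]; exact ENNReal.ofReal_ne_top)
    refine Integrable.mono' hc hψmeas.aestronglyMeasurable ?_
    refine Filter.Eventually.of_forall fun t => ?_
    rw [Real.norm_eq_abs, abs_le]
    exact ⟨by linarith [hψ_nonneg t], hψ_le_one t⟩
  -- the numerator
  have hnum : (∫ y, variance (P[fun ω => if y ≤ Y ω then (1:ℝ) else 0 |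
      MeasurableSpace.comap X inferInstance]) P ∂(P.map Y))
      = (∫ t in (0:ℝ)..1, ψ t t) - 1/3 := by
    simp_rw [hvar]
    rw [hpush (fun t => ψ t t - t^2) (hψmeas.sub (measurable_id.pow_const 2)),
      intervalIntegral.integral_sub hψint (intervalIntegrable_pow 2),
      integral_pow]
    norm_num
  -- the denominator
  have hden : (∫ y, variance (fun ω => if y ≤ Y ω then (1:ℝ) else 0) P ∂(P.map Y)) = 1/6 := by
    have h1 : ∀ y : ℝ, variance (fun ω => if y ≤ Y ω then (1:ℝ) else 0) P = G y - (G y)^2 := by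
      intro y
      have hmem : MemLp (fun ω => if y ≤ Y ω then (1:ℝ) else 0) 2 P := by
        refine MemLp.of_bound ((Measurable.ite (hsetge y) measurable_const
          measurable_const).aestronglyMeasurable) 1 ?_
        exact Filter.Eventually.of_forall fun ω => by by_cases h : y ≤ Y ω <;> simp [h]
      rw [variance_eq_sub hmem]
      have e2 : ((fun ω => if y ≤ Y ω then (1:ℝ) else 0) ^ 2)
          = fun ω => if y ≤ Y ω then (1:ℝ) else 0 := by
        funext ω; by_cases h : y ≤ Y ω <;> simp [h]
      rw [e2, hint _ (hsetge y), hge y]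
      ring
    simp_rw [h1]
    rw [hpush (fun t => t - t^2) (measurable_id.sub (measurable_id.pow_const 2)),
      intervalIntegral.integral_sub intervalIntegrable_id (intervalIntegrable_pow 2),
      integral_id, integral_pow]
    norm_num
  refine ⟨hden, ?_⟩
  rw [hT, hden, hnum]
  rw [div_eq_iff (by norm_num : (1:ℝ)/6 ≠ 0)]
  ring
end

section
/- Let X : Ω → ℝ^d and Y : Ω → ℝ be random variables with G, the distribution function of Y, continuous, and define T(Y,X) := ( ∫_ℝ Var( P(Y ≥ y | X) ) dP^Y(y) ) / ( ∫_ℝ Var( 1_{Y ≥ y} ) dP^Y(y) ). Then: (i) T(Y,X) = 1 if and only if there exists a measurable function f : ℝ^d → ℝ with P(Y = f(X)) = 1; (ii) T(Y,X) = 0 if and only if Y and X are independent. -/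
open MeasureTheory ProbabilityTheory Set Filter
open scoped ENNReal Topology

section Basic
variable {μ : Measure ℝ} [IsProbabilityMeasure μ]

/-- continuity of cdf implies atomless -/
lemma atomless_of_continuous_cdf (hc : Continuous fun y => (μ (Iic y)).toReal) (y : ℝ) :
    μ {y} = 0 := by
  set G : ℝ → ℝ := fun y => (μ (Iic y)).toReal with hGdef
  have hfin : ∀ s : Set ℝ, μ s ≠ ∞ := fun s => measure_ne_top μ s
  have key : ∀ a, a < y → (μ {y}).toReal ≤ G y - G a := by
    intro a ha
    have h1 : μ {y} ≤ μ (Ioc a y) := measure_mono (by simp [ha])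
    have h2 : μ (Ioc a y) = μ (Iic y) - μ (Iic a) := by
      rw [← Iic_sdiff_Iic, measure_diff (Iic_subset_Iic.2 ha.le) nullMeasurableSet_Iic (hfin _)]
    have h3 : (μ (Ioc a y)).toReal = G y - G a := by
      rw [h2, ENNReal.toReal_sub_of_le (measure_mono (Iic_subset_Iic.2 ha.le)) (hfin _)]
    calc (μ {y}).toReal ≤ (μ (Ioc a y)).toReal := ENNReal.toReal_mono (hfin _) h1
    _ = G y - G a := h3
  have hlim : Tendsto (fun a => G y - G a) (𝓝[<] y) (𝓝 (G y - G y)) :=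
    (tendsto_const_nhds.sub ((hc.tendsto y).mono_left nhdsWithin_le_nhds))
  have hle : (μ {y}).toReal ≤ G y - G y := by
    refine ge_of_tendsto hlim ?_
    filter_upwards [self_mem_nhdsWithin] with a ha using key a ha
  have : (μ {y}).toReal = 0 := le_antisymm (by simpa using hle) ENNReal.toReal_nonneg
  exact (ENNReal.toReal_eq_zero_iff _).1 this |>.resolve_right (hfin _)

lemma measure_Ici_toReal (hatom : ∀ y : ℝ, μ {y} = 0) (y : ℝ) :
    (μ (Ici y)).toReal = 1 - (μ (Iic y)).toReal := by
  have h1 : μ (Iio y) = μ (Iic y) := by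
    refine le_antisymm (measure_mono Iio_subset_Iic_self) ?_
    calc μ (Iic y) = μ (Iio y ∪ {y}) := by rw [Iio_union_right]
    _ ≤ μ (Iio y) + μ {y} := measure_union_le _ _
    _ = μ (Iio y) := by rw [hatom y, add_zero]
  have h2 : μ (Ici y) = 1 - μ (Iio y) := by
    rw [← compl_Iio, measure_compl measurableSet_Iio (measure_ne_top μ _), measure_univ]
  rw [h2, h1, ENNReal.toReal_sub_of_le prob_le_one (by simp)]
  simp

end Basic

section VarCongr
variable {Ω : Type*} {m0 : MeasurableSpace Ω} {P : Measure Ω}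

lemma variance_congr_ae {f g : Ω → ℝ} (h : f =ᵐ[P] g) : variance f P = variance g P := by
  have hi : P[f] = P[g] := integral_congr_ae h
  rw [variance, variance, evariance, evariance]
  congr 1
  refine lintegral_congr_ae ?_
  filter_upwards [h] with ω hω
  rw [hω, hi]

lemma variance_const' [IsProbabilityMeasure P] (c : ℝ) : variance (fun _ : Ω => c) P = 0 := by
  have h2 : MemLp (fun _ : Ω => c) 2 P := memLp_const c
  rw [variance_eq_sub h2]
  simp [integral_const]

end VarCongr

section Bern
variable {Ω : Type*} {m0 : MeasurableSpace Ω} {P : Measure Ω} [IsProbabilityMeasure P]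

lemma variance_indicator' {A : Set Ω} (hA : MeasurableSet A) :
    variance (A.indicator fun _ => (1:ℝ)) P = (1 - (P A).toReal) * (P A).toReal := by
  set I := A.indicator fun _ : Ω => (1:ℝ) with hIdef
  have hIb : ∀ ω, |I ω| ≤ 1 := by
    intro ω; by_cases h : ω ∈ A <;> simp [hIdef, Set.indicator_apply, h]
  have hIm : Measurable I := measurable_const.indicator hA
  have hI2 : MemLp I 2 P :=
    MemLp.of_bound hIm.aestronglyMeasurable 1 (Filter.Eventually.of_forall hIb)
  have hsq : I ^ 2 = I := by
    funext ω; by_cases h : ω ∈ A <;> simp [hIdef, Set.indicator_apply, h]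
  have hint : P[I] = (P A).toReal := by
    rw [hIdef, integral_indicator_const (1:ℝ) hA]; simp; rfl
  rw [variance_eq_sub hI2, hsq, hint]
  ring

end Bern

section Decomp
variable {Ω : Type*} {m0 : MeasurableSpace Ω} {P : Measure Ω} [IsProbabilityMeasure P]
  {m : MeasurableSpace Ω}

lemma variance_condexp_add (hm : m ≤ m0) {I : Ω → ℝ} (hI : Measurable[m0] I)
    (hIb : ∀ ω, |I ω| ≤ 1) :
    variance I P = variance (P[I|m]) P + ∫ ω, (I ω - (P[I|m]) ω)^2 ∂P := by
  haveI : SigmaFinite (P.trim hm) := by infer_instance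
  set C := P[I|m] with hCdef
  have hCsm : StronglyMeasurable[m] C := stronglyMeasurable_condExp
  have hCsm0 : AEStronglyMeasurable[m0] C P := (hCsm.mono hm).aestronglyMeasurable
  have hIsm : AEStronglyMeasurable[m0] I P := hI.aestronglyMeasurable
  have hIint : Integrable I P :=
    (integrable_const (1:ℝ)).mono' hIsm (Filter.Eventually.of_forall (by simpa using hIb))
  have hCbound : ∀ᵐ ω ∂P, |C ω| ≤ 1 := by
    have := ae_bdd_condExp_of_ae_bdd (μ := P) (m := m) (R := 1) (f := I)
      (Filter.Eventually.of_forall (by simpa using hIb))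
    simpa using this
  have hCint : Integrable C P := integrable_condExp
  have hC2 : MemLp C 2 P := MemLp.of_bound hCsm0 1 hCbound
  have hI2 : MemLp I 2 P :=
    MemLp.of_bound hIsm 1 (Filter.Eventually.of_forall hIb)
  have hCI_int : Integrable (fun ω => C ω * I ω) P := by
    refine (integrable_const (1:ℝ)).mono' (hCsm0.mul hIsm) ?_
    filter_upwards [hCbound] with ω hω
    calc ‖C ω * I ω‖ = |C ω| * |I ω| := by rw [norm_mul]; rfl
    _ ≤ 1 * 1 := mul_le_mul hω (hIb ω) (abs_nonneg _) zero_le_one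
    _ = 1 := by ring
  have hCC_int : Integrable (fun ω => C ω * C ω) P := by
    refine (integrable_const (1:ℝ)).mono' (hCsm0.mul hCsm0) ?_
    filter_upwards [hCbound] with ω hω
    calc ‖C ω * C ω‖ = |C ω| * |C ω| := by rw [norm_mul]; rfl
    _ ≤ 1 * 1 := mul_le_mul hω hω (abs_nonneg _) zero_le_one
    _ = 1 := by ring
  have hII_int : Integrable (fun ω => I ω * I ω) P := by
    refine (integrable_const (1:ℝ)).mono' (hIsm.mul hIsm) ?_
    refine Filter.Eventually.of_forall fun ω => ?_
    calc ‖I ω * I ω‖ = |I ω| * |I ω| := by rw [norm_mul]; rfl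
    _ ≤ 1 * 1 := mul_le_mul (hIb ω) (hIb ω) (abs_nonneg _) zero_le_one
    _ = 1 := by ring
  -- pull-out: ∫ C·I = ∫ C·C
  have hpull : ∫ ω, C ω * I ω ∂P = ∫ ω, C ω * C ω ∂P := by
    have h1 : P[C * I|m] =ᵐ[P] C * P[I|m] :=
      condExp_mul_of_stronglyMeasurable_left hCsm (by exact hCI_int) hIint
    calc ∫ ω, C ω * I ω ∂P = ∫ ω, (C * I) ω ∂P := rfl
    _ = ∫ ω, (P[C * I|m]) ω ∂P := (integral_condExp hm).symm
    _ = ∫ ω, (C * P[I|m]) ω ∂P := integral_congr_ae h1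
    _ = ∫ ω, C ω * C ω ∂P := rfl
  have hmean : P[C] = P[I] := integral_condExp hm
  have hsplit : ∫ ω, (I ω - C ω)^2 ∂P
      = ∫ ω, I ω * I ω ∂P - 2 * ∫ ω, C ω * I ω ∂P + ∫ ω, C ω * C ω ∂P := by
    have h2 : (fun ω => (I ω - C ω)^2)
        = fun ω => (I ω * I ω - 2 * (C ω * I ω)) + C ω * C ω := by
      funext ω; ring
    have hCI2 : Integrable (fun ω => 2 * (C ω * I ω)) P := hCI_int.const_mul 2
    rw [h2]
    rw [integral_add (f := fun ω => I ω * I ω - 2 * (C ω * I ω))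
      (g := fun ω => C ω * C ω) (hII_int.sub hCI2) hCC_int]
    rw [integral_sub (f := fun ω => I ω * I ω) (g := fun ω => 2 * (C ω * I ω)) hII_int hCI2,
      integral_const_mul]
  have hvI : variance I P = ∫ ω, I ω * I ω ∂P - (P[I])^2 := by
    rw [variance_eq_sub hI2]
    congr 1
    refine integral_congr_ae (Filter.Eventually.of_forall fun ω => ?_)
    simp [pow_two]
  have hvC : variance C P = ∫ ω, C ω * C ω ∂P - (P[I])^2 := by
    rw [variance_eq_sub hC2, hmean]
    congr 1
    refine integral_congr_ae (Filter.Eventually.of_forall fun ω => ?_)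
    simp [pow_two]
  rw [hvI, hvC, hsplit, hpull]
  ring

lemma variance_condexp_le (hm : m ≤ m0) {I : Ω → ℝ} (hI : Measurable[m0] I)
    (hIb : ∀ ω, |I ω| ≤ 1) : variance (P[I|m]) P ≤ variance I P := by
  rw [variance_condexp_add hm hI hIb]
  have : 0 ≤ ∫ ω, (I ω - (P[I|m]) ω)^2 ∂P := integral_nonneg fun ω => sq_nonneg _
  linarith

lemma ae_eq_condexp_of_variance_eq (hm : m ≤ m0) {I : Ω → ℝ} (hI : Measurable[m0] I)
    (hIb : ∀ ω, |I ω| ≤ 1) (hvar : variance (P[I|m]) P = variance I P) :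
    I =ᵐ[P] P[I|m] := by
  haveI : SigmaFinite (P.trim hm) := by infer_instance
  have h0 : ∫ ω, (I ω - (P[I|m]) ω)^2 ∂P = 0 := by
    have h1 := variance_condexp_add (P := P) hm hI hIb
    rw [← hvar] at h1
    linarith
  set C := P[I|m] with hCdef
  have hCsm0 : AEStronglyMeasurable[m0] C P :=
    ((stronglyMeasurable_condExp (f := I)).mono hm).aestronglyMeasurable
  have hCbound : ∀ᵐ ω ∂P, |C ω| ≤ 1 := by
    have := ae_bdd_condExp_of_ae_bdd (μ := P) (m := m) (R := 1) (f := I)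
      (Filter.Eventually.of_forall (by simpa using hIb))
    simpa using this
  have hint : Integrable (fun ω => (I ω - C ω)^2) P := by
    have hb : ∀ᵐ ω ∂P, ‖(I ω - C ω)^2‖ ≤ 4 := by
      filter_upwards [hCbound] with ω hω
      have h1 : |I ω - C ω| ≤ 2 := (abs_sub _ _).trans (by linarith [hIb ω])
      calc ‖(I ω - C ω)^2‖ = |I ω - C ω|^2 := by
            rw [Real.norm_eq_abs, abs_of_nonneg (sq_nonneg _), sq_abs]
      _ ≤ 2^2 := by nlinarith [abs_nonneg (I ω - C ω)]
      _ = 4 := by norm_num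
    have hm2 : AEStronglyMeasurable[m0] (fun ω => (I ω - C ω)^2) P := by
      have := (hI.aestronglyMeasurable.sub hCsm0).mul (hI.aestronglyMeasurable.sub hCsm0)
      refine this.congr (Filter.Eventually.of_forall fun ω => ?_)
      simp [pow_two]
    exact (integrable_const (4:ℝ)).mono' hm2 hb
  have hz : (fun ω => (I ω - C ω)^2) =ᵐ[P] 0 :=
    (integral_eq_zero_iff_of_nonneg (fun ω => sq_nonneg _) hint).1 h0
  filter_upwards [hz] with ω hω
  have : (I ω - C ω)^2 = 0 := hω
  have := pow_eq_zero_iff (n := 2) (by norm_num) |>.1 this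
  linarith [sub_eq_zero.1 this]

end Decomp

section Kern
variable {Ω : Type*} {m0 : MeasurableSpace Ω} {P : Measure Ω} [IsProbabilityMeasure P]
  {β : Type*} [MeasurableSpace β] [StandardBorelSpace β] [Nonempty β]
  {X : Ω → β} {Y : Ω → ℝ}

lemma kernel_joint_measurable (hX : Measurable X) (hY : Measurable Y) :
    Measurable fun p : ℝ × Ω => (condDistrib Y X P (X p.2) (Ici p.1)).toReal := by
  set κ := condDistrib Y X P with hκ
  set η : Kernel (ℝ × Ω) ℝ := κ.comap (fun p => X p.2) (hX.comp measurable_snd) with hη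
  have ht : MeasurableSet {q : (ℝ × Ω) × ℝ | q.1.1 ≤ q.2} :=
    measurableSet_le (measurable_fst.fst) measurable_snd
  have h1 : Measurable fun p : ℝ × Ω => η p (Prod.mk p ⁻¹' {q : (ℝ × Ω) × ℝ | q.1.1 ≤ q.2}) :=
    Kernel.measurable_kernel_prodMk_left ht
  have h2 : ∀ p : ℝ × Ω, (Prod.mk p ⁻¹' {q : (ℝ × Ω) × ℝ | q.1.1 ≤ q.2}) = Ici p.1 := by
    intro p; ext z; simp [Set.mem_Ici]
  have h3 : Measurable fun p : ℝ × Ω => κ (X p.2) (Ici p.1) := by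
    have := h1
    simp_rw [h2, hη, Kernel.comap_apply] at this
    exact this
  exact ENNReal.measurable_toReal.comp h3

lemma kernel_section_measurable (hX : Measurable X) (y : ℝ) :
    Measurable fun ω => (condDistrib Y X P (X ω) (Ici y)).toReal :=
  ENNReal.measurable_toReal.comp ((Kernel.measurable_coe _ measurableSet_Ici).comp hX)

lemma kernel_le_one (x : β) (s : Set ℝ) : (condDistrib Y X P x s).toReal ≤ 1 := by
  have h := prob_le_one (μ := condDistrib Y X P x) (s := s)
  calc (condDistrib Y X P x s).toReal ≤ (1 : ℝ≥0∞).toReal := ENNReal.toReal_mono (by simp) h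
  _ = 1 := by simp

lemma kernel_ae_eq_condexp (hX : Measurable X) (hY : Measurable Y) (y : ℝ) :
    (fun ω => (condDistrib Y X P (X ω) (Ici y)).toReal)
      =ᵐ[P] P[fun ω => if y ≤ Y ω then (1:ℝ) else 0|MeasurableSpace.comap X inferInstance] := by
  have h := condDistrib_ae_eq_condExp (μ := P) hX hY (measurableSet_Ici (a := y))
  have h2 : ((Y ⁻¹' Ici y).indicator (fun _ => (1:ℝ))) = fun ω => if y ≤ Y ω then (1:ℝ) else 0 := by
    classical
    funext ω
    rw [Set.indicator_apply]
    by_cases h : y ≤ Y ω <;> simp [h, Set.mem_Ici]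
  rw [h2] at h
  exact h

end Kern

section Kern2
set_option linter.unusedSectionVars false
variable {Ω : Type*} {m0 : MeasurableSpace Ω} {P : Measure Ω} [IsProbabilityMeasure P]
  {β : Type*} [MeasurableSpace β] [StandardBorelSpace β] [Nonempty β]
  {X : Ω → β} {Y : Ω → ℝ}

lemma memLp2_kernel (hX : Measurable X) (y : ℝ) :
    MemLp (fun ω => (condDistrib Y X P (X ω) (Ici y)).toReal) 2 P := by
  refine MemLp.of_bound (kernel_section_measurable hX y).aestronglyMeasurable 1
    (Filter.Eventually.of_forall fun ω => ?_)
  rw [Real.norm_eq_abs, abs_of_nonneg ENNReal.toReal_nonneg]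
  exact kernel_le_one _ _

lemma measurable_variance_kernel (hX : Measurable X) (hY : Measurable Y) :
    Measurable fun y : ℝ =>
      variance (fun ω => (condDistrib Y X P (X ω) (Ici y)).toReal) P := by
  have hfun : (fun y : ℝ =>
      variance (fun ω => (condDistrib Y X P (X ω) (Ici y)).toReal) P)
      = fun y => (∫ ω, ((condDistrib Y X P (X ω) (Ici y)).toReal)^2 ∂P)
        - (∫ ω, (condDistrib Y X P (X ω) (Ici y)).toReal ∂P)^2 := by
    funext y
    rw [variance_eq_sub (memLp2_kernel hX y)]
    congr 1
  rw [hfun]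
  have hj := kernel_joint_measurable (P := P) hX hY
  have h1 : StronglyMeasurable fun p : ℝ × Ω =>
      ((condDistrib Y X P (X p.2) (Ici p.1)).toReal)^2 := (hj.pow_const 2).stronglyMeasurable
  have h2 : StronglyMeasurable fun p : ℝ × Ω =>
      (condDistrib Y X P (X p.2) (Ici p.1)).toReal := hj.stronglyMeasurable
  have h1' := h1.integral_prod_right' (ν := P)
  have h2' := h2.integral_prod_right' (ν := P)
  exact (h1'.measurable.sub ((h2'.measurable).pow_const 2))

end Kern2

section Ext

lemma measure_ext_of_ae_Ici {μ ν₁ ν₂ : Measure ℝ} [IsFiniteMeasure μ] [IsFiniteMeasure ν₁]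
    [IsFiniteMeasure ν₂] (h1 : ν₁ ≤ μ) (h2 : ν₂ ≤ μ) (hatom : ∀ y : ℝ, μ {y} = 0)
    {S : Set ℝ} (hS : μ Sᶜ = 0) (hag : ∀ y ∈ S, ν₁ (Ici y) = ν₂ (Ici y)) : ν₁ = ν₂ := by
  have hν₁ : ∀ s : Set ℝ, ν₁ s ≤ μ s := fun s => Measure.le_iff'.1 h1 s
  have hν₂ : ∀ s : Set ℝ, ν₂ s ≤ μ s := fun s => Measure.le_iff'.1 h2 s
  -- main step for points approached by positive measure from the right
  have H : ∀ y : ℝ, (∀ ε, 0 < ε → μ (Ioo y (y+ε)) ≠ 0) → ν₁ (Ici y) = ν₂ (Ici y) := by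
    intro y hy
    have hSne : ∀ n : ℕ, (S ∩ Ioo y (y + 1/(n+1))).Nonempty := by
      intro n
      by_contra h
      rw [Set.not_nonempty_iff_eq_empty] at h
      have hsub : Ioo y (y + 1/(n+1)) ⊆ Sᶜ := by
        intro z hz
        intro hzS
        exact Set.eq_empty_iff_forall_notMem.1 h z ⟨hzS, hz⟩
      exact hy (1/(n+1)) (by positivity) (measure_mono_null hsub hS)
    choose u hu using hSne
    have huS : ∀ n, u n ∈ S := fun n => (hu n).1
    have huy : ∀ n, y < u n := fun n => (hu n).2.1
    have hub : ∀ n, u n < y + 1/(n+1) := fun n => (hu n).2.2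
    set e : ℕ → ℝ≥0∞ := fun n => μ (Ioc y (y + 1/(n+1))) with he
    have hinter : ⋂ n : ℕ, Ioc y (y + 1/(n+1)) = ∅ := by
      ext z
      simp only [Set.mem_iInter, Set.mem_Ioc, Set.mem_empty_iff_false, iff_false]
      intro hz
      obtain ⟨n, hn⟩ := exists_nat_gt (1/(z - y))
      have hzy : 0 < z - y := sub_pos.2 (hz 0).1
      have h1n : 1/((n:ℝ)+1) < z - y := by
        rw [div_lt_iff₀ (by positivity)]
        have : 1/(z-y) < (n:ℝ) + 1 := hn.trans (by linarith)
        rw [div_lt_iff₀ hzy] at this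
        linarith [mul_comm (z-y) ((n:ℝ)+1)]
      have := (hz n).2
      linarith
    have htend : Filter.Tendsto e Filter.atTop (𝓝 0) := by
      have h0 := tendsto_measure_iInter_atTop (μ := μ)
        (s := fun n : ℕ => Ioc y (y + 1/(n+1)))
        (fun n => measurableSet_Ioc.nullMeasurableSet)
        (fun a b hab => Set.Ioc_subset_Ioc le_rfl (by
          have : 1/((b:ℝ)+1) ≤ 1/((a:ℝ)+1) := by
            apply one_div_le_one_div_of_le (by positivity)
            exact_mod_cast by omega
          linarith))
        ⟨0, measure_ne_top μ _⟩
      rwa [hinter, measure_empty] at h0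
    have key : ∀ (ν : Measure ℝ), (∀ s, ν s ≤ μ s) → ∀ n,
        ν (Ici y) ≤ ν (Ici (u n)) + e n := by
      intro ν hν n
      have hsub : Ici y ⊆ {y} ∪ (Ioc y (y + 1/(n+1)) ∪ Ici (u n)) := by
        intro z hz
        rcases eq_or_lt_of_le (Set.mem_Ici.1 hz) with h | h
        · exact Or.inl (by simp [h.symm])
        · rcases lt_or_ge z (u n) with h' | h'
          · exact Or.inr (Or.inl ⟨h, le_of_lt (h'.trans (hub n))⟩)
          · exact Or.inr (Or.inr h')
      calc ν (Ici y) ≤ ν ({y} ∪ (Ioc y (y + 1/(n+1)) ∪ Ici (u n))) := measure_mono hsub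
      _ ≤ ν {y} + (ν (Ioc y (y + 1/(n+1))) + ν (Ici (u n))) :=
          le_trans (measure_union_le _ _) (by gcongr; exact measure_union_le _ _)
      _ ≤ 0 + (e n + ν (Ici (u n))) := by
          gcongr
          · exact le_trans (hν _) (le_of_eq (hatom y))
          · exact hν _
      _ = ν (Ici (u n)) + e n := by rw [zero_add, add_comm]
    have haux : ∀ (νa νb : Measure ℝ), IsFiniteMeasure νb → (∀ s, νa s ≤ μ s) →
        (∀ n, νa (Ici (u n)) = νb (Ici (u n))) → νa (Ici y) ≤ νb (Ici y) := by
      intro νa νb hfb hνa hab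
      have hle : ∀ n, νa (Ici y) ≤ νb (Ici y) + e n := by
        intro n
        calc νa (Ici y) ≤ νa (Ici (u n)) + e n := key νa hνa n
        _ = νb (Ici (u n)) + e n := by rw [hab n]
        _ ≤ νb (Ici y) + e n :=
            add_le_add_left (measure_mono (Ici_subset_Ici.2 (huy n).le)) _
      have htend' : Filter.Tendsto (fun n => νb (Ici y) + e n) Filter.atTop
          (𝓝 (νb (Ici y) + 0)) := Filter.Tendsto.const_add _ htend
      rw [add_zero] at htend'
      exact ge_of_tendsto htend' (Filter.Eventually.of_forall hle)
    refine le_antisymm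
      (haux ν₁ ν₂ inferInstance hν₁ fun n => hag (u n) (huS n))
      (haux ν₂ ν₁ inferInstance hν₂ fun n => (hag (u n) (huS n)).symm)
  -- now all points
  refine MeasureTheory.Measure.ext_of_Ici ν₁ ν₂ fun y => ?_
  by_cases hcase : ∀ ε, 0 < ε → μ (Ioo y (y+ε)) ≠ 0
  · exact H y hcase
  push_neg at hcase
  obtain ⟨ε, hε, hε0⟩ := hcase
  set R : Set ℝ := {t | y < t ∧ μ (Ioo y t) = 0} with hR
  have hRne : (y + ε) ∈ R := ⟨by linarith, hε0⟩
  by_cases hbdd : BddAbove R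
  · set c := sSup R with hc
    have hyc : y < c := lt_of_lt_of_le (by linarith : y < y + ε) (le_csSup hbdd hRne)
    have hμyc : μ (Ioo y c) = 0 := by
      have hex : ∀ n : ℕ, ∃ t ∈ R, c - 1/(n+1) < t :=
        fun n => exists_lt_of_lt_csSup ⟨_, hRne⟩ (by
          have : (0:ℝ) < 1/(n+1) := by positivity
          linarith)
      choose t ht using hex
      refine measure_mono_null (fun z hz => ?_) (measure_iUnion_null fun n => (ht n).1.2)
      obtain ⟨hz1, hz2⟩ := hz
      obtain ⟨n, hn⟩ := exists_nat_gt (1/(c - z))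
      have hcz : 0 < c - z := sub_pos.2 hz2
      have h1n : 1/((n:ℝ)+1) < c - z := by
        rw [div_lt_iff₀ (by positivity)]
        have : 1/(c-z) < (n:ℝ) + 1 := hn.trans (by linarith)
        rw [div_lt_iff₀ hcz] at this
        linarith [mul_comm (c-z) ((n:ℝ)+1)]
      have hzt : z < t n := by
        have := (ht n).2
        linarith
      exact Set.mem_iUnion.2 ⟨n, ⟨hz1, hzt⟩⟩
    have hc_right : ∀ δ, 0 < δ → μ (Ioo c (c+δ)) ≠ 0 := by
      intro δ hδ hcontra
      have hmem : (c + δ) ∈ R := by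
        refine ⟨by linarith, ?_⟩
        have hsub : Ioo y (c+δ) ⊆ Ioo y c ∪ ({c} ∪ Ioo c (c+δ)) := by
          intro z hz
          rcases lt_trichotomy z c with h | h | h
          · exact Or.inl ⟨hz.1, h⟩
          · exact Or.inr (Or.inl (by simp [h]))
          · exact Or.inr (Or.inr ⟨h, hz.2⟩)
        refine measure_mono_null hsub ?_
        refine measure_union_null hμyc (measure_union_null (hatom c) hcontra)
      have := le_csSup hbdd hmem
      linarith
    have hIcic : ν₁ (Ici c) = ν₂ (Ici c) := H c hc_right
    have hsame : ∀ (ν : Measure ℝ), (∀ s, ν s ≤ μ s) → ν (Ici y) = ν (Ici c) := by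
      intro ν hν
      refine le_antisymm ?_ (measure_mono (Ici_subset_Ici.2 hyc.le))
      have hsub : Ici y ⊆ {y} ∪ (Ioo y c ∪ Ici c) := by
        intro z hz
        rcases eq_or_lt_of_le (Set.mem_Ici.1 hz) with h | h
        · exact Or.inl (by simp [h.symm])
        · rcases lt_or_ge z c with h' | h'
          · exact Or.inr (Or.inl ⟨h, h'⟩)
          · exact Or.inr (Or.inr h')
      calc ν (Ici y) ≤ ν ({y} ∪ (Ioo y c ∪ Ici c)) := measure_mono hsub
      _ ≤ ν {y} + (ν (Ioo y c) + ν (Ici c)) :=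
          le_trans (measure_union_le _ _) (by gcongr; exact measure_union_le _ _)
      _ ≤ 0 + (0 + ν (Ici c)) := by
          gcongr
          · exact le_trans (hν _) (le_of_eq (hatom y))
          · exact le_trans (hν _) (le_of_eq hμyc)
      _ = ν (Ici c) := by simp
    rw [hsame ν₁ hν₁, hsame ν₂ hν₂, hIcic]
  · -- R unbounded: everything to the right of y is null
    have hex : ∀ n : ℕ, ∃ t ∈ R, (n:ℝ) < t := by
      intro n
      rcases not_bddAbove_iff.1 hbdd (n:ℝ) with ⟨t, htR, htn⟩
      exact ⟨t, htR, htn⟩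
    choose t ht using hex
    have hIoi : μ (Ioi y) = 0 := by
      refine measure_mono_null (fun z hz => ?_) (measure_iUnion_null fun n => (ht n).1.2)
      obtain ⟨n, hn⟩ := exists_nat_gt z
      exact Set.mem_iUnion.2 ⟨n, ⟨hz, hn.trans (ht n).2⟩⟩
    have hz : ∀ (ν : Measure ℝ), (∀ s, ν s ≤ μ s) → ν (Ici y) = 0 := by
      intro ν hν
      have hsub : Ici y ⊆ {y} ∪ Ioi y := by
        intro z hz
        rcases eq_or_lt_of_le (Set.mem_Ici.1 hz) with h | h
        · exact Or.inl (by simp [h.symm])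
        · exact Or.inr h
      refine le_antisymm ?_ zero_le
      calc ν (Ici y) ≤ ν {y} + ν (Ioi y) := le_trans (measure_mono hsub) (measure_union_le _ _)
      _ ≤ 0 + 0 := by
          gcongr
          · exact le_trans (hν _) (le_of_eq (hatom y))
          · exact le_trans (hν _) (le_of_eq hIoi)
      _ = 0 := by simp
    rw [hz ν₁ hν₁, hz ν₂ hν₂]

end Ext

section Wpos
variable {μ : Measure ℝ} [IsProbabilityMeasure μ]

lemma W_integrable (hGc : Continuous fun y => (μ (Iic y)).toReal) :
    Integrable (fun y => (1 - (μ (Iic y)).toReal) * (μ (Iic y)).toReal) μ := by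
  set G : ℝ → ℝ := fun y => (μ (Iic y)).toReal with hGdef
  have hWc : Continuous fun y => (1 - G y) * G y := ((continuous_const.sub hGc).mul hGc)
  refine (integrable_const (1:ℝ)).mono' hWc.aestronglyMeasurable ?_
  refine Filter.Eventually.of_forall fun y => ?_
  have h0 : 0 ≤ G y := ENNReal.toReal_nonneg
  have h1 : G y ≤ 1 := by
    have := prob_le_one (μ := μ) (s := Iic y)
    calc G y ≤ (1:ℝ≥0∞).toReal := ENNReal.toReal_mono (by simp) this
    _ = 1 := by simp
  rw [Real.norm_eq_abs, abs_of_nonneg (by nlinarith)]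
  nlinarith

lemma W_integral_pos (hGc : Continuous fun y => (μ (Iic y)).toReal) :
    3/32 ≤ ∫ y, (1 - (μ (Iic y)).toReal) * (μ (Iic y)).toReal ∂μ := by
  set G : ℝ → ℝ := fun y => (μ (Iic y)).toReal with hGdef
  have hcdf : ∀ y, cdf μ y = G y := fun y => cdf_eq_real μ y
  have hmono : Monotone G :=
    fun a b hab => ENNReal.toReal_mono (measure_ne_top μ _)
      (measure_mono (Iic_subset_Iic.2 hab))
  have h0 : ∀ y, 0 ≤ G y := fun y => ENNReal.toReal_nonneg
  have h1 : ∀ y, G y ≤ 1 := by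
    intro y
    have := prob_le_one (μ := μ) (s := Iic y)
    calc G y ≤ (1:ℝ≥0∞).toReal := ENNReal.toReal_mono (by simp) this
    _ = 1 := by simp
  have htop : Filter.Tendsto G Filter.atTop (𝓝 1) := by
    have := tendsto_cdf_atTop (μ := μ)
    simpa only [funext hcdf] using this
  have hbot : Filter.Tendsto G Filter.atBot (𝓝 0) := by
    have := tendsto_cdf_atBot (μ := μ)
    simpa only [funext hcdf] using this
  obtain ⟨y₁, hy₁⟩ := (hbot.eventually (gt_mem_nhds (by norm_num : (0:ℝ) < 1/4))).exists
  obtain ⟨y₂', hy₂'⟩ := (htop.eventually (lt_mem_nhds (by norm_num : (3:ℝ)/4 < 1))).exists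
  set y₂ := max y₂' y₁ with hy₂def
  have hy₂ : 3/4 < G y₂ := lt_of_lt_of_le hy₂' (hmono (le_max_left _ _))
  have hy₁₂ : y₁ ≤ y₂ := le_max_right _ _
  have hIVT := intermediate_value_Icc hy₁₂ hGc.continuousOn
  obtain ⟨a, ha, hGa⟩ : ∃ a ∈ Icc y₁ y₂, G a = 1/4 := by
    have : (1/4 : ℝ) ∈ Icc (G y₁) (G y₂) := ⟨hy₁.le, by linarith⟩
    obtain ⟨a, ha1, ha2⟩ := hIVT this
    exact ⟨a, ha1, ha2⟩
  have hIVT2 := intermediate_value_Icc ha.2 hGc.continuousOn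
  obtain ⟨b, hb, hGb⟩ : ∃ b ∈ Icc a y₂, G b = 3/4 := by
    have : (3/4 : ℝ) ∈ Icc (G a) (G y₂) := ⟨by rw [hGa]; norm_num, by linarith⟩
    obtain ⟨b, hb1, hb2⟩ := hIVT2 this
    exact ⟨b, hb1, hb2⟩
  have hab : a ≤ b := hb.1
  have hIoc : (μ (Ioc a b)).toReal = 1/2 := by
    have h2 : μ (Ioc a b) = μ (Iic b) - μ (Iic a) := by
      rw [← Iic_sdiff_Iic, measure_diff (Iic_subset_Iic.2 hab) nullMeasurableSet_Iic
        (measure_ne_top μ _)]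
    rw [h2, ENNReal.toReal_sub_of_le (measure_mono (Iic_subset_Iic.2 hab)) (measure_ne_top μ _)]
    show G b - G a = 1/2
    rw [hGa, hGb]; norm_num
  have hle : ∀ y, (Ioc a b).indicator (fun _ => (3/16 : ℝ)) y ≤ (1 - G y) * G y := by
    intro y
    rw [Set.indicator_apply]
    split_ifs with h
    · have hGy1 : 1/4 ≤ G y := hGa ▸ hmono h.1.le
      have hGy2 : G y ≤ 3/4 := hGb ▸ hmono h.2
      nlinarith
    · nlinarith [h0 y, h1 y]
  have hind_int : Integrable ((Ioc a b).indicator (fun _ => (3/16 : ℝ))) μ :=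
    (integrable_const _).indicator measurableSet_Ioc
  calc (3/32 : ℝ) = 3/16 * (μ (Ioc a b)).toReal := by rw [hIoc]; norm_num
  _ = ∫ y, (Ioc a b).indicator (fun _ => (3/16 : ℝ)) y ∂μ := by
      rw [integral_indicator_const _ measurableSet_Ioc]
      simp [mul_comm]; rfl
  _ ≤ ∫ y, (1 - G y) * G y ∂μ := integral_mono hind_int (W_integrable hGc) hle

end Wpos

section Construct
set_option linter.unusedSectionVars false
variable {Ω : Type*} {m0 : MeasurableSpace Ω} {P : Measure Ω} [IsProbabilityMeasure P]
  {β : Type*} [MeasurableSpace β] [StandardBorelSpace β] [Nonempty β]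
  {X : Ω → β} {Y : Ω → ℝ}

lemma exists_factor_of_ae_kernel (hX : Measurable X) (hY : Measurable Y)
    (hatom : ∀ c : ℝ, P.map Y {c} = 0) {S : Set ℝ} (hS : P.map Y Sᶜ = 0)
    (hSgood : ∀ y ∈ S, ∀ᵐ ω ∂P,
      (condDistrib Y X P (X ω) (Ici y)).toReal = (if y ≤ Y ω then (1:ℝ) else 0)) :
    ∃ f : β → ℝ, Measurable f ∧ ∀ᵐ ω ∂P, Y ω = f (X ω) := by
  classical
  set μ := P.map Y with hμ
  haveI : IsProbabilityMeasure μ := Measure.isProbabilityMeasure_map hY.aemeasurable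
  -- S is nonempty
  have hSnon : S.Nonempty := by
    by_contra h
    rw [Set.not_nonempty_iff_eq_empty] at h
    rw [h, Set.compl_empty] at hS
    exact (IsProbabilityMeasure.ne_zero μ) (by simpa [measure_univ] using hS)
  obtain ⟨y₀, hy₀⟩ := hSnon
  -- choice of representative points
  set E : ℚ × ℚ → ℝ := fun q =>
    if h : (S ∩ Ioc (q.1:ℝ) q.2).Nonempty then h.choose else y₀ with hE
  have hES : ∀ q, E q ∈ S := by
    intro q
    simp only [hE]
    split_ifs with h
    · exact h.choose_spec.1
    · exact hy₀
  have hEIoc : ∀ q : ℚ × ℚ, μ (Ioc (q.1:ℝ) q.2) ≠ 0 → E q ∈ Ioc (q.1:ℝ) (q.2:ℝ) := by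
    intro q hq
    have hne : (S ∩ Ioc (q.1:ℝ) q.2).Nonempty := by
      by_contra h
      rw [Set.not_nonempty_iff_eq_empty] at h
      refine hq (measure_mono_null (fun z hz => ?_) hS)
      intro hzS
      exact Set.eq_empty_iff_forall_notMem.1 h z ⟨hzS, hz⟩
    simp only [hE]
    rw [dif_pos hne]
    exact hne.choose_spec.2
  -- the candidate functions
  set g : ℚ × ℚ → β → ℝ := fun q x =>
    if (condDistrib Y X P x (Ici (E q))).toReal = 1 then Real.arctan (E q) else -2 with hg
  have hg_meas : ∀ q, Measurable (g q) := by
    intro q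
    have hv : Measurable fun x => (condDistrib Y X P x (Ici (E q))).toReal :=
      ENNReal.measurable_toReal.comp (Kernel.measurable_coe _ measurableSet_Ici)
    exact Measurable.ite (hv (measurableSet_singleton 1)) measurable_const measurable_const
  set F : β → ℝ := fun x => ⨆ q : ℚ × ℚ, g q x with hF
  have hF_meas : Measurable F := Measurable.iSup fun q => hg_meas q
  refine ⟨fun x => Real.sin (F x) / Real.cos (F x),
    (Real.continuous_sin.measurable.comp hF_meas).div
      (Real.continuous_cos.measurable.comp hF_meas), ?_⟩
  -- a.e. facts
  have hgood : ∀ᵐ ω ∂P, ∀ q : ℚ × ℚ,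
      (condDistrib Y X P (X ω) (Ici (E q))).toReal = (if E q ≤ Y ω then (1:ℝ) else 0) :=
    ae_all_iff.2 fun q => hSgood (E q) (hES q)
  have hbad : ∀ᵐ ω ∂P, ∀ a : ℚ, ((a:ℝ) < Y ω →
      ∃ b : ℚ, (a:ℝ) < b ∧ (b:ℝ) < Y ω ∧ μ (Ioc (a:ℝ) b) ≠ 0) := by
    rw [ae_all_iff]
    intro a
    set A : Set ℝ :=
      {z | (a:ℝ) < z ∧ ∀ b : ℚ, (a:ℝ) < b → (b:ℝ) < z → μ (Ioc (a:ℝ) b) = 0} with hA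
    -- each point of A has null left-interval
    have hAnull0 : ∀ z ∈ A, μ (Ioc (a:ℝ) z) = 0 := by
      rintro z ⟨hz1, hz2⟩
      have hsub : Ioc (a:ℝ) z ⊆
          (⋃ b : {b : ℚ // (a:ℝ) < b ∧ (b:ℝ) < z}, Ioc (a:ℝ) (b:ℝ)) ∪ {z} := by
        intro w hw
        rcases eq_or_lt_of_le hw.2 with h | h
        · exact Or.inr (by simp [h])
        · obtain ⟨b, hb1, hb2⟩ := exists_rat_btwn h
          exact Or.inl (Set.mem_iUnion.2 ⟨⟨b, hw.1.trans hb1, hb2⟩, hw.1, hb1.le⟩)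
      refine measure_mono_null hsub (measure_union_null ?_ (hatom z))
      exact measure_iUnion_null fun b => hz2 b b.2.1 b.2.2
    -- μ A = 0
    have hAnull : μ A = 0 := by
      set R : Set ℝ := {t | (a:ℝ) < t ∧ μ (Ioc (a:ℝ) t) = 0} with hR
      have hsubR : A ⊆ R := fun z hz => ⟨hz.1, hAnull0 z hz⟩
      by_cases hbdd : BddAbove R
      · rcases Set.eq_empty_or_nonempty R with hRe | hRne
        · rw [hRe] at hsubR
          exact measure_mono_null hsubR (by simp)
        set c := sSup R with hc
        have hsub2 : R ⊆ Ioc (a:ℝ) c := fun z hz => ⟨hz.1, le_csSup hbdd hz⟩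
        have hμc : μ (Ioc (a:ℝ) c) = 0 := by
          have hex : ∀ n : ℕ, ∃ t ∈ R, c - 1/(n+1) < t :=
            fun n => exists_lt_of_lt_csSup hRne (by
              have : (0:ℝ) < 1/(n+1) := by positivity
              linarith)
          choose t ht using hex
          have hsub3 : Ioc (a:ℝ) c ⊆ (⋃ n : ℕ, Ioc (a:ℝ) (t n)) ∪ {c} := by
            intro z hz
            rcases eq_or_lt_of_le hz.2 with h | h
            · exact Or.inr (by simp [h])
            · obtain ⟨n, hn⟩ := exists_nat_gt (1/(c - z))
              have hcz : 0 < c - z := sub_pos.2 h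
              have h1n : 1/((n:ℝ)+1) < c - z := by
                rw [div_lt_iff₀ (by positivity)]
                have : 1/(c-z) < (n:ℝ) + 1 := hn.trans (by linarith)
                rw [div_lt_iff₀ hcz] at this
                linarith [mul_comm (c-z) ((n:ℝ)+1)]
              have hzt : z < t n := by
                have := (ht n).2
                linarith
              exact Or.inl (Set.mem_iUnion.2 ⟨n, hz.1, hzt.le⟩)
          refine measure_mono_null hsub3
            (measure_union_null (measure_iUnion_null fun n => (ht n).1.2) (hatom c))
        exact measure_mono_null (hsubR.trans hsub2) hμc
      · have hex : ∀ n : ℕ, ∃ t ∈ R, (n:ℝ) < t := by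
          intro n
          rcases not_bddAbove_iff.1 hbdd (n:ℝ) with ⟨t, htR, htn⟩
          exact ⟨t, htR, htn⟩
        choose t ht using hex
        have hIoi : μ (Ioi (a:ℝ)) = 0 := by
          refine measure_mono_null (fun z hz => ?_)
            (measure_iUnion_null fun n => (ht n).1.2)
          obtain ⟨n, hn⟩ := exists_nat_gt z
          exact Set.mem_iUnion.2 ⟨n, hz, (hn.trans (ht n).2).le⟩
        exact measure_mono_null (fun z hz => hz.1) hIoi
    -- conclude the a.e. statement
    have hPz : P {ω | ¬ ((a:ℝ) < Y ω →
        ∃ b : ℚ, (a:ℝ) < b ∧ (b:ℝ) < Y ω ∧ μ (Ioc (a:ℝ) b) ≠ 0)} = 0 := by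
      have hsub : {ω | ¬ ((a:ℝ) < Y ω →
          ∃ b : ℚ, (a:ℝ) < b ∧ (b:ℝ) < Y ω ∧ μ (Ioc (a:ℝ) b) ≠ 0)} ⊆ Y ⁻¹' A := by
        intro ω hω
        rw [Set.mem_setOf_eq, _root_.not_imp] at hω
        obtain ⟨h1, h2⟩ := hω
        push_neg at h2
        exact ⟨h1, fun b hb1 hb2 => h2 b hb1 hb2⟩
      refine measure_mono_null hsub (le_antisymm ?_ zero_le)
      calc P (Y ⁻¹' A) ≤ μ A := Measure.le_map_apply hY.aemeasurable A
      _ = 0 := hAnull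
      _ ≤ 0 := le_rfl
    rw [ae_iff]
    exact hPz
  filter_upwards [hgood, hbad] with ω h1 h2
  -- explicit formula for g on this ω
  have hgω : ∀ q : ℚ × ℚ, g q (X ω) = if E q ≤ Y ω then Real.arctan (E q) else -2 := by
    intro q
    rw [hg]
    simp only
    rw [h1 q]
    by_cases h : E q ≤ Y ω <;> simp [h]
  have hbdd : BddAbove (Set.range fun q : ℚ × ℚ => g q (X ω)) := by
    refine ⟨Real.pi/2, ?_⟩
    rintro - ⟨q, rfl⟩
    show g q (X ω) ≤ Real.pi/2
    rw [hgω q]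
    split_ifs
    · exact (Real.arctan_lt_pi_div_two _).le
    · have := Real.pi_gt_three
      linarith
  have hFle : F (X ω) ≤ Real.arctan (Y ω) := by
    refine ciSup_le fun q => ?_
    rw [hgω q]
    split_ifs with h
    · exact Real.arctan_strictMono.monotone h
    · have := Real.neg_pi_div_two_lt_arctan (Y ω)
      have := Real.pi_lt_d2
      linarith
  have hFge : Real.arctan (Y ω) ≤ F (X ω) := by
    refine le_of_forall_lt fun c hc => ?_
    set c' := max c (Real.arctan (Y ω - 1)) with hc'def
    have hc' : c' < Real.arctan (Y ω) :=
      max_lt hc (Real.arctan_strictMono (by linarith))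
    have hc'gt : -(Real.pi/2) < c' :=
      lt_of_lt_of_le (Real.neg_pi_div_two_lt_arctan _) (le_max_right _ _)
    have hc'lt : c' < Real.pi/2 := hc'.trans (Real.arctan_lt_pi_div_two _)
    have htan : Real.tan c' < Y ω := by
      have h := Real.tan_lt_tan_of_lt_of_lt_pi_div_two hc'gt
        (Real.arctan_lt_pi_div_two (Y ω)) hc'
      rwa [Real.tan_arctan] at h
    obtain ⟨a, ha1, ha2⟩ := exists_rat_btwn htan
    obtain ⟨b, hab, hbY, hμab⟩ := h2 a ha2
    have hEq := hEIoc (a, b) hμab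
    have hEY : E (a, b) ≤ Y ω := le_of_lt (lt_of_le_of_lt hEq.2 hbY)
    have hgq : g (a, b) (X ω) = Real.arctan (E (a, b)) := by
      rw [hgω (a, b), if_pos hEY]
    have harc : c < Real.arctan (E (a, b)) := by
      have h1' : c' = Real.arctan (Real.tan c') := (Real.arctan_tan hc'gt hc'lt).symm
      have h2' : Real.arctan (Real.tan c') < Real.arctan (E (a, b)) :=
        Real.arctan_strictMono (lt_of_lt_of_le ha1 (le_of_lt hEq.1))
      calc c ≤ c' := le_max_left _ _
      _ = Real.arctan (Real.tan c') := h1'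
      _ < Real.arctan (E (a, b)) := h2'
    calc c < Real.arctan (E (a, b)) := harc
    _ = g (a, b) (X ω) := hgq.symm
    _ ≤ F (X ω) := le_ciSup hbdd (a, b)
  have hFeq : F (X ω) = Real.arctan (Y ω) := le_antisymm hFle hFge
  show Y ω = Real.sin (F (X ω)) / Real.cos (F (X ω))
  rw [hFeq, ← Real.tan_eq_sin_div_cos, Real.tan_arctan]
end Construct

/-- Azadkia–Chatterjee's `T` satisfies `T = 1` iff `Y` is completely
dependent on `X`, and `T = 0` iff `Y` and `X` are independent. -/
theorem T_eq_one_iff_and_T_eq_zero_iff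
    {Ω : Type*} [MeasurableSpace Ω] (P : Measure Ω) [IsProbabilityMeasure P]
    {d : ℕ} (X : Ω → (Fin d → ℝ)) (Y : Ω → ℝ) (hX : Measurable X) (hY : Measurable Y)
    (G : ℝ → ℝ) (hG : ∀ y, G y = (P {ω | Y ω ≤ y}).toReal) (hGc : Continuous G)
    (T : ℝ)
    (hT : T =
      (∫ y, variance
          (P[fun ω => if y ≤ Y ω then (1:ℝ) else 0 |
            MeasurableSpace.comap X inferInstance]) P ∂(P.map Y)) /
      (∫ y, variance (fun ω => if y ≤ Y ω then (1:ℝ) else 0) P ∂(P.map Y))) :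
    (T = 1 ↔ ∃ f : (Fin d → ℝ) → ℝ, Measurable f ∧ ∀ᵐ ω ∂P, Y ω = f (X ω)) ∧
    (T = 0 ↔ IndepFun Y X P) := by
  classical
  set μ := P.map Y with hμdef
  haveI : IsProbabilityMeasure μ := Measure.isProbabilityMeasure_map hY.aemeasurable
  have hm : MeasurableSpace.comap X (inferInstance : MeasurableSpace (Fin d → ℝ))
      ≤ ‹MeasurableSpace Ω› := hX.comap_le
  haveI : SigmaFinite (P.trim hm) := by infer_instance
  -- G in terms of μ
  have hGμ : ∀ y, G y = (μ (Iic y)).toReal := by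
    intro y
    rw [hG y, hμdef, Measure.map_apply hY measurableSet_Iic]
    rfl
  have hGc' : Continuous fun y => (μ (Iic y)).toReal := by
    have : (fun y => (μ (Iic y)).toReal) = G := by funext y; rw [hGμ y]
    rw [this]; exact hGc
  have hatom : ∀ c : ℝ, μ {c} = 0 := fun c => atomless_of_continuous_cdf hGc' c
  -- indicators
  set I : ℝ → Ω → ℝ := fun y ω => if y ≤ Y ω then (1:ℝ) else 0 with hIdef
  have hI_meas : ∀ y, Measurable (I y) := by
    intro y
    exact Measurable.ite (hY measurableSet_Ici) measurable_const measurable_const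
  have hI_bd : ∀ y ω, |I y ω| ≤ 1 := by
    intro y ω
    show |if y ≤ Y ω then (1:ℝ) else 0| ≤ 1
    split_ifs <;> norm_num
  have hI_int : ∀ y, Integrable (I y) P := fun y =>
    (integrable_const (1:ℝ)).mono' (hI_meas y).aestronglyMeasurable
      (Filter.Eventually.of_forall (by simpa using hI_bd y))
  -- mean of the indicator
  have hPIci : ∀ y, (P (Y ⁻¹' Ici y)) = μ (Ici y) := by
    intro y
    rw [hμdef, Measure.map_apply hY measurableSet_Ici]
  have hmean : ∀ y, P[I y] = 1 - G y := by
    intro y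
    have hind : I y = (Y ⁻¹' Ici y).indicator (fun _ => (1:ℝ)) := by
      funext ω
      rw [Set.indicator_apply]
      by_cases h : y ≤ Y ω <;> simp [hIdef, h, Set.mem_Ici]
    rw [hind, integral_indicator_const (1:ℝ) (hY measurableSet_Ici), smul_eq_mul, mul_one, Measure.real,
      hPIci y, measure_Ici_toReal hatom, hGμ y]
  -- variance of the indicator
  have hvarI : ∀ y, variance (I y) P = (1 - G y) * G y := by
    intro y
    have hind : I y = (Y ⁻¹' Ici y).indicator (fun _ => (1:ℝ)) := by
      funext ω
      rw [Set.indicator_apply]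
      by_cases h : y ≤ Y ω <;> simp [hIdef, h, Set.mem_Ici]
    rw [hind, variance_indicator' (hY measurableSet_Ici), hPIci y, measure_Ici_toReal hatom,
      ← hGμ y]
    ring
  -- the denominator
  set D := ∫ y, variance (I y) P ∂μ with hDdef
  have hDW : D = ∫ y, (1 - (μ (Iic y)).toReal) * (μ (Iic y)).toReal ∂μ := by
    refine integral_congr_ae (Filter.Eventually.of_forall fun y => ?_)
    show variance (I y) P = (1 - (μ (Iic y)).toReal) * (μ (Iic y)).toReal
    rw [hvarI y, hGμ y]
  have hD_pos : 3/32 ≤ D := by rw [hDW]; exact W_integral_pos hGc'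
  have hD_ne : D ≠ 0 := by linarith
  -- the numerator and its kernel version
  set Z : ℝ → Ω → ℝ := fun y ω => (condDistrib Y X P (X ω) (Ici y)).toReal with hZdef
  have hZC : ∀ y, Z y =ᵐ[P] P[I y|MeasurableSpace.comap X inferInstance] := fun y => kernel_ae_eq_condexp hX hY y
  have hVZ : ∀ y, variance (P[I y|MeasurableSpace.comap X inferInstance]) P = variance (Z y) P := fun y =>
    (variance_congr_ae (hZC y)).symm
  set V : ℝ → ℝ := fun y => variance (Z y) P with hVdef
  have hV_meas : Measurable V := measurable_variance_kernel hX hY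
  have hV_nonneg : ∀ y, 0 ≤ V y := fun y => variance_nonneg _ _
  have hV_le : ∀ y, V y ≤ variance (I y) P := by
    intro y
    show variance (Z y) P ≤ variance (I y) P
    rw [← hVZ y]
    exact variance_condexp_le hm (hI_meas y) (hI_bd y)
  have hW_le_one : ∀ y, variance (I y) P ≤ 1 := by
    intro y
    rw [hvarI y]
    have h0 : 0 ≤ G y := by rw [hGμ y]; exact ENNReal.toReal_nonneg
    have h1 : G y ≤ 1 := by
      rw [hGμ y]
      have := prob_le_one (μ := μ) (s := Iic y)
      calc (μ (Iic y)).toReal ≤ (1:ℝ≥0∞).toReal := ENNReal.toReal_mono (by simp) this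
      _ = 1 := by simp
    nlinarith
  have hV_int : Integrable V μ := by
    refine (integrable_const (1:ℝ)).mono' hV_meas.aestronglyMeasurable ?_
    refine Filter.Eventually.of_forall fun y => ?_
    rw [Real.norm_eq_abs, abs_of_nonneg (hV_nonneg y)]
    exact le_trans (hV_le y) (hW_le_one y)
  have hW_int : Integrable (fun y => variance (I y) P) μ := by
    have := W_integrable hGc'
    refine this.congr (Filter.Eventually.of_forall fun y => ?_)
    show (1 - (μ (Iic y)).toReal) * (μ (Iic y)).toReal = variance (I y) P
    rw [hvarI y, hGμ y]
  set N := ∫ y, variance (P[I y|MeasurableSpace.comap X inferInstance]) P ∂μ with hNdef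
  have hNV : N = ∫ y, V y ∂μ := by
    exact integral_congr_ae (Filter.Eventually.of_forall fun y => hVZ y)
  have hTND : T = N / D := hT
  constructor
  · -- part (i)
    constructor
    · -- T = 1 → exists f
      intro hT1
      have hND : N = D := by
        rw [hT1] at hTND
        have := (div_eq_iff hD_ne).1 hTND.symm
        linarith
      -- a.e. equality of variances
      have hdiff0 : ∫ y, (variance (I y) P - V y) ∂μ = 0 := by
        rw [integral_sub hW_int hV_int]
        rw [hNV] at hND
        rw [← hDdef, ← hND]
        ring
      have hae0 : (fun y => variance (I y) P - V y) =ᵐ[μ] 0 := by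
        refine (integral_eq_zero_iff_of_nonneg_ae ?_ (hW_int.sub hV_int)).1 hdiff0
        exact Filter.Eventually.of_forall fun y => sub_nonneg.2 (hV_le y)
      set S : Set ℝ := {y | variance (I y) P - V y = 0} with hSdef
      have hSc : μ Sᶜ = 0 := by
        have := ae_iff.1 hae0
        simpa [hSdef, Set.compl_setOf] using this
      have hSgood : ∀ y ∈ S, ∀ᵐ ω ∂P, Z y ω = I y ω := by
        intro y hy
        have hvar_eq : variance (P[I y|MeasurableSpace.comap X inferInstance]) P = variance (I y) P := by
          rw [hVZ y]
          have hzero : variance (I y) P - V y = 0 := hy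
          have hVy : V y = variance (Z y) P := rfl
          linarith
        have h1 : I y =ᵐ[P] P[I y|MeasurableSpace.comap X inferInstance] :=
          ae_eq_condexp_of_variance_eq hm (hI_meas y) (hI_bd y) hvar_eq
        filter_upwards [h1, hZC y] with ω hω1 hω2
        rw [hω2, hω1]
      have := exists_factor_of_ae_kernel (P := P) hX hY hatom hSc
        (fun y hy => by
          filter_upwards [hSgood y hy] with ω hω
          exact hω)
      exact this
    · -- exists f → T = 1
      rintro ⟨f, hf, hfae⟩
      have hvar_eq : ∀ y, variance (P[I y|MeasurableSpace.comap X inferInstance]) P = variance (I y) P := by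
        intro y
        set J : Ω → ℝ := fun ω => if y ≤ f (X ω) then (1:ℝ) else 0 with hJdef
        have hIJ : I y =ᵐ[P] J := by
          filter_upwards [hfae] with ω hω
          rw [hIdef, hJdef]
          simp only [hω]
        have hXm : Measurable[MeasurableSpace.comap X inferInstance] X := fun s hs => ⟨s, hs, rfl⟩
        have hJm : Measurable[MeasurableSpace.comap X inferInstance] J := by
          have hb : Measurable fun z : Fin d → ℝ => if y ≤ f z then (1:ℝ) else 0 :=
            Measurable.ite (hf measurableSet_Ici) measurable_const measurable_const
          exact hb.comp hXm
        have hJint : Integrable J P := by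
          refine (integrable_const (1:ℝ)).mono' ((hJm.mono hm le_rfl).aestronglyMeasurable) ?_
          refine Filter.Eventually.of_forall fun ω => ?_
          rw [hJdef]
          simp only
          split_ifs <;> norm_num
        have h1 : P[I y|MeasurableSpace.comap X inferInstance] =ᵐ[P] P[J|MeasurableSpace.comap X inferInstance] := condExp_congr_ae hIJ
        have h2 : P[J|MeasurableSpace.comap X inferInstance] = J := condExp_of_stronglyMeasurable hm hJm.stronglyMeasurable hJint
        have h3 : P[I y|MeasurableSpace.comap X inferInstance] =ᵐ[P] I y := by
          rw [h2] at h1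
          exact h1.trans hIJ.symm
        exact variance_congr_ae h3
      have hND : N = D := by
        rw [hNdef, hDdef]
        exact integral_congr_ae (Filter.Eventually.of_forall fun y => hvar_eq y)
      rw [hTND, hND, div_self hD_ne]
  · -- part (ii)
    constructor
    · -- T = 0 → independent
      intro hT0
      have hN0 : N = 0 := by
        rw [hT0] at hTND
        rcases div_eq_zero_iff.1 hTND.symm with h | h
        · exact h
        · exact absurd h hD_ne
      have haeV : V =ᵐ[μ] 0 := by
        refine (integral_eq_zero_iff_of_nonneg hV_nonneg hV_int).1 ?_
        rw [← hNV]
        exact hN0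
      set S : Set ℝ := {y | V y = 0} with hSdef
      have hSc : μ Sᶜ = 0 := by
        have := ae_iff.1 haeV
        simpa [hSdef, Set.compl_setOf] using this
      -- for y ∈ S the conditional expectation is a.s. constant
      have hconst : ∀ y ∈ S, P[I y|MeasurableSpace.comap X inferInstance] =ᵐ[P] fun _ => 1 - G y := by
        intro y hy
        have hvarC : variance (P[I y|MeasurableSpace.comap X inferInstance]) P = 0 := by
          rw [hVZ y]
          exact hy
        -- MemLp 2 of condexp
        have hCsm : StronglyMeasurable[MeasurableSpace.comap X inferInstance] (P[I y|MeasurableSpace.comap X inferInstance]) := stronglyMeasurable_condExp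
        have hCsm0 : AEStronglyMeasurable (P[I y|MeasurableSpace.comap X inferInstance]) P := (hCsm.mono hm).aestronglyMeasurable
        have hCbound : ∀ᵐ ω ∂P, |(P[I y|MeasurableSpace.comap X inferInstance]) ω| ≤ 1 := by
          have := ae_bdd_condExp_of_ae_bdd (μ := P) (m := MeasurableSpace.comap X inferInstance) (R := 1) (f := I y)
            (Filter.Eventually.of_forall (by simpa using hI_bd y))
          simpa using this
        have hC2 : MemLp (P[I y|MeasurableSpace.comap X inferInstance]) 2 P := MemLp.of_bound hCsm0 1 hCbound
        have hev : evariance (P[I y|MeasurableSpace.comap X inferInstance]) P = 0 := by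
          have hlt := hC2.evariance_lt_top
          have : (evariance (P[I y|MeasurableSpace.comap X inferInstance]) P).toReal = 0 := hvarC
          exact (ENNReal.toReal_eq_zero_iff _).1 this |>.resolve_right hlt.ne
        have := (evariance_eq_zero_iff hCsm0.aemeasurable).1 hev
        have hmean' : P[P[I y|MeasurableSpace.comap X inferInstance]] = 1 - G y := by
          rw [integral_condExp hm]
          exact hmean y
        rw [hmean'] at this
        exact this
      -- independence via measure extension
      rw [indepFun_iff_measure_inter_preimage_eq_mul]
      intro s t hs ht
      set ν₁ : Measure ℝ := (P.restrict (X ⁻¹' t)).map Y with hν₁def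
      set ν₂ : Measure ℝ := P (X ⁻¹' t) • μ with hν₂def
      haveI : IsFiniteMeasure ν₁ := by
        constructor
        rw [hν₁def, Measure.map_apply hY MeasurableSet.univ, Set.preimage_univ,
          Measure.restrict_apply MeasurableSet.univ, Set.univ_inter]
        exact lt_of_le_of_lt (measure_mono (Set.subset_univ _)) (measure_lt_top P _)
      haveI : IsFiniteMeasure ν₂ := by
        constructor
        rw [hν₂def, Measure.smul_apply, smul_eq_mul]
        exact ENNReal.mul_lt_top (measure_lt_top P _) (measure_lt_top μ _)
      have hν₁_apply : ∀ u : Set ℝ, MeasurableSet u → ν₁ u = P (Y ⁻¹' u ∩ X ⁻¹' t) := by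
        intro u hu
        rw [hν₁def, Measure.map_apply hY hu, Measure.restrict_apply (hY hu)]
      have hle1 : ν₁ ≤ μ := by
        refine Measure.le_iff.2 fun u hu => ?_
        rw [hν₁_apply u hu, hμdef, Measure.map_apply hY hu]
        exact measure_mono Set.inter_subset_left
      have hle2 : ν₂ ≤ μ := by
        refine Measure.le_iff.2 fun u hu => ?_
        rw [hν₂def, Measure.smul_apply, smul_eq_mul]
        calc P (X ⁻¹' t) * μ u ≤ 1 * μ u := by
              gcongr
              exact prob_le_one
        _ = μ u := one_mul _
      have hagree : ∀ y ∈ S, ν₁ (Ici y) = ν₂ (Ici y) := by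
        intro y hy
        have htm : MeasurableSet[MeasurableSpace.comap X inferInstance] (X ⁻¹' t) := ⟨t, ht, rfl⟩
        have hint1 : ∫ ω in X ⁻¹' t, I y ω ∂P = (P (Y ⁻¹' Ici y ∩ X ⁻¹' t)).toReal := by
          have hind : I y = (Y ⁻¹' Ici y).indicator (fun _ => (1:ℝ)) := by
            funext ω
            rw [Set.indicator_apply]
            by_cases h : y ≤ Y ω <;> simp [hIdef, h, Set.mem_Ici]
          rw [hind, integral_indicator_const (1:ℝ) (hY measurableSet_Ici), smul_eq_mul, mul_one, Measure.real,
            Measure.restrict_apply (hY measurableSet_Ici)]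
        have hint2 : ∫ ω in X ⁻¹' t, I y ω ∂P = ∫ ω in X ⁻¹' t, (P[I y|MeasurableSpace.comap X inferInstance]) ω ∂P :=
          (setIntegral_condExp hm (hI_int y) htm).symm
        have hint3 : ∫ ω in X ⁻¹' t, (P[I y|MeasurableSpace.comap X inferInstance]) ω ∂P = (1 - G y) * (P (X ⁻¹' t)).toReal := by
          have hc := hconst y hy
          rw [setIntegral_congr_ae (hX ht) (hc.mono fun ω hω => fun _ => hω)]
          rw [setIntegral_const, smul_eq_mul, mul_comm]; rfl
        have htoReal : (P (Y ⁻¹' Ici y ∩ X ⁻¹' t)).toReal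
            = (1 - G y) * (P (X ⁻¹' t)).toReal := by
          rw [← hint1, hint2, hint3]
        have hν₂Ici : ν₂ (Ici y) = P (X ⁻¹' t) * μ (Ici y) := by
          rw [hν₂def, Measure.smul_apply, smul_eq_mul]
        rw [hν₁_apply (Ici y) measurableSet_Ici, hν₂Ici]
        refine (ENNReal.toReal_eq_toReal_iff' (measure_ne_top P _) ?_).1 ?_
        · exact ENNReal.mul_ne_top (measure_ne_top P _) (measure_ne_top μ _)
        · rw [ENNReal.toReal_mul, htoReal, measure_Ici_toReal hatom, ← hGμ y]
          ring
      have hext : ν₁ = ν₂ := measure_ext_of_ae_Ici hle1 hle2 hatom hSc hagree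
      have hs' : ν₁ s = ν₂ s := by rw [hext]
      rw [hν₁_apply s hs, hν₂def, Measure.smul_apply, smul_eq_mul] at hs'
      rw [hs', hμdef, Measure.map_apply hY hs, mul_comm]
    · -- independent → T = 0
      intro hind
      have hindep : Indep (MeasurableSpace.comap Y inferInstance)
          (MeasurableSpace.comap X inferInstance) P :=
        (IndepFun_iff_Indep Y X P).1 hind
      have hconst : ∀ y, P[I y|MeasurableSpace.comap X inferInstance] =ᵐ[P] fun _ => P[I y] := by
        intro y
        have hYm : Measurable[MeasurableSpace.comap Y inferInstance] Y :=
          fun s hs => ⟨s, hs, rfl⟩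
        have hIm : StronglyMeasurable[MeasurableSpace.comap Y inferInstance] (I y) := by
          have hb : Measurable fun z : ℝ => if y ≤ z then (1:ℝ) else 0 :=
            Measurable.ite measurableSet_Ici measurable_const measurable_const
          exact (hb.comp hYm).stronglyMeasurable
        exact condExp_indep_eq hY.comap_le hm hIm hindep
      have hvar0 : ∀ y, variance (P[I y|MeasurableSpace.comap X inferInstance]) P = 0 := by
        intro y
        rw [variance_congr_ae (hconst y)]
        exact variance_const' _
      have hN0 : N = 0 := by
        rw [hNdef]
        rw [integral_congr_ae (Filter.Eventually.of_forall fun y => hvar0 y)]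
        simp
      rw [hTND, hN0, zero_div]
end

section
/- Let X₁, ..., X_d : Ω → ℝ and Y : Ω → ℝ be random variables with G, the distribution function of Y, continuous. For k ∈ {1,...,d}, define T(Y,(X₁,...,X_k)) := ( ∫_ℝ Var( P(Y ≥ y | X₁,...,X_k) ) dP^Y(y) ) / ( ∫_ℝ Var( 1_{Y ≥ y} ) dP^Y(y) ). Then T satisfies the information gain inequality: T(Y, X₁) ≤ T(Y,(X₁,X₂)) ≤ ... ≤ T(Y,(X₁,...,X_k)) ≤ ... ≤ T(Y,(X₁,...,X_d)). -/
open MeasureTheory ProbabilityTheory Set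

section Aux

variable {Ω : Type*} {m₁ m₂ m0 : MeasurableSpace Ω} {P : Measure Ω}

/-- Conditional expectation of a `[0,1]`-valued function is a.e. in `[0,1]`. -/
lemma condexp_mem_unit {m : MeasurableSpace Ω} {m0 : MeasurableSpace Ω} {P : Measure Ω}
    [IsProbabilityMeasure P] (hm : m ≤ m0) {f : Ω → ℝ}
    (hfi : Integrable f P) (h0 : ∀ ω, 0 ≤ f ω) (h1 : ∀ ω, f ω ≤ 1) :
    ∀ᵐ ω ∂P, 0 ≤ (P[f|m]) ω ∧ (P[f|m]) ω ≤ 1 := by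
  have hnn : 0 ≤ᵐ[P] P[f|m] := condExp_nonneg (ae_of_all _ h0)
  have hub : P[f|m] ≤ᵐ[P] P[fun _ => (1:ℝ)|m] :=
    condExp_mono hfi (integrable_const 1) (ae_of_all _ h1)
  rw [condExp_const hm] at hub
  filter_upwards [hnn, hub] with ω h₁ h₂ using ⟨h₁, h₂⟩

/-- Key pointwise inequality: variance of conditional expectation increases with the σ-algebra. -/
lemma variance_condexp_mono [IsProbabilityMeasure P]
    (h12 : m₁ ≤ m₂) (h2 : m₂ ≤ m0) {f : Ω → ℝ}
    (hfi : Integrable f P) (h0 : ∀ ω, 0 ≤ f ω) (h1 : ∀ ω, f ω ≤ 1) :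
    variance (P[f|m₁]) P ≤ variance (P[f|m₂]) P := by
  have h1' : m₁ ≤ m0 := h12.trans h2
  set g₁ : Ω → ℝ := P[f|m₁] with hg₁def
  set g₂ : Ω → ℝ := P[f|m₂] with hg₂def
  have hg₁sm : StronglyMeasurable[m₁] g₁ := stronglyMeasurable_condExp
  have hg₂sm : StronglyMeasurable[m₂] g₂ := stronglyMeasurable_condExp
  have hg₁sm0 : AEStronglyMeasurable g₁ P := (hg₁sm.mono h1').aestronglyMeasurable
  have hg₂sm0 : AEStronglyMeasurable g₂ P := (hg₂sm.mono h2).aestronglyMeasurable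
  have hg₁b : ∀ᵐ ω ∂P, 0 ≤ g₁ ω ∧ g₁ ω ≤ 1 := condexp_mem_unit h1' hfi h0 h1
  have hg₂b : ∀ᵐ ω ∂P, 0 ≤ g₂ ω ∧ g₂ ω ≤ 1 := condexp_mem_unit h2 hfi h0 h1
  -- integrabilities
  have hint : ∀ (u v : Ω → ℝ), AEStronglyMeasurable u P → AEStronglyMeasurable v P →
      (∀ᵐ ω ∂P, 0 ≤ u ω ∧ u ω ≤ 1) → (∀ᵐ ω ∂P, 0 ≤ v ω ∧ v ω ≤ 1) →
      Integrable (fun ω => u ω * v ω) P := by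
    intro u v hu hv hub hvb
    refine Integrable.mono' (integrable_const 1) (hu.mul hv) ?_
    filter_upwards [hub, hvb] with ω ⟨hu0, hu1⟩ ⟨hv0, hv1⟩
    rw [Real.norm_eq_abs, abs_of_nonneg (mul_nonneg hu0 hv0)]
    nlinarith
  have h11 : Integrable (fun ω => g₁ ω * g₁ ω) P := hint _ _ hg₁sm0 hg₁sm0 hg₁b hg₁b
  have h12i : Integrable (fun ω => g₁ ω * g₂ ω) P := hint _ _ hg₁sm0 hg₂sm0 hg₁b hg₂b
  have h22 : Integrable (fun ω => g₂ ω * g₂ ω) P := hint _ _ hg₂sm0 hg₂sm0 hg₂b hg₂b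
  have hg₂i : Integrable g₂ P := integrable_condExp
  -- tower property
  have htower : P[g₂|m₁] =ᵐ[P] g₁ := condExp_condExp_of_le h12 h2
  -- key identity : ∫ g₁ g₂ = ∫ g₁²
  have hkey : ∫ ω, g₁ ω * g₂ ω ∂P = ∫ ω, g₁ ω * g₁ ω ∂P := by
    have hpull : P[g₁ * g₂|m₁] =ᵐ[P] g₁ * P[g₂|m₁] :=
      condExp_mul_of_stronglyMeasurable_left hg₁sm h12i hg₂i
    calc ∫ ω, g₁ ω * g₂ ω ∂P = ∫ ω, (P[g₁ * g₂|m₁]) ω ∂P := (integral_condExp h1').symm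
      _ = ∫ ω, (g₁ * P[g₂|m₁]) ω ∂P := integral_congr_ae hpull
      _ = ∫ ω, g₁ ω * g₁ ω ∂P := integral_congr_ae (by
            filter_upwards [htower] with ω hω
            simp [hω])
  -- ∫ g₁² ≤ ∫ g₂²
  have hsq : ∫ ω, g₁ ω * g₁ ω ∂P ≤ ∫ ω, g₂ ω * g₂ ω ∂P := by
    have hdiff : (0:ℝ) ≤ ∫ ω, (g₂ ω - g₁ ω) * (g₂ ω - g₁ ω) ∂P :=
      integral_nonneg fun ω => mul_self_nonneg _
    have hexp : ∫ ω, (g₂ ω - g₁ ω) * (g₂ ω - g₁ ω) ∂P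
        = ∫ ω, g₂ ω * g₂ ω ∂P - 2 * ∫ ω, g₁ ω * g₂ ω ∂P + ∫ ω, g₁ ω * g₁ ω ∂P := by
      calc ∫ ω, (g₂ ω - g₁ ω) * (g₂ ω - g₁ ω) ∂P
          = ∫ ω, (g₂ ω * g₂ ω - 2 * (g₁ ω * g₂ ω)) + g₁ ω * g₁ ω ∂P := by
            congr 1; funext ω; ring
        _ = (∫ ω, g₂ ω * g₂ ω - 2 * (g₁ ω * g₂ ω) ∂P) + ∫ ω, g₁ ω * g₁ ω ∂P :=
            integral_add (h22.sub (h12i.const_mul 2)) h11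
        _ = ((∫ ω, g₂ ω * g₂ ω ∂P) - ∫ ω, 2 * (g₁ ω * g₂ ω) ∂P) + ∫ ω, g₁ ω * g₁ ω ∂P := by
            rw [integral_sub h22 (h12i.const_mul 2)]
        _ = ∫ ω, g₂ ω * g₂ ω ∂P - 2 * ∫ ω, g₁ ω * g₂ ω ∂P + ∫ ω, g₁ ω * g₁ ω ∂P := by
            rw [integral_const_mul]
    rw [hexp, hkey] at hdiff
    linarith
  -- conclude via variance_eq_sub
  have hm₂p : MemLp g₂ 2 P := by
    refine MemLp.of_bound hg₂sm0 1 ?_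
    filter_upwards [hg₂b] with ω ⟨h₁, h₂⟩
    rw [Real.norm_eq_abs, abs_of_nonneg h₁]; exact h₂
  have hm₁p : MemLp g₁ 2 P := by
    refine MemLp.of_bound hg₁sm0 1 ?_
    filter_upwards [hg₁b] with ω ⟨h₁, h₂⟩
    rw [Real.norm_eq_abs, abs_of_nonneg h₁]; exact h₂
  have hmean : ∫ ω, g₁ ω ∂P = ∫ ω, g₂ ω ∂P := by
    rw [hg₁def, hg₂def, integral_condExp h1', integral_condExp h2]
  rw [variance_eq_sub hm₁p, variance_eq_sub hm₂p]
  have e₁ : ∫ ω, (g₁ ^ 2) ω ∂P = ∫ ω, g₁ ω * g₁ ω ∂P := by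
    apply integral_congr_ae; filter_upwards with ω; simp [sq]
  have e₂ : ∫ ω, (g₂ ^ 2) ω ∂P = ∫ ω, g₂ ω * g₂ ω ∂P := by
    apply integral_congr_ae; filter_upwards with ω; simp [sq]
  simp only [e₁, e₂, hmean] at *
  linarith

end Aux

/-- Azadkia–Chatterjee's `T` satisfies the information gain inequality:
`T(Y, X₁) ≤ T(Y,(X₁,X₂)) ≤ … ≤ T(Y,(X₁,…,X_d))`, where `T k` denotes `T` computed
conditionally on the first `k` variables. -/
theorem T_information_gain
    {Ω : Type*} [MeasurableSpace Ω] (P : Measure Ω) [IsProbabilityMeasure P]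
    {d : ℕ} (hd : 1 ≤ d) (X : Fin d → Ω → ℝ) (Y : Ω → ℝ)
    (hX : ∀ i, Measurable (X i)) (hY : Measurable Y)
    (G : ℝ → ℝ) (hG : ∀ y, G y = (P {ω | Y ω ≤ y}).toReal) (hGc : Continuous G)
    (T : ℕ → ℝ)
    (hT : ∀ k : ℕ, T k =
      (∫ y, variance
          (P[fun ω => if y ≤ Y ω then (1:ℝ) else 0 |
            ⨆ i ∈ Finset.univ.filter fun i : Fin d => (i : ℕ) < k,
              MeasurableSpace.comap (X i) inferInstance]) P ∂(P.map Y)) /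
      (∫ y, variance (fun ω => if y ≤ Y ω then (1:ℝ) else 0) P ∂(P.map Y))) :
    ∀ k : ℕ, 1 ≤ k → k < d → T k ≤ T (k + 1) := by
  intro k hk1 hkd
  -- notation
  set m : ℕ → MeasurableSpace Ω := fun k =>
    ⨆ i ∈ Finset.univ.filter fun i : Fin d => (i : ℕ) < k,
      MeasurableSpace.comap (X i) inferInstance with hmdef
  have hm_le : ∀ j, m j ≤ ‹MeasurableSpace Ω› := by
    intro j
    refine iSup₂_le fun i _ => ?_
    exact (hX i).comap_le
  have hm_mono : ∀ j, m j ≤ m (j + 1) := by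
    intro j
    refine iSup₂_le fun i hi => ?_
    refine le_iSup₂_of_le i ?_ le_rfl
    simp only [Finset.mem_filter, Finset.mem_univ, true_and] at hi ⊢
    omega
  -- the indicator functions
  set f : ℝ → Ω → ℝ := fun y ω => if y ≤ Y ω then (1:ℝ) else 0 with hfdef
  have hfmeas : ∀ y, Measurable (f y) := fun y =>
    Measurable.ite (measurableSet_le measurable_const hY) measurable_const measurable_const
  have hf0 : ∀ y ω, 0 ≤ f y ω := fun y ω => by by_cases h : y ≤ Y ω <;> simp [hfdef, h]
  have hf1 : ∀ y ω, f y ω ≤ 1 := fun y ω => by by_cases h : y ≤ Y ω <;> simp [hfdef, h]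
  have hfint : ∀ y, Integrable (f y) P := by
    intro y
    refine Integrable.mono' (integrable_const 1) (hfmeas y).aestronglyMeasurable ?_
    filter_upwards with ω
    rw [Real.norm_eq_abs, abs_of_nonneg (hf0 y ω)]; exact hf1 y ω
  have hfanti : ∀ (y₁ y₂ : ℝ), y₁ ≤ y₂ → ∀ ω, f y₂ ω ≤ f y₁ ω := by
    intro y₁ y₂ h ω
    by_cases h2 : y₂ ≤ Y ω
    · simp [hfdef, h2, h.trans h2]
    · simp only [hfdef, h2, ↓reduceIte]; split_ifs <;> norm_num
  -- variance function for the sub-σ-algebra `m j`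
  set V : ℕ → ℝ → ℝ := fun j y => variance (P[f y|m j]) P with hVdef
  -- bounds on V
  have hcondb : ∀ j y, ∀ᵐ ω ∂P, 0 ≤ (P[f y|m j]) ω ∧ (P[f y|m j]) ω ≤ 1 := fun j y =>
    condexp_mem_unit (hm_le j) (hfint y) (hf0 y) (hf1 y)
  have hVnonneg : ∀ j y, 0 ≤ V j y := fun j y => variance_nonneg _ _
  have hVle1 : ∀ j y, V j y ≤ 1 := by
    intro j y
    have hsm : AEStronglyMeasurable (P[f y|m j]) P :=
      (stronglyMeasurable_condExp.mono (hm_le j)).aestronglyMeasurable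
    refine (variance_le_expectation_sq hsm).trans ?_
    have : ∫ ω, ((P[f y|m j]) ^ 2) ω ∂P ≤ ∫ ω, (1:ℝ) ∂P := by
      refine integral_mono_of_nonneg (ae_of_all _ fun ω => by simp [sq_nonneg])
        (integrable_const 1) ?_
      filter_upwards [hcondb j y] with ω ⟨h₁, h₂⟩
      simp only [Pi.pow_apply]
      nlinarith
    simpa using this
  -- pointwise monotonicity in k
  have hVmono : ∀ y, V k y ≤ V (k + 1) y := fun y =>
    variance_condexp_mono (hm_mono k) (hm_le (k + 1)) (hfint y) (hf0 y) (hf1 y)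
  -- measurability of V j via antitonicity
  have hH_anti : ∀ j, Antitone (fun y => ∫ ω, (P[f y|m j]) ω * (P[f y|m j]) ω ∂P) := by
    intro j y₁ y₂ h
    have hce : P[f y₂|m j] ≤ᵐ[P] P[f y₁|m j] :=
      condExp_mono (hfint y₂) (hfint y₁) (ae_of_all _ (hfanti y₁ y₂ h))
    have hint : ∀ y, Integrable (fun ω => (P[f y|m j]) ω * (P[f y|m j]) ω) P := by
      intro y
      refine Integrable.mono' (integrable_const 1)
        (((stronglyMeasurable_condExp.mono (hm_le j)).aestronglyMeasurable).mul
          ((stronglyMeasurable_condExp.mono (hm_le j)).aestronglyMeasurable)) ?_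
      filter_upwards [hcondb j y] with ω ⟨h₁, h₂⟩
      rw [Real.norm_eq_abs, abs_of_nonneg (mul_nonneg h₁ h₁)]
      nlinarith
    refine integral_mono_ae (hint y₂) (hint y₁) ?_
    filter_upwards [hce, hcondb j y₁, hcondb j y₂] with ω h₀ ⟨ha, _⟩ ⟨hb, _⟩
    nlinarith
  have hc_anti : Antitone (fun y => ∫ ω, f y ω ∂P) := by
    intro y₁ y₂ h
    exact integral_mono (hfint y₂) (hfint y₁) (hfanti y₁ y₂ h)
  have hc_nonneg : ∀ y, 0 ≤ ∫ ω, f y ω ∂P := fun y => integral_nonneg (hf0 y)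
  have hVeq : ∀ j y, V j y =
      (∫ ω, (P[f y|m j]) ω * (P[f y|m j]) ω ∂P) - (∫ ω, f y ω ∂P) ^ 2 := by
    intro j y
    have hmlp : MemLp (P[f y|m j]) 2 P := by
      refine MemLp.of_bound
        ((stronglyMeasurable_condExp.mono (hm_le j)).aestronglyMeasurable) 1 ?_
      filter_upwards [hcondb j y] with ω ⟨h₁, h₂⟩
      rw [Real.norm_eq_abs, abs_of_nonneg h₁]; exact h₂
    rw [hVdef]
    simp only
    rw [variance_eq_sub hmlp, integral_condExp (hm_le j)]
    congr 1
    apply integral_congr_ae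
    filter_upwards with ω
    simp [sq]
  have hVmeas : ∀ j, Measurable (V j) := by
    intro j
    have h1 : Measurable (fun y => ∫ ω, (P[f y|m j]) ω * (P[f y|m j]) ω ∂P) :=
      (hH_anti j).measurable
    have h2 : Measurable (fun y => (∫ ω, f y ω ∂P) ^ 2) := by
      have hanti : Antitone (fun y => (∫ ω, f y ω ∂P) ^ 2) := fun y₁ y₂ h =>
        pow_le_pow_left₀ (hc_nonneg y₂) (hc_anti h) 2
      exact hanti.measurable
    have : V j = fun y =>
        (∫ ω, (P[f y|m j]) ω * (P[f y|m j]) ω ∂P) - (∫ ω, f y ω ∂P) ^ 2 := by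
      funext y; exact hVeq j y
    rw [this]
    exact h1.sub h2
  -- integrability of V (k+1) w.r.t. P.map Y
  haveI : IsProbabilityMeasure (P.map Y) := Measure.isProbabilityMeasure_map hY.aemeasurable
  have hVint : Integrable (V (k + 1)) (P.map Y) := by
    refine Integrable.mono' (integrable_const 1)
      ((hVmeas (k + 1)).aestronglyMeasurable) ?_
    filter_upwards with y
    rw [Real.norm_eq_abs, abs_of_nonneg (hVnonneg (k + 1) y)]
    exact hVle1 (k + 1) y
  -- numerator monotonicity
  have hnum : ∫ y, V k y ∂(P.map Y) ≤ ∫ y, V (k + 1) y ∂(P.map Y) :=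
    integral_mono_of_nonneg (ae_of_all _ fun y => hVnonneg k y) hVint
      (ae_of_all _ fun y => hVmono y)
  have hnum_nonneg : 0 ≤ ∫ y, V k y ∂(P.map Y) :=
    integral_nonneg fun y => hVnonneg k y
  -- denominator
  set D : ℝ := ∫ y, variance (fun ω => if y ≤ Y ω then (1:ℝ) else 0) P ∂(P.map Y) with hDdef
  have hD_nonneg : 0 ≤ D := integral_nonneg fun y => variance_nonneg _ _
  rw [hT k, hT (k + 1)]
  show (∫ y, V k y ∂(P.map Y)) / D ≤ (∫ y, V (k + 1) y ∂(P.map Y)) / D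
  rcases eq_or_lt_of_le hD_nonneg with hD0 | hDpos
  · rw [← hD0]
    simp
  · exact (div_le_div_iff_of_pos_right hDpos).mpr hnum
end

section
/- Let X : Ω → ℝ^d and Y : Ω → ℝ be random variables with Y square-integrable and Var(Y) > 0, and let Y' : Ω → ℝ be a random variable such that Y and Y' share the same conditional distribution given X and are conditionally independent given X. Then E[(E[Y | σ(X)])²] = E[Y·Y'], Var(Y') = Var(Y), and consequently the coefficient of determination R²(Y,X) := Var(E[Y | σ(X)]) / Var(Y) equals the Pearson correlation coefficient ρ_P(Y,Y') = (E[Y·Y'] − E[Y]·E[Y']) / (√Var(Y)·√Var(Y')). -/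
open MeasureTheory ProbabilityTheory Set Filter Topology

section Helpers

variable {α : Type*} {m m0 : MeasurableSpace α} {μ : Measure α}

/-- A bounded a.e.-strongly-measurable function is integrable on a finite measure space. -/
theorem myint_bdd [IsFiniteMeasure μ] {f : α → ℝ} (hf : AEStronglyMeasurable f μ) {C : ℝ}
    (h : ∀ x, |f x| ≤ C) : Integrable f μ :=
  ⟨hf, HasFiniteIntegral.of_bounded (C := C) (Eventually.of_forall fun x => by
    simpa [Real.norm_eq_abs] using h x)⟩

/-- Product of two L² functions is integrable. -/
theorem myint_mul [IsFiniteMeasure μ] {f g : α → ℝ} (hf : MemLp f 2 μ) (hg : MemLp g 2 μ) :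
    Integrable (fun ω => f ω * g ω) μ := by
  refine Integrable.mono' ((hf.integrable_sq.add hg.integrable_sq).div_const 2)
    (hf.aestronglyMeasurable.mul hg.aestronglyMeasurable) ?_
  filter_upwards with ω
  rw [Real.norm_eq_abs, abs_mul]
  simp only [Pi.add_apply]
  nlinarith [abs_nonneg (f ω), abs_nonneg (g ω), sq_abs (f ω), sq_abs (g ω),
    sq_nonneg (|f ω| - |g ω|)]

/-- Cauchy–Schwarz for integrals. -/
theorem mycs [IsFiniteMeasure μ] {f g : α → ℝ} (hf : MemLp f 2 μ) (hg : MemLp g 2 μ) :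
    |∫ ω, f ω * g ω ∂μ| ≤ Real.sqrt (∫ ω, f ω ^ 2 ∂μ) * Real.sqrt (∫ ω, g ω ^ 2 ∂μ) := by
  set A := ∫ ω, f ω ^ 2 ∂μ
  set B := ∫ ω, f ω * g ω ∂μ
  set C := ∫ ω, g ω ^ 2 ∂μ
  have hA : 0 ≤ A := integral_nonneg fun ω => sq_nonneg _
  have hC : 0 ≤ C := integral_nonneg fun ω => sq_nonneg _
  have hq : ∀ t : ℝ, 0 ≤ C * (t * t) + (2 * B) * t + A := by
    intro t
    have h1 : (0:ℝ) ≤ ∫ ω, (f ω + t * g ω) ^ 2 ∂μ := integral_nonneg fun ω => sq_nonneg _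
    have i1 : Integrable (fun ω => (2 * t) * (f ω * g ω)) μ := (myint_mul hf hg).const_mul _
    have i2 : Integrable (fun ω => f ω ^ 2 + (2 * t) * (f ω * g ω)) μ :=
      hf.integrable_sq.add i1
    have i3 : Integrable (fun ω => (t ^ 2) * g ω ^ 2) μ := hg.integrable_sq.const_mul _
    have h2 : ∫ ω, (f ω + t * g ω) ^ 2 ∂μ = A + (2 * t) * B + t ^ 2 * C := by
      have e : ∀ ω, (f ω + t * g ω) ^ 2
          = (f ω ^ 2 + (2 * t) * (f ω * g ω)) + (t ^ 2) * g ω ^ 2 := by intro ω; ring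
      simp_rw [e]
      rw [integral_add i2 i3, integral_add hf.integrable_sq i1,
        integral_const_mul, integral_const_mul]
    nlinarith [h1, h2]
  have hd := discrim_le_zero hq
  rw [discrim] at hd
  have hBsq : B ^ 2 ≤ A * C := by nlinarith
  calc |B| = Real.sqrt (B ^ 2) := by rw [Real.sqrt_sq_eq_abs]
    _ ≤ Real.sqrt (A * C) := Real.sqrt_le_sqrt hBsq
    _ = Real.sqrt A * Real.sqrt C := Real.sqrt_mul hA C

/-- The conditional expectation of an L² function is L². -/
theorem mycondexp_memL2 (hm : m ≤ m0) [IsFiniteMeasure μ] {f : α → ℝ} (hf : MemLp f 2 μ) :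
    MemLp (μ[f|m]) 2 μ := by
  set F : Lp ℝ 2 μ := hf.toLp f with hF
  have hFf : (F : α → ℝ) =ᵐ[μ] f := hf.coeFn_toLp
  have hG : (condExpL2 ℝ ℝ hm F : α → ℝ) =ᵐ[μ] μ[f|m] := by
    refine ae_eq_condExp_of_forall_setIntegral_eq hm (hf.integrable one_le_two)
      (fun s _ hμs => integrableOn_condExpL2_of_measure_ne_top hm hμs.ne F)
      (fun s hs hμs => ?_) (aestronglyMeasurable_condExpL2 hm F)
    rw [integral_condExpL2_eq hm F hs hμs.ne]
    exact setIntegral_congr_ae (hm s hs) (hFf.mono fun x hx _ => hx)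
  exact (Lp.memLp ((condExpL2 ℝ ℝ hm F : α →₂[μ] ℝ))).ae_eq hG

/-- L² contraction of conditional expectation, in integral form. -/
theorem mycondexp_sq_le (hm : m ≤ m0) [IsProbabilityMeasure μ] {f : α → ℝ}
    (hf : MemLp f 2 μ) :
    ∫ ω, (μ[f|m]) ω ^ 2 ∂μ ≤ ∫ ω, f ω ^ 2 ∂μ := by
  set a := μ[f|m] with ha
  have ha2 : MemLp a 2 μ := mycondexp_memL2 hm hf
  have hpull : μ[fun ω => a ω * f ω|m] =ᵐ[μ] fun ω => a ω * a ω := by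
    have := condExp_mul_of_stronglyMeasurable_left (μ := μ) (f := a) (g := f)
      stronglyMeasurable_condExp (myint_mul ha2 hf) (hf.integrable one_le_two)
    filter_upwards [this] with ω hω
    exact hω
  have hkey : ∫ ω, a ω * f ω ∂μ = ∫ ω, a ω ^ 2 ∂μ := by
    rw [← integral_condExp hm (f := fun ω => a ω * f ω)]
    refine integral_congr_ae (hpull.trans ?_)
    filter_upwards with ω
    ring
  set A := ∫ ω, a ω ^ 2 ∂μ
  set B := ∫ ω, f ω ^ 2 ∂μ
  have hA : 0 ≤ A := integral_nonneg fun ω => sq_nonneg _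
  have hB : 0 ≤ B := integral_nonneg fun ω => sq_nonneg _
  have hcs : A ≤ Real.sqrt A * Real.sqrt B := by
    calc A = ∫ ω, a ω * f ω ∂μ := hkey.symm
      _ ≤ |∫ ω, a ω * f ω ∂μ| := le_abs_self _
      _ ≤ Real.sqrt A * Real.sqrt B := mycs ha2 hf
  nlinarith [Real.sq_sqrt hA, Real.sq_sqrt hB, Real.sqrt_nonneg A, Real.sqrt_nonneg B,
    sq_nonneg (Real.sqrt A - Real.sqrt B)]

end Helpers

theorem R2_aux {Ω : Type*} {m : MeasurableSpace Ω} [m0 : MeasurableSpace Ω] (hm : m ≤ m0)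
    (P : Measure Ω) [IsProbabilityMeasure P] (Y Y' : Ω → ℝ)
    (hY : Measurable Y) (hY' : Measurable Y')
    (hY2 : MemLp Y 2 P)
    (hsame : ∀ g : ℝ → ℝ, Measurable g → (∃ C, ∀ x, |g x| ≤ C) →
      P[fun ω => g (Y ω) | m] =ᵐ[P] P[fun ω => g (Y' ω) | m])
    (hci : ∀ g h : ℝ → ℝ, Measurable g → (∃ C, ∀ x, |g x| ≤ C) →
        Measurable h → (∃ C, ∀ x, |h x| ≤ C) →
      P[fun ω => g (Y ω) * h (Y' ω) | m]
        =ᵐ[P] fun ω => (P[fun ω' => g (Y ω') | m]) ω * (P[fun ω' => h (Y' ω') | m]) ω) :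
    (∫ ω, (P[Y | m]) ω ^ 2 ∂P) = ∫ ω, Y ω * Y' ω ∂P ∧
    variance Y' P = variance Y P ∧
    variance (P[Y | m]) P / variance Y P =
      ((∫ ω, Y ω * Y' ω ∂P) - (∫ ω, Y ω ∂P) * (∫ ω, Y' ω ∂P)) /
        (Real.sqrt (variance Y P) * Real.sqrt (variance Y' P)) := by
  -- Step A: Y and Y' have the same law
  have hb1 : ∀ s : Set ℝ, MeasurableSet s → P (Y ⁻¹' s) = P (Y' ⁻¹' s) := by
    intro s hs
    set g : ℝ → ℝ := s.indicator fun _ => (1:ℝ) with hg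
    have hgm : Measurable g := measurable_const.indicator hs
    have hgb : ∀ x, |g x| ≤ 1 := fun x => by
      by_cases h : x ∈ s <;> simp [hg, indicator, h]
    have h1 := hsame g hgm ⟨1, hgb⟩
    have e1 : ∫ ω, g (Y ω) ∂P = ∫ ω, g (Y' ω) ∂P := by
      rw [← integral_condExp hm (f := fun ω => g (Y ω)),
        ← integral_condExp hm (f := fun ω => g (Y' ω))]
      exact integral_congr_ae h1
    have e2 : ∀ (Z : Ω → ℝ), Measurable Z →
        ∫ ω, g (Z ω) ∂P = (P (Z ⁻¹' s)).toReal := by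
      intro Z hZ
      have : ∀ ω, g (Z ω) = (Z ⁻¹' s).indicator (fun _ => (1:ℝ)) ω := by
        intro ω
        by_cases h : Z ω ∈ s <;> simp [hg, indicator, h, mem_preimage]
      simp_rw [this]
      rw [integral_indicator_const (1:ℝ) (hZ hs)]
      simp
      rfl
    rw [e2 Y hY, e2 Y' hY'] at e1
    exact (ENNReal.toReal_eq_toReal_iff' (measure_ne_top P _) (measure_ne_top P _)).mp e1
  have hmap : Measure.map Y P = Measure.map Y' P := by
    refine Measure.ext fun s hs => ?_
    rw [Measure.map_apply hY hs, Measure.map_apply hY' hs, hb1 s hs]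
  have hY'2 : MemLp Y' 2 P := by
    have h1 : MemLp (id ∘ Y) 2 P := by simpa [Function.comp] using hY2
    have h2 : MemLp id 2 (Measure.map Y P) :=
      (memLp_map_measure_iff aestronglyMeasurable_id hY.aemeasurable).mpr h1
    rw [hmap] at h2
    have h3 := (memLp_map_measure_iff aestronglyMeasurable_id hY'.aemeasurable).mp h2
    simpa [Function.comp] using h3
  have hEY' : ∫ ω, Y' ω ∂P = ∫ ω, Y ω ∂P := by
    calc ∫ ω, Y' ω ∂P = ∫ y, y ∂(Measure.map Y' P) :=
          (integral_map hY'.aemeasurable aestronglyMeasurable_id).symm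
      _ = ∫ y, y ∂(Measure.map Y P) := by rw [hmap]
      _ = ∫ ω, Y ω ∂P := integral_map hY.aemeasurable aestronglyMeasurable_id
  have hEY'sq : ∫ ω, Y' ω ^ 2 ∂P = ∫ ω, Y ω ^ 2 ∂P := by
    have hsm : ∀ (μ' : Measure ℝ), AEStronglyMeasurable (fun y : ℝ => y ^ 2) μ' :=
      fun μ' => (measurable_id.pow_const 2).aestronglyMeasurable
    calc ∫ ω, Y' ω ^ 2 ∂P = ∫ y, y ^ 2 ∂(Measure.map Y' P) :=
          (integral_map hY'.aemeasurable (hsm _)).symm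
      _ = ∫ y, y ^ 2 ∂(Measure.map Y P) := by rw [hmap]
      _ = ∫ ω, Y ω ^ 2 ∂P := integral_map hY.aemeasurable (hsm _)
  have hvar' : variance Y' P = variance Y P := by
    rw [variance_eq_sub hY'2, variance_eq_sub hY2]
    simp only [Pi.pow_apply]
    rw [hEY', hEY'sq]
  -- Step B: truncations
  set T : ℕ → ℝ → ℝ := fun n x => max (-(n:ℝ)) (min (n:ℝ) x) with hT
  have hTmeas : ∀ n, Measurable (T n) := fun n =>
    measurable_const.max (measurable_const.min measurable_id)
  have hTbd : ∀ n x, |T n x| ≤ (n:ℝ) := fun n x =>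
    abs_le.2 ⟨le_max_left _ _,
      max_le (neg_le_self (Nat.cast_nonneg n)) (min_le_left _ _)⟩
  have hTabs : ∀ n x, |T n x| ≤ |x| := fun n x =>
    abs_le.2 ⟨le_max_of_le_right (le_min
        ((neg_nonpos.2 (abs_nonneg x)).trans (Nat.cast_nonneg n)) (neg_abs_le x)),
      max_le ((neg_nonpos.2 (Nat.cast_nonneg n)).trans (abs_nonneg x))
        ((min_le_right _ _).trans (le_abs_self x))⟩
  have hTto : ∀ x : ℝ, Tendsto (fun n => T n x) atTop (𝓝 x) := by
    intro x
    refine tendsto_atTop_of_eventually_const (i₀ := ⌈|x|⌉₊) fun n hn => ?_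
    have h1 : |x| ≤ (n:ℝ) := (Nat.le_ceil _).trans (by exact_mod_cast hn)
    have h2 : x ≤ (n:ℝ) := (le_abs_self x).trans h1
    have h3 : -(n:ℝ) ≤ x := (neg_le_neg h1).trans (neg_abs_le x)
    simp only [hT]
    rw [min_eq_right h2, max_eq_right h3]
  have hfnmem : ∀ n, MemLp (fun ω => T n (Y ω)) 2 P := fun n =>
    MemLp.of_bound ((hTmeas n).comp hY).aestronglyMeasurable (n:ℝ)
      (Eventually.of_forall fun ω => by simpa [Real.norm_eq_abs] using hTbd n (Y ω))
  have hfn'mem : ∀ n, MemLp (fun ω => T n (Y' ω)) 2 P := fun n =>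
    MemLp.of_bound ((hTmeas n).comp hY').aestronglyMeasurable (n:ℝ)
      (Eventually.of_forall fun ω => by simpa [Real.norm_eq_abs] using hTbd n (Y' ω))
  -- per-n identity
  have An : ∀ n, ∫ ω, T n (Y ω) * T n (Y' ω) ∂P
      = ∫ ω, (P[fun ω' => T n (Y ω')|m]) ω ^ 2 ∂P := by
    intro n
    have h1 := hci (T n) (T n) (hTmeas n) ⟨n, hTbd n⟩ (hTmeas n) ⟨n, hTbd n⟩
    have h2 := hsame (T n) (hTmeas n) ⟨n, hTbd n⟩
    calc ∫ ω, T n (Y ω) * T n (Y' ω) ∂P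
        = ∫ ω, (P[fun ω' => T n (Y ω') * T n (Y' ω')|m]) ω ∂P :=
          (integral_condExp hm).symm
      _ = ∫ ω, (P[fun ω' => T n (Y ω')|m]) ω * (P[fun ω' => T n (Y' ω')|m]) ω ∂P :=
          integral_congr_ae h1
      _ = ∫ ω, (P[fun ω' => T n (Y ω')|m]) ω ^ 2 ∂P := by
          refine integral_congr_ae ?_
          filter_upwards [h2] with ω hω
          rw [← hω]; ring
  -- Limit 1
  have hprodint : Integrable (fun ω => |Y ω| * |Y' ω|) P := by
    have := (myint_mul hY2 hY'2).abs
    simpa [abs_mul] using this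
  have Limit1 : Tendsto (fun n => ∫ ω, T n (Y ω) * T n (Y' ω) ∂P) atTop
      (𝓝 (∫ ω, Y ω * Y' ω ∂P)) := by
    refine tendsto_integral_of_dominated_convergence (fun ω => |Y ω| * |Y' ω|)
      (fun n => (((hTmeas n).comp hY).mul ((hTmeas n).comp hY')).aestronglyMeasurable)
      hprodint (fun n => Eventually.of_forall fun ω => ?_)
      (Eventually.of_forall fun ω => (hTto (Y ω)).mul (hTto (Y' ω)))
    rw [Real.norm_eq_abs, abs_mul]
    exact mul_le_mul (hTabs n _) (hTabs n _) (abs_nonneg _) (abs_nonneg _)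
  -- Limit 2
  set a : Ω → ℝ := P[Y|m] with hadef
  have ha2 : MemLp a 2 P := mycondexp_memL2 hm hY2
  have han2 : ∀ n, MemLp (P[fun ω => T n (Y ω)|m]) 2 P := fun n =>
    mycondexp_memL2 hm (hfnmem n)
  have hEn : ∀ n, ∫ ω, ((P[fun ω' => T n (Y ω')|m]) ω - a ω) ^ 2 ∂P
      ≤ ∫ ω, (T n (Y ω) - Y ω) ^ 2 ∂P := by
    intro n
    have hsub : P[(fun ω => T n (Y ω) - Y ω)|m]
        =ᵐ[P] fun ω => (P[fun ω' => T n (Y ω')|m]) ω - a ω := by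
      have := condExp_sub (μ := P) (m := m)
        ((hfnmem n).integrable one_le_two) (hY2.integrable one_le_two)
      filter_upwards [this] with ω hω
      exact hω
    have h1 : ∫ ω, ((P[fun ω' => T n (Y ω')|m]) ω - a ω) ^ 2 ∂P
        = ∫ ω, (P[(fun ω' => T n (Y ω') - Y ω')|m]) ω ^ 2 ∂P := by
      refine integral_congr_ae ?_
      filter_upwards [hsub] with ω hω
      rw [hω]
    rw [h1]
    exact mycondexp_sq_le hm ((hfnmem n).sub hY2)
  have hDto : Tendsto (fun n => ∫ ω, (T n (Y ω) - Y ω) ^ 2 ∂P) atTop (𝓝 0) := by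
    have h := tendsto_integral_of_dominated_convergence (μ := P)
      (F := fun n ω => (T n (Y ω) - Y ω) ^ 2) (f := fun _ => (0:ℝ))
      (bound := fun ω => 4 * Y ω ^ 2)
      (fun n => ((((hTmeas n).comp hY).sub hY).pow_const 2).aestronglyMeasurable)
      (hY2.integrable_sq.const_mul 4)
      (fun n => Eventually.of_forall fun ω => ?_)
      (Eventually.of_forall fun ω => ?_)
    · simpa using h
    · have h1 := hTabs n (Y ω)
      have h2 : T n (Y ω) ^ 2 ≤ Y ω ^ 2 := by
        nlinarith [abs_nonneg (T n (Y ω)), sq_abs (T n (Y ω)), sq_abs (Y ω)]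
      have h3 : -(Y ω ^ 2) ≤ T n (Y ω) * Y ω := by
        nlinarith [neg_abs_le (T n (Y ω) * Y ω), abs_mul (T n (Y ω)) (Y ω),
          mul_le_mul_of_nonneg_right h1 (abs_nonneg (Y ω)), sq_abs (Y ω)]
      rw [Real.norm_eq_abs, abs_of_nonneg (sq_nonneg _)]
      show (T n (Y ω) - Y ω) ^ 2 ≤ 4 * Y ω ^ 2
      nlinarith [h2, h3]
    · have h4 := (hTto (Y ω)).sub (tendsto_const_nhds (x := Y ω))
      rw [sub_self] at h4
      have h5 := h4.pow 2
      simpa using h5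
  have hintY2 : 0 ≤ ∫ ω, Y ω ^ 2 ∂P := integral_nonneg fun ω => sq_nonneg _
  have hsqbd : ∀ n, ∫ ω, ((P[fun ω' => T n (Y ω')|m]) ω + a ω) ^ 2 ∂P
      ≤ 4 * ∫ ω, Y ω ^ 2 ∂P := by
    intro n
    have e1 : ∫ ω, ((P[fun ω' => T n (Y ω')|m]) ω + a ω) ^ 2 ∂P
        ≤ ∫ ω, (2 * (P[fun ω' => T n (Y ω')|m]) ω ^ 2 + 2 * a ω ^ 2) ∂P := by
      refine integral_mono ((han2 n).add ha2).integrable_sq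
        (((han2 n).integrable_sq.const_mul 2).add (ha2.integrable_sq.const_mul 2)) ?_
      intro ω
      show ((P[fun ω' => T n (Y ω')|m]) ω + a ω) ^ 2
        ≤ 2 * (P[fun ω' => T n (Y ω')|m]) ω ^ 2 + 2 * a ω ^ 2
      nlinarith [sq_nonneg ((P[fun ω' => T n (Y ω')|m]) ω - a ω)]
    have e2 : ∫ ω, (2 * (P[fun ω' => T n (Y ω')|m]) ω ^ 2 + 2 * a ω ^ 2) ∂P
        = 2 * ∫ ω, (P[fun ω' => T n (Y ω')|m]) ω ^ 2 ∂P + 2 * ∫ ω, a ω ^ 2 ∂P := by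
      rw [integral_add ((han2 n).integrable_sq.const_mul 2) (ha2.integrable_sq.const_mul 2),
        integral_const_mul, integral_const_mul]
    have e3 : ∫ ω, (P[fun ω' => T n (Y ω')|m]) ω ^ 2 ∂P ≤ ∫ ω, Y ω ^ 2 ∂P := by
      refine (mycondexp_sq_le hm (hfnmem n)).trans ?_
      refine integral_mono (hfnmem n).integrable_sq hY2.integrable_sq fun ω => ?_
      have h1 := hTabs n (Y ω)
      nlinarith [abs_nonneg (T n (Y ω)), sq_abs (T n (Y ω)), sq_abs (Y ω)]
    have e4 : ∫ ω, a ω ^ 2 ∂P ≤ ∫ ω, Y ω ^ 2 ∂P := mycondexp_sq_le hm hY2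
    linarith
  have hdiff : ∀ n, |∫ ω, (P[fun ω' => T n (Y ω')|m]) ω ^ 2 ∂P - ∫ ω, a ω ^ 2 ∂P|
      ≤ Real.sqrt (∫ ω, (T n (Y ω) - Y ω) ^ 2 ∂P) * Real.sqrt (4 * ∫ ω, Y ω ^ 2 ∂P) := by
    intro n
    have e1 : ∫ ω, (P[fun ω' => T n (Y ω')|m]) ω ^ 2 ∂P - ∫ ω, a ω ^ 2 ∂P
        = ∫ ω, ((P[fun ω' => T n (Y ω')|m]) ω - a ω)
            * ((P[fun ω' => T n (Y ω')|m]) ω + a ω) ∂P := by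
      rw [← integral_sub (han2 n).integrable_sq ha2.integrable_sq]
      refine integral_congr_ae (Eventually.of_forall fun ω => ?_)
      ring
    rw [e1]
    refine (mycs ((han2 n).sub ha2) ((han2 n).add ha2)).trans ?_
    refine mul_le_mul (Real.sqrt_le_sqrt (hEn n)) (Real.sqrt_le_sqrt (hsqbd n))
      (Real.sqrt_nonneg _) (Real.sqrt_nonneg _)
  have hzero : Tendsto (fun n => Real.sqrt (∫ ω, (T n (Y ω) - Y ω) ^ 2 ∂P)
      * Real.sqrt (4 * ∫ ω, Y ω ^ 2 ∂P)) atTop (𝓝 0) := by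
    have h1 : Tendsto (fun n => Real.sqrt (∫ ω, (T n (Y ω) - Y ω) ^ 2 ∂P)) atTop (𝓝 0) := by
      have := (Real.continuous_sqrt.tendsto 0).comp hDto
      simpa using (show Tendsto (fun n => Real.sqrt (∫ ω, (T n (Y ω) - Y ω) ^ 2 ∂P)) atTop (𝓝 (Real.sqrt 0)) from this)
    have := h1.mul_const (Real.sqrt (4 * ∫ ω, Y ω ^ 2 ∂P))
    simpa using this
  have Limit2 : Tendsto (fun n => ∫ ω, (P[fun ω' => T n (Y ω')|m]) ω ^ 2 ∂P) atTop
      (𝓝 (∫ ω, a ω ^ 2 ∂P)) := by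
    have h0 : Tendsto (fun n => ∫ ω, (P[fun ω' => T n (Y ω')|m]) ω ^ 2 ∂P
        - ∫ ω, a ω ^ 2 ∂P) atTop (𝓝 0) := by
      refine squeeze_zero_norm (fun n => ?_) hzero
      rw [Real.norm_eq_abs]
      exact hdiff n
    have h1 := h0.add_const (∫ ω, a ω ^ 2 ∂P)
    simpa using h1
  have key : ∫ ω, a ω ^ 2 ∂P = ∫ ω, Y ω * Y' ω ∂P := by
    have h1 : Tendsto (fun n => ∫ ω, T n (Y ω) * T n (Y' ω) ∂P) atTop
        (𝓝 (∫ ω, a ω ^ 2 ∂P)) := by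
      have : (fun n => ∫ ω, T n (Y ω) * T n (Y' ω) ∂P)
          = fun n => ∫ ω, (P[fun ω' => T n (Y ω')|m]) ω ^ 2 ∂P := funext An
      rw [this]
      exact Limit2
    exact tendsto_nhds_unique h1 Limit1
  refine ⟨key, hvar', ?_⟩
  have hEa : ∫ ω, a ω ∂P = ∫ ω, Y ω ∂P := integral_condExp hm
  have hvarA : variance a P = (∫ ω, Y ω * Y' ω ∂P) - (∫ ω, Y ω ∂P) ^ 2 := by
    rw [variance_eq_sub ha2]
    simp only [Pi.pow_apply]
    rw [key, hEa]
  rw [hvarA, hvar', hEY', Real.mul_self_sqrt (variance_nonneg Y P)]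
  ring_nf

theorem R2_eq_pearson_of_conditionally_iid_copy
    {Ω : Type*} [MeasurableSpace Ω] (P : Measure Ω) [IsProbabilityMeasure P]
    {d : ℕ} (X : Ω → (Fin d → ℝ)) (Y Y' : Ω → ℝ)
    (hX : Measurable X) (hY : Measurable Y) (hY' : Measurable Y')
    (hY2 : MemLp Y 2 P) (hvar : 0 < variance Y P)
    (hsame : ∀ g : ℝ → ℝ, Measurable g → (∃ C, ∀ x, |g x| ≤ C) →
      P[fun ω => g (Y ω) | MeasurableSpace.comap X inferInstance]
        =ᵐ[P] P[fun ω => g (Y' ω) | MeasurableSpace.comap X inferInstance])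
    (hci : ∀ g h : ℝ → ℝ, Measurable g → (∃ C, ∀ x, |g x| ≤ C) →
        Measurable h → (∃ C, ∀ x, |h x| ≤ C) →
      P[fun ω => g (Y ω) * h (Y' ω) | MeasurableSpace.comap X inferInstance]
        =ᵐ[P] fun ω =>
          (P[fun ω' => g (Y ω') | MeasurableSpace.comap X inferInstance]) ω *
          (P[fun ω' => h (Y' ω') | MeasurableSpace.comap X inferInstance]) ω) :
    (∫ ω, (P[Y | MeasurableSpace.comap X inferInstance]) ω ^ 2 ∂P) =
      ∫ ω, Y ω * Y' ω ∂P ∧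
    variance Y' P = variance Y P ∧
    variance (P[Y | MeasurableSpace.comap X inferInstance]) P / variance Y P =
      ((∫ ω, Y ω * Y' ω ∂P) - (∫ ω, Y ω ∂P) * (∫ ω, Y' ω ∂P)) /
        (Real.sqrt (variance Y P) * Real.sqrt (variance Y' P)) :=
  R2_aux (measurable_iff_comap_le.mp hX) P Y Y' hY hY' hY2 hsame hci
end
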